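/- arXiv:1511.02692 — 6 statements merged into one kernel-verified Lean document; each statement's English description precedes it below -/
import Mathlib

section
/- The generating function for antichains of the product of chains [n] × [m] by cardinality is 𝒩_{[n]×[m]}(t) = Σ_{i≥0} C(n,i) C(m,i) t^i; equivalently, the number of antichains of size i in [n] × [m] equals C(n,i)·C(m,i). -/
open Finset

private lemma ac_injOn_fst {n m : ℕ} {A : Finset (Fin n × Fin m)}
    (hA : IsAntichain (· ≤ ·) (A : Set (Fin n × Fin m))) :
    Set.InjOn Prod.fst (A : Set (Fin n × Fin m)) := by
  intro a ha b hb hab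
  by_contra hne
  rcases le_total a.2 b.2 with h | h
  · exact hA ha hb hne ⟨le_of_eq hab, h⟩
  · exact hA hb ha (Ne.symm hne) ⟨le_of_eq hab.symm, h⟩

private lemma ac_injOn_snd {n m : ℕ} {A : Finset (Fin n × Fin m)}
    (hA : IsAntichain (· ≤ ·) (A : Set (Fin n × Fin m))) :
    Set.InjOn Prod.snd (A : Set (Fin n × Fin m)) := by
  intro a ha b hb hab
  by_contra hne
  rcases le_total a.1 b.1 with h | h
  · exact hA ha hb hne ⟨h, le_of_eq hab⟩
  · exact hA hb ha (Ne.symm hne) ⟨h, le_of_eq hab.symm⟩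

private def mkAC {n m i : ℕ} (S : Finset (Fin n)) (T : Finset (Fin m))
    (hS : S.card = i) (hT : T.card = i) : Finset (Fin n × Fin m) :=
  Finset.univ.image fun k : Fin i => (S.orderEmbOfFin hS k, T.orderEmbOfFin hT k.rev)

private lemma mkAC_antichain {n m i : ℕ} (S : Finset (Fin n)) (T : Finset (Fin m))
    (hS : S.card = i) (hT : T.card = i) :
    IsAntichain (· ≤ ·) ((mkAC S T hS hT : Finset (Fin n × Fin m)) : Set (Fin n × Fin m)) := by
  intro a ha b hb hne hle
  simp only [mkAC, coe_image, coe_univ, Set.image_univ, Set.mem_range] at ha hb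
  obtain ⟨k, rfl⟩ := ha
  obtain ⟨l, rfl⟩ := hb
  have hkl : k ≠ l := fun h => hne (by rw [h])
  rcases hkl.lt_or_gt with h | h
  · have h2 : T.orderEmbOfFin hT l.rev < T.orderEmbOfFin hT k.rev :=
      (T.orderEmbOfFin hT).strictMono (by simpa using h)
    exact absurd hle.2 (not_le.2 h2)
  · have h1 : S.orderEmbOfFin hS l < S.orderEmbOfFin hS k :=
      (S.orderEmbOfFin hS).strictMono h
    exact absurd hle.1 (not_le.2 h1)

private lemma mkAC_card {n m i : ℕ} (S : Finset (Fin n)) (T : Finset (Fin m))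
    (hS : S.card = i) (hT : T.card = i) : (mkAC S T hS hT).card = i := by
  rw [mkAC, card_image_of_injective _ (fun k l h => (S.orderEmbOfFin hS).injective
    (congrArg Prod.fst h)), card_univ, Fintype.card_fin]

private lemma mkAC_image_fst {n m i : ℕ} (S : Finset (Fin n)) (T : Finset (Fin m))
    (hS : S.card = i) (hT : T.card = i) : (mkAC S T hS hT).image Prod.fst = S := by
  rw [mkAC, image_image]
  apply eq_of_subset_of_card_le
  · intro x hx
    simp only [mem_image] at hx
    obtain ⟨k, _, rfl⟩ := hx
    exact S.orderEmbOfFin_mem hS k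
  · simp only [Function.comp_def]
    rw [hS, card_image_of_injective _ (S.orderEmbOfFin hS).injective, card_univ,
      Fintype.card_fin]

private lemma mkAC_image_snd {n m i : ℕ} (S : Finset (Fin n)) (T : Finset (Fin m))
    (hS : S.card = i) (hT : T.card = i) : (mkAC S T hS hT).image Prod.snd = T := by
  rw [mkAC, image_image]
  apply eq_of_subset_of_card_le
  · intro x hx
    simp only [mem_image] at hx
    obtain ⟨k, _, rfl⟩ := hx
    exact T.orderEmbOfFin_mem hT k.rev
  · simp only [Function.comp_def]
    rw [hT]
    have : Function.Injective (fun k : Fin i => T.orderEmbOfFin hT k.rev) := by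
      intro k l h
      have := (T.orderEmbOfFin hT).injective h
      simpa [Fin.rev_inj] using this
    rw [card_image_of_injective _ this, card_univ, Fintype.card_fin]

/-- The number of antichains of size `i` in the product of chains `[n] × [m]` equals
`C(n,i) * C(m,i)`; equivalently `𝒩_{[n]×[m]}(t) = Σ_i C(n,i) C(m,i) t^i`. -/
theorem antichains_prod_chains_count (n m i : ℕ) :
    Nat.card {A : Finset (Fin n × Fin m) //
        IsAntichain (· ≤ ·) (A : Set (Fin n × Fin m)) ∧ A.card = i} =
      n.choose i * m.choose i := by
  classical
  have key : {A : Finset (Fin n × Fin m) //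
        IsAntichain (· ≤ ·) (A : Set (Fin n × Fin m)) ∧ A.card = i}
      ≃ {S : Finset (Fin n) // S.card = i} × {T : Finset (Fin m) // T.card = i} := by
    refine
      { toFun := fun A =>
          (⟨A.1.image Prod.fst, by
              rw [card_image_of_injOn (ac_injOn_fst A.2.1), A.2.2]⟩,
           ⟨A.1.image Prod.snd, by
              rw [card_image_of_injOn (ac_injOn_snd A.2.1), A.2.2]⟩)
        invFun := fun P => ⟨mkAC P.1.1 P.2.1 P.1.2 P.2.2,
          mkAC_antichain _ _ _ _, mkAC_card _ _ _ _⟩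
        left_inv := ?_
        right_inv := fun P => by
          ext : 2 <;> simp [mkAC_image_fst, mkAC_image_snd] }
    rintro ⟨A, hA, hcard⟩
    ext : 1
    dsimp only
    -- notation
    set S : Finset (Fin n) := A.image Prod.fst with hSdef
    set T : Finset (Fin m) := A.image Prod.snd with hTdef
    have hS : S.card = i := by rw [hSdef, card_image_of_injOn (ac_injOn_fst hA), hcard]
    have hT : T.card = i := by rw [hTdef, card_image_of_injOn (ac_injOn_snd hA), hcard]
    -- for each k, unique element of A whose fst is S.orderEmbOfFin hS k
    have hex : ∀ k : Fin i, ∃! a, a ∈ A ∧ a.1 = S.orderEmbOfFin hS k := by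
      intro k
      have hmem : S.orderEmbOfFin hS k ∈ A.image Prod.fst := S.orderEmbOfFin_mem hS k
      rw [mem_image] at hmem
      obtain ⟨a, haA, ha⟩ := hmem
      refine ⟨a, ⟨haA, ha⟩, ?_⟩
      rintro b ⟨hbA, hb⟩
      exact ac_injOn_fst hA hbA haA (hb.trans ha.symm)
    let g : Fin i → Fin n × Fin m := fun k => A.choose _ (hex k)
    have hgA : ∀ k, g k ∈ A := fun k => A.choose_mem _ (hex k)
    have hgfst : ∀ k, (g k).1 = S.orderEmbOfFin hS k :=
      fun k => (A.choose_property _ (hex k))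
    have hganti : StrictAnti fun k => (g k).2 := by
      intro k l hkl
      have h1 : (g k).1 < (g l).1 := by
        rw [hgfst, hgfst]; exact (S.orderEmbOfFin hS).strictMono hkl
      have hne : g k ≠ g l := fun h => absurd (congrArg Prod.fst h) (ne_of_lt h1)
      have h2 : ¬ g k ≤ g l := hA (hgA k) (hgA l) hne
      rw [Prod.le_def, not_and_or, not_le, not_le] at h2
      rcases h2 with h | h
      · exact absurd h1.le (not_le.2 h)
      · exact h
    -- every element of A is some g k
    have hsurj : ∀ a ∈ A, ∃ k, a = g k := by
      intro a haA
      have hmem : a.1 ∈ Set.range (S.orderEmbOfFin hS) := by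
        rw [S.range_orderEmbOfFin hS]
        exact_mod_cast mem_image_of_mem Prod.fst haA
      obtain ⟨k, hk⟩ := hmem
      exact ⟨k, (hex k).unique ⟨haA, hk.symm⟩ ⟨hgA k, hgfst k⟩⟩
    -- snd image identification
    have hrange : ∀ x, (fun k : Fin i => (g k.rev).2) x ∈ T := by
      intro k
      rw [hTdef]
      exact mem_image_of_mem _ (hgA k.rev)
    have hmono : StrictMono fun k : Fin i => (g k.rev).2 := by
      intro k l hkl
      exact hganti (by simpa using hkl)
    have hsnd : ∀ k : Fin i, (g k).2 = T.orderEmbOfFin hT k.rev := by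
      intro k
      have := Finset.orderEmbOfFin_unique hT hrange hmono
      have h2 := congrFun this k.rev
      simpa [Fin.rev_rev] using h2
    -- conclude
    symm
    show A = mkAC S T hS hT
    apply Finset.eq_of_subset_of_card_le
    · intro a ha
      obtain ⟨k, rfl⟩ := hsurj a ha
      rw [mkAC, mem_image]
      exact ⟨k, mem_univ k, by rw [← hgfst k, ← hsnd k]⟩
    · rw [hcard, mkAC_card]
  rw [Nat.card_congr key, Nat.card_prod, Nat.card_eq_fintype_card, Nat.card_eq_fintype_card,
    Fintype.card_finset_len, Fintype.card_finset_len, Fintype.card_fin, Fintype.card_fin]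
end

section
/- The generating function of lower ideals of the product of two chains satisfies 𝓜_{[p]×[q]}(t) := Σ_I t^{|I|} = ∏_{(a,b) ∈ [p]×[q]} (1 - t^{a+b}) / (1 - t^{a+b-1}), i.e., [p] × [q] is pleasant with respect to the rank function r(a,b) = a+b-1. -/
open Polynomial
open scoped Classical

noncomputable def Np (p q : ℕ) : ℤ[X] :=
  ∑ I ∈ Finset.univ.filter
      (fun I : Finset (Fin p × Fin q) => IsLowerSet (I : Set (Fin p × Fin q))),
    (X : ℤ[X]) ^ I.card

lemma Np_zero_left (q : ℕ) : Np 0 q = 1 := by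
  unfold Np
  rw [Finset.sum_eq_single (∅ : Finset (Fin 0 × Fin q))]
  · simp
  · intro I hI hne
    exact absurd (Finset.eq_empty_of_isEmpty I) hne
  · intro h
    simp only [Finset.mem_filter, Finset.mem_univ, true_and, Finset.coe_empty] at h
    exact absurd isLowerSet_empty h

lemma Np_zero_right (p : ℕ) : Np p 0 = 1 := by
  unfold Np
  rw [Finset.sum_eq_single (∅ : Finset (Fin p × Fin 0))]
  · simp
  · intro I hI hne
    exact absurd (Finset.eq_empty_of_isEmpty I) hne
  · intro h
    simp only [Finset.mem_filter, Finset.mem_univ, true_and, Finset.coe_empty] at h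
    exact absurd isLowerSet_empty h

def eA (p q : ℕ) : Fin p × Fin (q+1) ↪ Fin (p+1) × Fin (q+1) :=
  ⟨fun x => (x.1.castSucc, x.2), by
    intro a b h
    simp only [Prod.ext_iff] at h ⊢
    exact ⟨Fin.castSucc_injective _ h.1, h.2⟩⟩

def eB (p q : ℕ) : Fin (p+1) × Fin q ↪ Fin (p+1) × Fin (q+1) :=
  ⟨fun x => (x.1, x.2.succ), by
    intro a b h
    simp only [Prod.ext_iff] at h ⊢
    exact ⟨h.1, Fin.succ_injective _ h.2⟩⟩

@[simp] lemma eA_apply (p q : ℕ) (x : Fin p × Fin (q+1)) :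
    eA p q x = (x.1.castSucc, x.2) := rfl

@[simp] lemma eB_apply (p q : ℕ) (x : Fin (p+1) × Fin q) :
    eB p q x = (x.1, x.2.succ) := rfl

def col0 (p q : ℕ) : Finset (Fin (p+1) × Fin (q+1)) :=
  Finset.univ.map ⟨fun a => (a, 0), by intro a b h; simpa [Prod.ext_iff] using h⟩

@[simp] lemma mem_col0 (p q : ℕ) (x : Fin (p+1) × Fin (q+1)) :
    x ∈ col0 p q ↔ x.2 = 0 := by
  rcases x with ⟨a, b⟩
  simp only [col0, Finset.mem_map, Finset.mem_univ, true_and]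
  constructor
  · rintro ⟨c, hc⟩
    exact (congrArg Prod.snd hc).symm
  · intro h
    subst h
    exact ⟨a, rfl⟩


lemma Np_rec (p q : ℕ) :
    Np (p+1) (q+1) = Np p (q+1) + X^(p+1) * Np (p+1) q := by
  classical
  unfold Np
  rw [← Finset.sum_filter_add_sum_filter_not _ (fun I => (Fin.last p, (0 : Fin (q+1))) ∉ I)]
  congr 1
  · -- case: row p empty  ↦  lower sets of Fin p × Fin (q+1)
    symm
    apply Finset.sum_nbij' (i := fun J => J.map (eA p q))
      (j := fun I => I.preimage (eA p q) ((eA p q).injective.injOn))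
    · -- hi : maps into target
      intro J hJ
      simp only [Finset.mem_filter, Finset.mem_univ, true_and] at hJ ⊢
      refine ⟨?_, ?_⟩
      · rintro ⟨v1, v2⟩ ⟨u1, u2⟩ huv hv
        obtain ⟨h1, h2⟩ := Prod.mk_le_mk.mp huv
        simp only [Finset.coe_map, Set.mem_image, Finset.mem_coe, eA_apply] at hv ⊢
        obtain ⟨j, hj, hje⟩ := hv
        obtain ⟨hje1, hje2⟩ := Prod.mk.injEq .. ▸ hje
        have hv1 : (v1 : ℕ) = (j.1 : ℕ) := by rw [← hje1]; simp
        have h1' : (u1 : ℕ) ≤ (j.1 : ℕ) := by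
          have := Fin.le_def.mp h1; omega
        have hlt : (u1 : ℕ) < p := lt_of_le_of_lt h1' j.1.isLt
        refine ⟨(⟨(u1 : ℕ), hlt⟩, u2), hJ (Prod.le_def.mpr ⟨?_, ?_⟩) hj, ?_⟩
        · exact Fin.le_def.mpr (by simpa using h1')
        · show u2 ≤ j.2
          rw [hje2]; exact h2
        · simp [Prod.ext_iff, Fin.ext_iff]
      · rintro hmem
        simp only [Finset.mem_map, eA_apply] at hmem
        obtain ⟨j, -, hj⟩ := hmem
        have h1 : (j.1.castSucc : Fin (p+1)) = Fin.last p := congrArg Prod.fst hj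
        have := congrArg Fin.val h1
        simp at this
        omega
    · -- hj : preimage maps back
      intro I hI
      simp only [Finset.mem_filter, Finset.mem_univ, true_and] at hI ⊢
      rintro ⟨v1, v2⟩ ⟨u1, u2⟩ huv hv
      obtain ⟨h1, h2⟩ := Prod.mk_le_mk.mp huv
      simp only [Finset.coe_preimage, Set.mem_preimage, eA_apply] at hv ⊢
      exact hI.1 (Prod.mk_le_mk.mpr ⟨Fin.castSucc_le_castSucc_iff.mpr h1, h2⟩) hv
    · -- left inverse
      intro J hJ
      exact Finset.preimage_map (eA p q) J
    · -- right inverse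
      intro I hI
      simp only [Finset.mem_filter, Finset.mem_univ, true_and] at hI
      obtain ⟨hlow, hnot⟩ := hI
      rw [Finset.map_eq_image, Finset.image_preimage, Finset.filter_eq_self]
      rintro ⟨a, b⟩ hx
      have ha : (a : ℕ) < p := by
        by_contra hge
        have hap : (a : ℕ) = p := by have := a.isLt; omega
        apply hnot
        refine hlow (a := (a, b)) (b := (Fin.last p, 0))
          (Prod.mk_le_mk.mpr ⟨?_, Fin.zero_le _⟩) (Finset.mem_coe.mpr hx)
        simp [Fin.le_def, hap]
      exact ⟨(⟨(a : ℕ), ha⟩, b), by simp [Prod.ext_iff, Fin.ext_iff]⟩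
    · -- values
      intro J hJ
      rw [Finset.card_map]
  · -- case: column 0 full  ↦  lower sets of Fin (p+1) × Fin q
    rw [Finset.mul_sum]
    symm
    apply Finset.sum_nbij' (i := fun J => col0 p q ∪ J.map (eB p q))
      (j := fun I => I.preimage (eB p q) ((eB p q).injective.injOn))
    · -- hi
      intro J hJ
      simp only [Finset.mem_filter, Finset.mem_univ, true_and, not_not] at hJ ⊢
      refine ⟨?_, ?_⟩
      · rintro ⟨v1, v2⟩ ⟨u1, u2⟩ huv hv
        obtain ⟨h1, h2⟩ := Prod.mk_le_mk.mp huv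
        simp only [Finset.coe_union, Set.mem_union, Finset.mem_coe, mem_col0,
          Finset.coe_map, Set.mem_image, eB_apply] at hv ⊢
        rcases hv with hv | ⟨j, hj, hje⟩
        · left
          have hv2 : (v2 : Fin (q+1)) = 0 := hv
          exact le_antisymm (hv2 ▸ h2) (Fin.zero_le _)
        · obtain ⟨hje1, hje2⟩ := Prod.mk.injEq .. ▸ hje
          rcases Fin.eq_zero_or_eq_succ u2 with h0 | ⟨b, hb⟩
          · left; exact h0
          · right
            have hv2 : (v2 : ℕ) = (j.2 : ℕ) + 1 := by rw [← hje2]; simp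
            have hu2 : (u2 : ℕ) = (b : ℕ) + 1 := by rw [hb]; simp
            have h2' : (u2 : ℕ) ≤ (v2 : ℕ) := Fin.le_def.mp h2
            have hb' : (b : ℕ) ≤ (j.2 : ℕ) := by omega
            refine ⟨(u1, b), hJ (Prod.le_def.mpr ⟨?_, ?_⟩) hj, ?_⟩
            · show u1 ≤ j.1
              rw [hje1]; exact h1
            · show b ≤ j.2
              exact Fin.le_def.mpr hb'
            · show (u1, b.succ) = (u1, u2)
              rw [← hb]
      · simp [mem_col0]
    · -- hj
      intro I hI
      simp only [Finset.mem_filter, Finset.mem_univ, true_and, not_not] at hI ⊢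
      rintro ⟨v1, v2⟩ ⟨u1, u2⟩ huv hv
      obtain ⟨h1, h2⟩ := Prod.mk_le_mk.mp huv
      simp only [Finset.coe_preimage, Set.mem_preimage, eB_apply] at hv ⊢
      exact hI.1 (Prod.mk_le_mk.mpr ⟨h1, Fin.succ_le_succ_iff.mpr h2⟩) hv
    · -- left inverse
      intro J hJ
      ext u
      simp only [Finset.mem_preimage, Finset.mem_union, mem_col0, eB_apply,
        Finset.mem_map]
      constructor
      · rintro (h | ⟨j, hj, hjx⟩)
        · exact absurd h (Fin.succ_ne_zero _)
        · rwa [(eB p q).injective hjx] at hj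
      · intro hx
        exact Or.inr ⟨u, hx, rfl⟩
    · -- right inverse
      intro I hI
      simp only [Finset.mem_filter, Finset.mem_univ, true_and, not_not] at hI
      obtain ⟨hlow, hmem⟩ := hI
      ext u
      simp only [Finset.mem_union, mem_col0, Finset.mem_map, Finset.mem_preimage, eB_apply]
      constructor
      · rintro (h0 | ⟨j, hj, rfl⟩)
        · exact Finset.mem_coe.mp (hlow (Prod.le_def.mpr ⟨Fin.le_last _, h0.le⟩)
            (Finset.mem_coe.mpr hmem))
        · exact hj
      · intro hx
        rcases Fin.eq_zero_or_eq_succ u.2 with h0 | ⟨b, hb⟩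
        · exact Or.inl h0
        · refine Or.inr ⟨(u.1, b), ?_, ?_⟩
          · show (u.1, b.succ) ∈ I
            have : (u.1, u.2) = u := rfl
            rw [← hb, this]
            exact hx
          · show (u.1, b.succ) = u
            rw [← hb]
    · -- values
      intro J hJ
      have hdisj : Disjoint (col0 p q) (J.map (eB p q)) := by
        rw [Finset.disjoint_left]
        intro u hu hu'
        rw [mem_col0] at hu
        simp only [Finset.mem_map, eB_apply] at hu'
        obtain ⟨j, -, hj⟩ := hu'
        have : j.2.succ = u.2 := congrArg Prod.snd hj
        rw [hu] at this
        exact Fin.succ_ne_zero _ this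
      rw [Finset.card_union_of_disjoint hdisj, Finset.card_map]
      have hc : (col0 p q).card = p + 1 := by simp [col0]
      rw [hc, ← pow_add]

lemma Np_key : ∀ p q : ℕ,
    Np p q * ∏ k ∈ Finset.range q, (1 - (X : ℤ[X]) ^ (k+1)) =
      ∏ k ∈ Finset.range q, (1 - (X : ℤ[X]) ^ (p+k+1)) := by
  intro p
  induction p with
  | zero =>
    intro q
    rw [Np_zero_left, one_mul]
    exact Finset.prod_congr rfl (fun k _ => by rw [Nat.zero_add])
  | succ p ihp =>
    intro q
    induction q with
    | zero => simp [Np_zero_right]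
    | succ q ihq =>
      have ihp' := ihp (q+1)
      rw [Finset.prod_range_succ, Finset.prod_range_succ' _ q] at ihp'
      have eL : (∏ k ∈ Finset.range q, (1 - (X : ℤ[X]) ^ (p+(k+1)+1))) =
          ∏ k ∈ Finset.range q, (1 - (X : ℤ[X]) ^ (p+k+2)) :=
        Finset.prod_congr rfl (fun k _ => by rw [show p+(k+1)+1 = p+k+2 by omega])
      rw [eL] at ihp'
      have eR : (∏ k ∈ Finset.range q, (1 - (X : ℤ[X]) ^ (p+1+k+1))) =
          ∏ k ∈ Finset.range q, (1 - (X : ℤ[X]) ^ (p+k+2)) :=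
        Finset.prod_congr rfl (fun k _ => by rw [show p+1+k+1 = p+k+2 by omega])
      rw [eR] at ihq
      rw [Np_rec, Finset.prod_range_succ, Finset.prod_range_succ, eR]
      have hpow : (X : ℤ[X]) ^ (p+1) * X ^ (q+1) = X ^ (p+1+(q+1)) := (pow_add X _ _).symm
      have hq2 : p+1+q+1 = p+1+(q+1) := by omega
      rw [hq2, ← hpow]
      linear_combination (1 - (X : ℤ[X])^(q+1)) * X^(p+1) * ihq + ihp'

lemma one_sub_X_pow_ne_zero (k : ℕ) : (1 - (X : ℤ[X]) ^ (k+1)) ≠ 0 := by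
  intro h
  have h1 : (X : ℤ[X]) ^ (k+1) = 1 := by linear_combination -h
  have := congrArg Polynomial.natDegree h1
  simp [Polynomial.natDegree_X_pow] at this

lemma prod_shuffle (p q : ℕ) :
    (∏ x : Fin p × Fin q, (1 - (X : ℤ[X]) ^ (x.1.val + x.2.val + 2))) *
      ∏ k ∈ Finset.range q, (1 - (X : ℤ[X]) ^ (k+1)) =
    (∏ x : Fin p × Fin q, (1 - (X : ℤ[X]) ^ (x.1.val + x.2.val + 1))) *
      ∏ k ∈ Finset.range q, (1 - (X : ℤ[X]) ^ (p+k+1)) := by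
  have swap : ∀ c : ℕ, (∏ x : Fin p × Fin q, (1 - (X : ℤ[X]) ^ (x.1.val + x.2.val + c))) =
      ∏ b ∈ Finset.range q, ∏ a ∈ Finset.range p, (1 - (X : ℤ[X]) ^ (a + b + c)) := by
    intro c
    rw [Fintype.prod_prod_type, Finset.prod_comm]
    rw [Fin.prod_univ_eq_prod_range (fun b => ∏ a : Fin p, (1 - (X:ℤ[X]) ^ (a.val + b + c))) q]
    exact Finset.prod_congr rfl (fun b _ =>
      Fin.prod_univ_eq_prod_range (fun a => (1 - (X:ℤ[X]) ^ (a + b + c))) p)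
  rw [swap 2, swap 1, ← Finset.prod_mul_distrib, ← Finset.prod_mul_distrib]
  apply Finset.prod_congr rfl
  intro b _
  have key : ∀ n : ℕ, (∏ a ∈ Finset.range n, (1 - (X : ℤ[X]) ^ (a + b + 2))) * (1 - X ^ (b+1)) =
      (∏ a ∈ Finset.range n, (1 - (X : ℤ[X]) ^ (a + b + 1))) * (1 - X ^ (n+b+1)) := by
    intro n
    have h1 : (∏ a ∈ Finset.range (n+1), (1 - (X : ℤ[X]) ^ (a + b + 1))) =
        (∏ a ∈ Finset.range n, (1 - (X : ℤ[X]) ^ (a + b + 2))) * (1 - X ^ (b+1)) := by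
      rw [Finset.prod_range_succ']
      congr 1
      · exact Finset.prod_congr rfl (fun a _ => by rw [show a+1+b+1 = a+b+2 by omega])
      · rw [Nat.zero_add]
    have h2 : (∏ a ∈ Finset.range (n+1), (1 - (X : ℤ[X]) ^ (a + b + 1))) =
        (∏ a ∈ Finset.range n, (1 - (X : ℤ[X]) ^ (a + b + 1))) * (1 - X ^ (n+b+1)) := by
      rw [Finset.prod_range_succ]
    rw [← h1, h2]
  rw [key p, show p+b+1 = p+(b+1) by omega]

open Polynomial in
open scoped Classical in
/-- The product of chains `[p] × [q]` is pleasant: its lower-ideal generating function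
satisfies `𝓜(t) = ∏_{(a,b)} (1 - t^{ht(a,b)+1}) / (1 - t^{ht(a,b)})`, where
`ht(a,b) = a + b - 1` (1-based), stated here with denominators cleared in `ℤ[t]`. -/
theorem M_poly_prod_chains (p q : ℕ) :
    (∑ I ∈ Finset.univ.filter
        (fun I : Finset (Fin p × Fin q) => IsLowerSet (I : Set (Fin p × Fin q))),
        (X : ℤ[X]) ^ I.card) *
      (∏ x : Fin p × Fin q, (1 - (X : ℤ[X]) ^ (x.1.val + x.2.val + 1))) =
    ∏ x : Fin p × Fin q, (1 - (X : ℤ[X]) ^ (x.1.val + x.2.val + 2)) := by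
  classical
  have hsum : (∑ I ∈ Finset.univ.filter
      (fun I : Finset (Fin p × Fin q) => IsLowerSet (I : Set (Fin p × Fin q))),
      (X : ℤ[X]) ^ I.card) = Np p q := by
    unfold Np
    congr 1
  rw [hsum]
  have hC : (∏ k ∈ Finset.range q, (1 - (X : ℤ[X]) ^ (k+1))) ≠ 0 :=
    Finset.prod_ne_zero_iff.mpr (fun k _ => one_sub_X_pow_ne_zero k)
  apply mul_right_cancel₀ hC
  calc (Np p q * ∏ x : Fin p × Fin q, (1 - (X:ℤ[X]) ^ (x.1.val + x.2.val + 1))) *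
        ∏ k ∈ Finset.range q, (1 - (X:ℤ[X]) ^ (k+1))
      = (∏ x : Fin p × Fin q, (1 - (X:ℤ[X]) ^ (x.1.val + x.2.val + 1))) *
        (Np p q * ∏ k ∈ Finset.range q, (1 - (X:ℤ[X]) ^ (k+1))) := by ring
    _ = (∏ x : Fin p × Fin q, (1 - (X:ℤ[X]) ^ (x.1.val + x.2.val + 1))) *
        ∏ k ∈ Finset.range q, (1 - (X:ℤ[X]) ^ (p+k+1)) := by rw [Np_key]
    _ = (∏ x : Fin p × Fin q, (1 - (X:ℤ[X]) ^ (x.1.val + x.2.val + 2))) *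
        ∏ k ∈ Finset.range q, (1 - (X:ℤ[X]) ^ (k+1)) := (prod_shuffle p q).symm
end

section
/- The number of antichains of size i in the poset [2n+1] × K_n satisfies A(i) = A(2n+2-i) for all 1 ≤ i ≤ 2n+1; that is, the antichain generating polynomial 𝒩_{[2n+1]×K_n}(t) is palindromic of degree 2n+2. -/
/-- The poset `K_n = [n] ⊕ ([1] ⊔ [1]) ⊕ [n]`. -/
abbrev K (n : ℕ) : Type := Fin n ⊕ₗ ((Fin 1 ⊕ Fin 1) ⊕ₗ Fin n)

instance (n : ℕ) : Fintype (K n) :=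
  inferInstanceAs (Fintype (Fin n ⊕ ((Fin 1 ⊕ Fin 1) ⊕ Fin n)))


open Finset

section SA
variable {α β : Type*}

/-- strictly antitone partial map -/
def SA [Preorder α] [Preorder β] (f : α → Option β) : Prop :=
  ∀ ⦃a b : α⦄, a < b → ∀ u ∈ f a, ∀ v ∈ f b, v < u

/-- support of a partial map -/
def psupp [Fintype α] (f : α → Option β) : Finset α :=
  univ.filter fun a => (f a).isSome

@[simp] lemma mem_psupp [Fintype α] (f : α → Option β) (a : α) :
    a ∈ psupp f ↔ (f a).isSome := by simp [psupp]

/-- values of a partial map -/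
noncomputable def pvals [Fintype α] (f : α → Option β) : Finset β :=
  haveI := Classical.decEq (Option β)
  Finset.eraseNone (univ.image f)

@[simp] lemma mem_pvals [Fintype α] (f : α → Option β) (b : β) :
    b ∈ pvals f ↔ ∃ a, f a = some b := by
  simp [pvals, Finset.mem_eraseNone, eq_comm]

lemma SA.injOn [LinearOrder α] [Preorder β] {f : α → Option β} (hf : SA f)
    {a a' : α} {b : β} (h : f a = some b) (h' : f a' = some b) : a = a' := by
  rcases lt_trichotomy a a' with hl | he | hl
  · exact absurd (hf hl b (by simp [h]) b (by simp [h'])) (lt_irrefl _)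
  · exact he
  · exact absurd (hf hl b (by simp [h']) b (by simp [h])) (lt_irrefl _)

lemma card_pvals [LinearOrder α] [Fintype α] [Preorder β] {f : α → Option β}
    (hf : SA f) : (pvals f).card = (psupp f).card := by
  classical
  refine (Finset.card_bij (fun a ha => (f a).get (by simpa using ha)) ?_ ?_ ?_).symm
  · intro a ha
    simp only [mem_pvals]
    exact ⟨a, (Option.some_get _).symm⟩
  · intro a ha a' ha' h
    have h1 : f a = some ((f a').get (by simpa using ha')) := by
      rw [← h]; exact (Option.some_get _).symm
    exact hf.injOn h1 (Option.some_get _).symm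
  · intro b hb
    obtain ⟨a, hfa⟩ := (mem_pvals f b).mp hb
    exact ⟨a, by simp [hfa], by simp [hfa]⟩

end SA
set_option linter.unusedSectionVars false
section Core
variable {α β : Type*} [LinearOrder α] [Fintype α] [LinearOrder β] [Fintype β]

/-- reconstruct a strictly antitone partial map from its support and values -/
noncomputable def recon (D : Finset α) {s : ℕ} (hD : D.card = s) (V : Finset β)
    (hV : V.card = s) : α → Option β := fun a =>
  if h : a ∈ D then
    some (V.orderEmbOfFin hV (Fin.rev ((D.orderIsoOfFin hD).symm ⟨a, h⟩))) else none

variable {D : Finset α} {s : ℕ} {hD : D.card = s} {V : Finset β} {hV : V.card = s}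

lemma psupp_recon : psupp (recon D hD V hV) = D := by
  ext a; by_cases h : a ∈ D <;> simp [recon, h]

lemma SA_recon : SA (recon D hD V hV) := by
  intro a b hab u hu v hv
  simp only [recon] at hu hv
  by_cases ha : a ∈ D
  · by_cases hb : b ∈ D
    · simp only [ha, hb, dif_pos, Option.mem_def, Option.some_inj] at hu hv
      subst hu; subst hv
      apply (V.orderEmbOfFin hV).strictMono
      rw [Fin.rev_lt_rev]
      exact (D.orderIsoOfFin hD).symm.strictMono (Subtype.mk_lt_mk.mpr hab)
    · simp [hb] at hv
  · simp [ha] at hu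

lemma pvals_recon : pvals (recon D hD V hV) = V := by
  ext b
  simp only [mem_pvals, recon]
  constructor
  · rintro ⟨a, ha⟩
    by_cases h : a ∈ D
    · simp only [h, dif_pos, Option.some_inj] at ha
      rw [← ha]; exact V.orderEmbOfFin_mem hV _
    · simp [h] at ha
  · intro hb
    have hb' : b ∈ Set.range (V.orderEmbOfFin hV) := by
      rw [V.range_orderEmbOfFin hV]; exact_mod_cast hb
    obtain ⟨j, hj⟩ := hb'
    refine ⟨(D.orderIsoOfFin hD) (Fin.rev j), ?_⟩
    have hmem : ((D.orderIsoOfFin hD) (Fin.rev j) : α) ∈ D := (D.orderIsoOfFin hD _).2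
    rw [dif_pos hmem]
    congr 1
    rw [← hj]
    congr 1
    have heq : (⟨((D.orderIsoOfFin hD) (Fin.rev j) : α), hmem⟩ : {x // x ∈ D}) =
        (D.orderIsoOfFin hD) (Fin.rev j) := Subtype.ext rfl
    rw [heq, OrderIso.symm_apply_apply, Fin.rev_rev]

lemma recon_psupp_pvals {f : α → Option β} (hf : SA f) (hs : (psupp f).card = s) :
    recon (psupp f) hs (pvals f) (by rw [card_pvals hf, hs]) = f := by
  have hV : (pvals f).card = s := by rw [card_pvals hf, hs]
  set g : Fin s → β := fun k =>
    (f ((psupp f).orderEmbOfFin hs k)).get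
      ((mem_psupp f _).mp ((psupp f).orderEmbOfFin_mem hs k)) with hg
  have hmono : StrictMono (g ∘ Fin.rev) := by
    intro k l hkl
    have h1 : Fin.rev l < Fin.rev k := Fin.rev_lt_rev.mpr hkl
    have h2 : (psupp f).orderEmbOfFin hs (Fin.rev l) < (psupp f).orderEmbOfFin hs (Fin.rev k) :=
      ((psupp f).orderEmbOfFin hs).strictMono h1
    exact hf h2 _ (Option.some_get _).symm _ (Option.some_get _).symm
  have hrange : ∀ k, (g ∘ Fin.rev) k ∈ pvals f := by
    intro k
    simp only [Function.comp, mem_pvals]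
    exact ⟨_, (Option.some_get _).symm⟩
  have huniq : g ∘ Fin.rev = (pvals f).orderEmbOfFin hV :=
    Finset.orderEmbOfFin_unique hV hrange hmono
  funext a
  by_cases ha : a ∈ psupp f
  · rw [recon, dif_pos ha]
    have h3 : (pvals f).orderEmbOfFin hV (Fin.rev ((psupp f).orderIsoOfFin hs |>.symm ⟨a, ha⟩)) =
        g (((psupp f).orderIsoOfFin hs).symm ⟨a, ha⟩) := by
      rw [← huniq]; simp [Function.comp, Fin.rev_rev]
    rw [h3, hg]
    have h4 : (psupp f).orderEmbOfFin hs (((psupp f).orderIsoOfFin hs).symm ⟨a, ha⟩) = a := by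
      rw [← Finset.coe_orderIsoOfFin_apply, OrderIso.apply_symm_apply]
    simp only [h4]
    exact Option.some_get _
  · rw [recon, dif_neg ha]
    symm
    simpa using ha

/-- The core equivalence -/
noncomputable def saEquiv (s : ℕ) (P : Finset α → Prop) :
    {f : α → Option β // SA f ∧ (psupp f).card = s ∧ P (psupp f)} ≃
      ({D : Finset α // D.card = s ∧ P D} × {V : Finset β // V.card = s}) where
  toFun f := ⟨⟨psupp f.1, f.2.2.1, f.2.2.2⟩, ⟨pvals f.1, by rw [card_pvals f.2.1, f.2.2.1]⟩⟩
  invFun DV := ⟨recon DV.1.1 DV.1.2.1 DV.2.1 DV.2.2,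
    SA_recon, by rw [psupp_recon]; exact ⟨DV.1.2.1, DV.1.2.2⟩⟩
  left_inv := by
    rintro ⟨f, hf, hs, hP⟩
    exact Subtype.ext (recon_psupp_pvals hf hs)
  right_inv := by
    rintro ⟨⟨D, hD, hP⟩, ⟨V, hVc⟩⟩
    refine Prod.ext ?_ ?_
    · exact Subtype.ext psupp_recon
    · exact Subtype.ext pvals_recon

lemma card_sa (s : ℕ) (P : Finset α → Prop) :
    Nat.card {f : α → Option β // SA f ∧ (psupp f).card = s ∧ P (psupp f)} =
      Nat.card {D : Finset α // D.card = s ∧ P D} * (Fintype.card β).choose s := by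
  classical
  rw [Nat.card_congr (saEquiv s P), Nat.card_prod]
  congr 1
  rw [Nat.card_eq_fintype_card]
  exact Fintype.card_finset_len s

end Core
section Subsets

lemma card_split {γ : Type*} [Finite γ] (P Q : γ → Prop) :
    Nat.card {x // P x} = Nat.card {x // P x ∧ Q x} + Nat.card {x // P x ∧ ¬ Q x} := by
  classical
  rw [← Nat.card_sum]
  exact Nat.card_congr ((Equiv.sumCongr
    (Equiv.subtypeSubtypeEquivSubtypeInter P Q).symm
    (Equiv.subtypeSubtypeEquivSubtypeInter P (fun x => ¬ Q x)).symm).trans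
      (Equiv.sumCompl (fun y : {x // P x} => Q y.1))).symm

variable {α : Type*} [Fintype α] [DecidableEq α]

noncomputable def subsetsContainingEquiv (T : Finset α) (s : ℕ) (hs : T.card ≤ s) :
    {D : Finset α // D.card = s ∧ T ⊆ D} ≃
      {D' : Finset {x : α // x ∉ T} // D'.card = s - T.card} where
  toFun D := ⟨(D.1 \ T).subtype (· ∉ T), by
    rw [Finset.card_subtype, Finset.filter_true_of_mem (fun x hx => (Finset.mem_sdiff.mp hx).2),
      Finset.card_sdiff_of_subset D.2.2, D.2.1]⟩
  invFun D' := ⟨D'.1.map (Function.Embedding.subtype _) ∪ T, by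
    have hdisj : Disjoint (D'.1.map (Function.Embedding.subtype _)) T := by
      rw [Finset.disjoint_left]
      rintro a ha haT
      obtain ⟨⟨a, hna⟩, _, rfl⟩ := Finset.mem_map.mp ha
      exact hna haT
    constructor
    · rw [Finset.card_union_of_disjoint hdisj, Finset.card_map, D'.2]
      omega
    · exact Finset.subset_union_right⟩
  left_inv := by
    rintro ⟨D, hD, hT⟩
    apply Subtype.ext
    ext a
    simp only [Finset.mem_union, Finset.mem_map, Finset.mem_subtype, Finset.mem_sdiff,
      Function.Embedding.coe_subtype]
    constructor
    · rintro (⟨⟨b, hb⟩, ⟨hbD, _⟩, rfl⟩ | h)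
      · exact hbD
      · exact hT h
    · intro ha
      by_cases h : a ∈ T
      · exact Or.inr h
      · exact Or.inl ⟨⟨a, h⟩, ⟨ha, h⟩, rfl⟩
  right_inv := by
    rintro ⟨D', hD'⟩
    apply Subtype.ext
    ext ⟨a, ha⟩
    simp only [Finset.mem_subtype, Finset.mem_sdiff, Finset.mem_union, Finset.mem_map,
      Function.Embedding.coe_subtype]
    constructor
    · rintro ⟨⟨⟨b, hb⟩, hbD', rfl⟩ | h, _⟩
      · exact hbD'
      · exact absurd h ha
    · intro h
      exact ⟨Or.inl ⟨⟨a, ha⟩, h, rfl⟩, ha⟩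

lemma card_subsets_containing (T : Finset α) (s : ℕ) (hs : T.card ≤ s) :
    Nat.card {D : Finset α // D.card = s ∧ T ⊆ D} =
      (Fintype.card α - T.card).choose (s - T.card) := by
  classical
  rw [Nat.card_congr (subsetsContainingEquiv T s hs), Nat.card_eq_fintype_card,
    Fintype.card_finset_len]
  congr 1
  rw [Fintype.card_subtype_compl]
  simp

lemma card_subsets_containing_zero (T : Finset α) (s : ℕ) (hs : s < T.card) :
    Nat.card {D : Finset α // D.card = s ∧ T ⊆ D} = 0 := by
  have : IsEmpty {D : Finset α // D.card = s ∧ T ⊆ D} := by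
    constructor
    rintro ⟨D, hD, hT⟩
    have := Finset.card_le_card hT
    omega
  exact Nat.card_of_isEmpty

end Subsets
section Antichain
variable {γ α : Type*} [LinearOrder γ] [Fintype γ] [PartialOrder α] [Fintype α]

lemma option_ext' {x y : Option γ} (h : ∀ c, x = some c ↔ y = some c) : x = y := by
  cases x <;> cases y <;> simp_all

lemma ac_unique {A : Finset (γ × α)} (hA : IsAntichain (· ≤ ·) (A : Set (γ × α)))
    {c c' : γ} {k : α} (h1 : (c, k) ∈ A) (h2 : (c', k) ∈ A) : c = c' := by
  by_contra hne
  rcases le_total c c' with hle | hle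
  · exact hA h1 h2 (by simp [hne]) ⟨hle, le_refl _⟩
  · exact hA h2 h1 (by simp [Ne.symm hne]) ⟨hle, le_refl _⟩

open Classical in
noncomputable def acFun (A : Finset (γ × α)) : α → Option γ := fun k =>
  if h : ∃ c, (c, k) ∈ A then some h.choose else none

lemma acFun_eq_some {A : Finset (γ × α)} (hA : IsAntichain (· ≤ ·) (A : Set (γ × α)))
    {c : γ} {k : α} : acFun A k = some c ↔ (c, k) ∈ A := by
  unfold acFun
  classical
  by_cases h : ∃ c, (c, k) ∈ A
  · rw [dif_pos h, Option.some_inj]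
    constructor
    · rintro rfl; exact h.choose_spec
    · intro hm; exact ac_unique hA h.choose_spec hm
  · rw [dif_neg h]
    simp only [false_iff, reduceCtorEq]
    exact fun hm => h ⟨c, hm⟩

lemma sa_acFun {A : Finset (γ × α)} (hA : IsAntichain (· ≤ ·) (A : Set (γ × α))) :
    SA (acFun A) := by
  intro a b hab u hu v hv
  rw [Option.mem_def, acFun_eq_some hA] at hu hv
  by_contra hnlt
  exact hA hu hv (fun hEq => hab.ne (congrArg Prod.snd hEq)) ⟨not_lt.mp hnlt, hab.le⟩

open Classical in
noncomputable def acInv (f : α → Option γ) : Finset (γ × α) :=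
  Finset.univ.filter fun p => f p.2 = some p.1

lemma mem_acInv {f : α → Option γ} {p : γ × α} : p ∈ acInv f ↔ f p.2 = some p.1 := by
  classical
  simp [acInv]

lemma isAntichain_acInv {f : α → Option γ} (hf : SA f) :
    IsAntichain (· ≤ ·) ((acInv f : Finset (γ × α)) : Set (γ × α)) := by
  rintro ⟨c, k⟩ hm ⟨c', k'⟩ hm' hne hle
  rw [Finset.mem_coe, mem_acInv] at hm hm'
  obtain ⟨hc, hk⟩ := hle
  rcases eq_or_lt_of_le hk with rfl | hk
  · rw [hm] at hm'
    simp only [Option.some_inj] at hm'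
    exact hne (by simp [hm'])
  · exact absurd (hf hk c (by simp [hm]) c' (by simp [hm'])) (not_lt.mpr hc)

lemma acFun_acInv {f : α → Option γ} (hf : SA f) : acFun (acInv f) = f := by
  funext k
  apply option_ext'
  intro c
  rw [acFun_eq_some (isAntichain_acInv hf), mem_acInv]

lemma acInv_acFun {A : Finset (γ × α)} (hA : IsAntichain (· ≤ ·) (A : Set (γ × α))) :
    acInv (acFun A) = A := by
  ext ⟨c, k⟩
  rw [mem_acInv, acFun_eq_some hA]

lemma card_acInv {f : α → Option γ} (hf : SA f) : (acInv f).card = (psupp f).card := by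
  apply Finset.card_bij (fun p _ => p.2)
  · rintro ⟨c, k⟩ hm
    rw [mem_acInv] at hm
    simp [hm]
  · rintro ⟨c, k⟩ hm ⟨c', k'⟩ hm' h
    dsimp at h
    subst h
    rw [mem_acInv] at hm hm'
    rw [hm] at hm'
    simp only [Option.some_inj] at hm'
    rw [hm']
  · intro k hk
    rw [mem_psupp] at hk
    exact ⟨((f k).get hk, k), by rw [mem_acInv]; exact (Option.some_get hk).symm, rfl⟩

noncomputable def antichainEquiv (s : ℕ) :
    {A : Finset (γ × α) // IsAntichain (· ≤ ·) (A : Set (γ × α)) ∧ A.card = s} ≃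
      {f : α → Option γ // SA f ∧ (psupp f).card = s} where
  toFun A := ⟨acFun A.1, sa_acFun A.2.1, by
    rw [← card_acInv (sa_acFun A.2.1), acInv_acFun A.2.1, A.2.2]⟩
  invFun f := ⟨acInv f.1, isAntichain_acInv f.2.1, by rw [card_acInv f.2.1, f.2.2]⟩
  left_inv A := Subtype.ext (acInv_acFun A.2.1)
  right_inv f := Subtype.ext (acFun_acInv f.2.1)

end Antichain
abbrev Klin (n : ℕ) : Type := Fin n ⊕ₗ ((Fin 1 ⊕ₗ Fin 1) ⊕ₗ Fin n)
abbrev Km (n : ℕ) : Type := Fin n ⊕ₗ (Fin 1 ⊕ₗ Fin n)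

instance (n : ℕ) : Fintype (Klin n) :=
  inferInstanceAs (Fintype (Fin n ⊕ ((Fin 1 ⊕ Fin 1) ⊕ Fin n)))
instance (n : ℕ) : Fintype (Km n) :=
  inferInstanceAs (Fintype (Fin n ⊕ (Fin 1 ⊕ Fin n)))

def kx (n : ℕ) : K n := Sum.inr (Sum.inl (Sum.inl 0))
def ky (n : ℕ) : K n := Sum.inr (Sum.inl (Sum.inr 0))
def kmid (n : ℕ) : Km n := Sum.inr (Sum.inl 0)

variable {n : ℕ}

lemma fin1_eq (t : Fin 1) : t = 0 := Subsingleton.elim _ _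

lemma kx_ne_ky : kx n ≠ ky n := by
  intro h
  rw [kx, ky] at h
  exact absurd (Sum.inl_injective (Sum.inr_injective h)) (by
    intro hc
    cases hc)

/-- K-lt implies Klin-lt -/
lemma klin_lt_of_k_lt {a b : K n} (h : a < b) :
    (show Klin n from a) < (show Klin n from b) := by
  cases h with
  | inl h => exact Sum.Lex.inl h
  | sep a b => exact Sum.Lex.sep _ _
  | inr h =>
    apply Sum.Lex.inr
    cases h with
    | inl h =>
      apply Sum.Lex.inl
      cases h with
      | inl h => exact Sum.Lex.inl h
      | inr h => exact Sum.Lex.inr h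
    | sep a b => exact Sum.Lex.sep _ _
    | inr h => exact Sum.Lex.inr h

lemma kx_lt_ky_klin : (show Klin n from kx n) < (show Klin n from ky n) :=
  Sum.Lex.inr (Sum.Lex.inl (Sum.Lex.sep _ _))

/-- Klin-lt implies K-lt or the special pair -/
lemma k_lt_of_klin_lt {a b : K n} (h : (show Klin n from a) < (show Klin n from b)) :
    a < b ∨ (a = kx n ∧ b = ky n) := by
  cases h with
  | inl h => exact Or.inl (Sum.Lex.inl h)
  | sep a b => exact Or.inl (Sum.Lex.sep _ _)
  | inr h =>
    cases h with
    | inl h =>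
      cases h with
      | inl h => exact Or.inl (Sum.Lex.inr (Sum.Lex.inl (Sum.LiftRel.inl h)))
      | inr h => exact Or.inl (Sum.Lex.inr (Sum.Lex.inl (Sum.LiftRel.inr h)))
      | sep u v =>
        right
        constructor
        · show (Sum.inr (Sum.inl (Sum.inl u)) : K n) = kx n
          rw [kx, fin1_eq u]
        · show (Sum.inr (Sum.inl (Sum.inr v)) : K n) = ky n
          rw [ky, fin1_eq v]
    | sep a b => exact Or.inl (Sum.Lex.inr (Sum.Lex.sep _ _))
    | inr h => exact Or.inl (Sum.Lex.inr (Sum.Lex.inr h))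

/-- the swap map on K n -/
def kswap : K n → K n
  | Sum.inl i => Sum.inl i
  | Sum.inr (Sum.inl (Sum.inl t)) => Sum.inr (Sum.inl (Sum.inr t))
  | Sum.inr (Sum.inl (Sum.inr t)) => Sum.inr (Sum.inl (Sum.inl t))
  | Sum.inr (Sum.inr j) => Sum.inr (Sum.inr j)

lemma kswap_kswap (a : K n) : kswap (kswap a) = a := by
  rcases a with i | m | j
  · rfl
  · rcases m with t | t <;> rfl
  · rfl

lemma kswap_kx : kswap (kx n) = ky n := rfl
lemma kswap_ky : kswap (ky n) = kx n := rfl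

lemma kswap_lt {a b : K n} (h : a < b) : kswap a < kswap b := by
  cases h with
  | inl h => exact Sum.Lex.inl h
  | sep a b =>
    rcases b with m | j
    · rcases m with t | t <;> exact Sum.Lex.sep _ _
    · exact Sum.Lex.sep _ _
  | inr h =>
    cases h with
    | inl h =>
      cases h with
      | inl h => exact absurd h (by simp [fin1_eq])
      | inr h => exact absurd h (by simp [fin1_eq])
    | sep a b =>
      rcases a with t | t <;> exact Sum.Lex.inr (Sum.Lex.sep _ _)
    | inr h => exact Sum.Lex.inr (Sum.Lex.inr h)

/-- the merge map K n → Km n -/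
def kmu : K n → Km n
  | Sum.inl i => Sum.inl i
  | Sum.inr (Sum.inl _) => Sum.inr (Sum.inl 0)
  | Sum.inr (Sum.inr j) => Sum.inr (Sum.inr j)

/-- the section Km n → K n -/
def kiota : Km n → K n
  | Sum.inl i => Sum.inl i
  | Sum.inr (Sum.inl _) => kx n
  | Sum.inr (Sum.inr j) => Sum.inr (Sum.inr j)

lemma kmu_kiota (a : Km n) : kmu (kiota a) = a := by
  rcases a with i | t | j
  · rfl
  · show Sum.inr (Sum.inl 0) = (Sum.inr (Sum.inl t) : Km n)
    rw [fin1_eq t]; rfl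
  · rfl

lemma kiota_kmu (a : K n) : a = ky n ∨ kiota (kmu a) = a := by
  rcases a with i | m | j
  · exact Or.inr rfl
  · rcases m with t | t
    · exact Or.inr (by show kx n = _; rw [kx, fin1_eq t])
    · exact Or.inl (by show _ = ky n; rw [ky, fin1_eq t])
  · exact Or.inr rfl

lemma kiota_kmu_ky : kiota (kmu (ky n)) = kx n := rfl
lemma kmu_kx : kmu (kx n) = kmid n := rfl
lemma kmu_ky : kmu (ky n) = kmid n := rfl

lemma kmu_lt {a b : K n} (h : a < b) : kmu a < kmu b := by
  cases h with
  | inl h => exact Sum.Lex.inl h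
  | sep a b =>
    rcases b with m | j
    · exact Sum.Lex.sep _ _
    · exact Sum.Lex.sep _ _
  | inr h =>
    cases h with
    | inl h =>
      cases h with
      | inl h => exact absurd h (by simp [fin1_eq])
      | inr h => exact absurd h (by simp [fin1_eq])
    | sep a b =>
      rcases a with t | t <;> exact Sum.Lex.inr (Sum.Lex.sep _ _)
    | inr h => exact Sum.Lex.inr (Sum.Lex.inr h)

lemma kiota_lt {a b : Km n} (h : a < b) : kiota a < kiota b := by
  cases h with
  | inl h => exact Sum.Lex.inl h
  | sep a b =>
    rcases b with t | j
    · exact Sum.Lex.sep _ _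
    · exact Sum.Lex.sep _ _
  | inr h =>
    cases h with
    | inl h => exact absurd h (by simp [fin1_eq])
    | sep a b => exact Sum.Lex.inr (Sum.Lex.sep _ _)
    | inr h => exact Sum.Lex.inr (Sum.Lex.inr h)
section Transfer
variable {n : ℕ} {γ : Type*} [LinearOrder γ] [Fintype γ]

lemma card_congr_iff {δ : Type*} {P Q : δ → Prop} (h : ∀ a, P a ↔ Q a) :
    Nat.card {a // P a} = Nat.card {a // Q a} :=
  Nat.card_congr (Equiv.subtypeEquivRight h)

def funSubtypeEquiv (P : (K n → Option γ) → Prop) (Q : (Klin n → Option γ) → Prop)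
    (h : ∀ f : K n → Option γ, P f ↔ Q f) :
    {f : K n → Option γ // P f} ≃ {f : Klin n → Option γ // Q f} where
  toFun f := ⟨f.1, (h f.1).mp f.2⟩
  invFun g := ⟨g.1, (h g.1).mpr g.2⟩
  left_inv _ := rfl
  right_inv _ := rfl

/-- SA over the linearization vs SA over K -/
lemma sa_klin_iff (f : K n → Option γ) :
    SA (α := Klin n) f ↔ SA f ∧ ∀ u ∈ f (kx n), ∀ v ∈ f (ky n), v < u := by
  constructor
  · intro h
    exact ⟨fun a b hab => h (klin_lt_of_k_lt hab), fun u hu v hv => h kx_lt_ky_klin u hu v hv⟩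
  · rintro ⟨h1, h2⟩ a b hab u hu v hv
    rcases k_lt_of_klin_lt hab with hlt | ⟨ha, hb⟩
    · exact h1 hlt u hu v hv
    · subst ha; subst hb
      exact h2 u hu v hv

lemma psupp_klin_eq (f : K n → Option γ) :
    psupp (α := Klin n) f = psupp (α := K n) f := rfl

lemma sa_comp_kswap {f : K n → Option γ} (hf : SA f) : SA (fun a => f (kswap a)) :=
  fun _ _ hab => hf (kswap_lt hab)

lemma psupp_comp_kswap (f : K n → Option γ) :
    psupp (fun a => f (kswap a)) = (psupp f).image kswap := by
  ext a
  simp only [mem_psupp, Finset.mem_image]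
  constructor
  · intro h
    exact ⟨kswap a, h, kswap_kswap a⟩
  · rintro ⟨b, hb, rfl⟩
    rw [kswap_kswap]
    exact hb

lemma kswap_injective : Function.Injective (kswap (n := n)) :=
  Function.LeftInverse.injective kswap_kswap

lemma card_psupp_comp_kswap (f : K n → Option γ) :
    (psupp (fun a => f (kswap a))).card = (psupp f).card := by
  rw [psupp_comp_kswap, Finset.card_image_of_injective _ kswap_injective]

lemma kiota_injective : Function.Injective (kiota (n := n)) := by
  intro a b h
  rcases lt_trichotomy a b with hl | he | hl
  · exact absurd (h ▸ kiota_lt hl) (lt_irrefl _)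
  · exact he
  · exact absurd (h ▸ kiota_lt hl) (lt_irrefl _)

lemma kiota_ne_ky (a : Km n) : kiota a ≠ ky n := by
  rcases a with i | t | j
  · intro h; cases h
  · exact kx_ne_ky
  · intro h; cases h

lemma psupp_comp_kmu' (g : Km n → Option γ) (hmid : (g (kmid n)).isSome) :
    psupp (fun a => g (kmu a)) = (psupp g).image kiota ∪ {ky n} := by
  ext a
  simp only [mem_psupp, Finset.mem_union, Finset.mem_image, Finset.mem_singleton]
  constructor
  · intro h
    rcases kiota_kmu a with rfl | heq
    · exact Or.inr rfl
    · exact Or.inl ⟨kmu a, h, heq⟩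
  · rintro (⟨b, hb, rfl⟩ | rfl)
    · rw [show kmu (kiota b) = b from kmu_kiota b]
      exact hb
    · rw [show kmu (ky n) = kmid n from rfl]
      exact hmid

lemma card_psupp_comp_kmu (g : Km n → Option γ) (hmid : (g (kmid n)).isSome) :
    (psupp (fun a => g (kmu a))).card = (psupp g).card + 1 := by
  rw [psupp_comp_kmu' g hmid, Finset.card_union_of_disjoint, Finset.card_singleton,
    Finset.card_image_of_injective _ kiota_injective]
  rw [Finset.disjoint_right]
  intro a ha h
  rw [Finset.mem_singleton] at ha
  subst ha
  obtain ⟨b, _, hb⟩ := Finset.mem_image.mp h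
  exact kiota_ne_ky b hb

/-- the merge equivalence -/
noncomputable def mergeEquiv (s : ℕ) :
    {f : K n → Option γ // SA f ∧ (psupp f).card = s + 1 ∧
        ((f (kx n)).isSome ∧ (f (ky n)).isSome ∧ f (kx n) = f (ky n))} ≃
      {g : Km n → Option γ // SA g ∧ (psupp g).card = s ∧ kmid n ∈ psupp g} where
  toFun f := ⟨fun a => f.1 (kiota a), by
    obtain ⟨hsa, hcard, hx, hy, hxy⟩ := f.2
    have hmid : ((fun a => f.1 (kiota a)) (kmid n)) = f.1 (kx n) := rfl
    refine ⟨fun a b hab => hsa (kiota_lt hab), ?_, ?_⟩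
    · have h2 : (fun a => (fun b => f.1 (kiota b)) (kmu a)) = f.1 := by
        funext a
        show f.1 (kiota (kmu a)) = f.1 a
        rcases kiota_kmu a with rfl | heq
        · rw [kiota_kmu_ky, hxy]
        · rw [heq]
      have := card_psupp_comp_kmu (fun b => f.1 (kiota b)) (by exact hx)
      rw [h2, hcard] at this
      omega
    · rw [mem_psupp]
      exact hx⟩
  invFun g := ⟨fun a => g.1 (kmu a), by
    obtain ⟨hsa, hcard, hmid⟩ := g.2
    rw [mem_psupp] at hmid
    refine ⟨fun a b hab => hsa (kmu_lt hab), ?_, hmid, hmid, rfl⟩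
    rw [card_psupp_comp_kmu g.1 hmid, hcard]⟩
  left_inv := by
    rintro ⟨f, hsa, hcard, hx, hy, hxy⟩
    apply Subtype.ext
    funext a
    show f (kiota (kmu a)) = f a
    rcases kiota_kmu a with rfl | heq
    · rw [kiota_kmu_ky, hxy]
    · rw [heq]
  right_inv := by
    rintro ⟨g, hsa, hcard, hmid⟩
    apply Subtype.ext
    funext a
    show g (kmu (kiota a)) = g a
    rw [kmu_kiota]

end Transfer
set_option maxHeartbeats 1000000
section Main
variable {n : ℕ}

instance : DecidableEq (Klin n) :=
  inferInstanceAs (DecidableEq (Fin n ⊕ ((Fin 1 ⊕ Fin 1) ⊕ Fin n)))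
instance : DecidableEq (Km n) :=
  inferInstanceAs (DecidableEq (Fin n ⊕ (Fin 1 ⊕ Fin n)))

lemma card_Klin (n : ℕ) : Fintype.card (Klin n) = 2 * n + 2 := by
  show Fintype.card (Fin n ⊕ ((Fin 1 ⊕ Fin 1) ⊕ Fin n)) = 2 * n + 2
  simp
  omega

lemma card_Km (n : ℕ) : Fintype.card (Km n) = 2 * n + 1 := by
  show Fintype.card (Fin n ⊕ (Fin 1 ⊕ Fin n)) = 2 * n + 1
  simp
  omega

/-- swap involution on SA functions -/
def swapSubtypeEquiv {γ : Type*} [LinearOrder γ] [Fintype γ] (i : ℕ) :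
    {f : K n → Option γ // (SA f ∧ (psupp f).card = i) ∧
        (((f (kx n)).isSome ∧ (f (ky n)).isSome) ∧ ∀ v ∈ f (ky n), ∀ u ∈ f (kx n), u < v)} ≃
      {f : K n → Option γ // (SA f ∧ (psupp f).card = i) ∧
        (((f (kx n)).isSome ∧ (f (ky n)).isSome) ∧ ∀ u ∈ f (kx n), ∀ v ∈ f (ky n), v < u)} where
  toFun f := ⟨fun a => f.1 (kswap a),
    ⟨⟨sa_comp_kswap f.2.1.1, by rw [card_psupp_comp_kswap, f.2.1.2]⟩,
      ⟨f.2.2.1.2, f.2.2.1.1⟩, f.2.2.2⟩⟩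
  invFun f := ⟨fun a => f.1 (kswap a),
    ⟨⟨sa_comp_kswap f.2.1.1, by rw [card_psupp_comp_kswap, f.2.1.2]⟩,
      ⟨f.2.2.1.2, f.2.2.1.1⟩, f.2.2.2⟩⟩
  left_inv f := Subtype.ext (by funext a; show f.1 (kswap (kswap a)) = f.1 a; rw [kswap_kswap])
  right_inv f := Subtype.ext (by funext a; show f.1 (kswap (kswap a)) = f.1 a; rw [kswap_kswap])

theorem count_main (n i : ℕ) (hi : 1 ≤ i) :
    Nat.card {A : Finset (Fin (2 * n + 1) × K n) //
        IsAntichain (· ≤ ·) (A : Set (Fin (2 * n + 1) × K n)) ∧ A.card = i} =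
      (2 * n + 2).choose i * (2 * n + 1).choose i
      + Nat.card {D : Finset (Klin n) // D.card = i ∧ (kx n ∈ D ∧ ky n ∈ D)} * (2 * n + 1).choose i
      + Nat.card {D : Finset (Km n) // D.card = i - 1 ∧ kmid n ∈ D} * (2 * n + 1).choose (i - 1) := by
  classical
  set γ := Fin (2 * n + 1) with hγ
  have hcγ : Fintype.card γ = 2 * n + 1 := Fintype.card_fin _
  rw [Nat.card_congr (antichainEquiv (γ := γ) (α := K n) i)]
  -- term A : the Q1 (or vacuous) part, counted by the linearization
  have hA : Nat.card {f : K n → Option γ // (SA f ∧ (psupp f).card = i) ∧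
        (∀ u ∈ f (kx n), ∀ v ∈ f (ky n), v < u)} =
      (2 * n + 2).choose i * (2 * n + 1).choose i := by
    rw [Nat.card_congr (funSubtypeEquiv _
      (fun g : Klin n → Option γ => SA g ∧ (psupp g).card = i ∧ (fun _ => True) (psupp g))
      (fun f => by
        constructor
        · rintro ⟨⟨hsa, hc⟩, hq⟩
          exact ⟨(sa_klin_iff f).mpr ⟨hsa, hq⟩, hc, trivial⟩
        · rintro ⟨hsa, hc, -⟩
          obtain ⟨h1, h2⟩ := (sa_klin_iff f).mp hsa
          exact ⟨⟨h1, hc⟩, h2⟩))]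
    rw [card_sa i (fun _ => True)]
    have h2 : Nat.card {D : Finset (Klin n) // D.card = i ∧ True} =
        Nat.card {D : Finset (Klin n) // D.card = i} := card_congr_iff (fun D => by simp)
    rw [h2, Nat.card_eq_fintype_card, Fintype.card_finset_len, card_Klin, hcγ]
  -- term B : both defined, f x < f y; swap and linearize
  have hB : Nat.card {f : K n → Option γ // ((SA f ∧ (psupp f).card = i) ∧
        ¬ (∀ u ∈ f (kx n), ∀ v ∈ f (ky n), v < u)) ∧ (∀ v ∈ f (ky n), ∀ u ∈ f (kx n), u < v)} =
      Nat.card {D : Finset (Klin n) // D.card = i ∧ (kx n ∈ D ∧ ky n ∈ D)} *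
        (2 * n + 1).choose i := by
    have e1 : Nat.card {f : K n → Option γ // ((SA f ∧ (psupp f).card = i) ∧
          ¬ (∀ u ∈ f (kx n), ∀ v ∈ f (ky n), v < u)) ∧ (∀ v ∈ f (ky n), ∀ u ∈ f (kx n), u < v)} =
        Nat.card {f : K n → Option γ // (SA f ∧ (psupp f).card = i) ∧
          (((f (kx n)).isSome ∧ (f (ky n)).isSome) ∧ ∀ v ∈ f (ky n), ∀ u ∈ f (kx n), u < v)} := by
      apply card_congr_iff
      intro f
      constructor
      · rintro ⟨⟨hp, hnq1⟩, hq2⟩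
        push_neg at hnq1
        obtain ⟨u, hu, v, hv, -⟩ := hnq1
        rw [Option.mem_def] at hu hv
        exact ⟨hp, ⟨by rw [hu]; rfl, by rw [hv]; rfl⟩, hq2⟩
      · rintro ⟨hp, ⟨hx, hy⟩, hq2⟩
        refine ⟨⟨hp, fun hq1 => ?_⟩, hq2⟩
        have h1 := hq1 _ (Option.mem_def.mpr (Option.some_get hx).symm)
          _ (Option.mem_def.mpr (Option.some_get hy).symm)
        have h2 := hq2 _ (Option.mem_def.mpr (Option.some_get hy).symm)
          _ (Option.mem_def.mpr (Option.some_get hx).symm)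
        exact absurd h1 (asymm h2)
    rw [e1, Nat.card_congr (swapSubtypeEquiv i)]
    rw [Nat.card_congr (funSubtypeEquiv _
      (fun g : Klin n → Option γ => SA g ∧ (psupp g).card = i ∧
        (fun D => kx n ∈ D ∧ ky n ∈ D) (psupp g))
      (fun f => by
        constructor
        · rintro ⟨⟨hsa, hc⟩, ⟨hx, hy⟩, hq⟩
          exact ⟨(sa_klin_iff f).mpr ⟨hsa, hq⟩, hc,
            (mem_psupp f _).mpr hx, (mem_psupp f _).mpr hy⟩
        · rintro ⟨hsa, hc, hx, hy⟩
          obtain ⟨h1, h2⟩ := (sa_klin_iff f).mp hsa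
          exact ⟨⟨h1, hc⟩, ⟨(mem_psupp f _).mp hx, (mem_psupp f _).mp hy⟩, h2⟩))]
    rw [card_sa (α := Klin n) i (fun D => kx n ∈ D ∧ ky n ∈ D), hcγ]
  -- term C : both defined, equal values; merge
  have hC : Nat.card {f : K n → Option γ // ((SA f ∧ (psupp f).card = i) ∧
        ¬ (∀ u ∈ f (kx n), ∀ v ∈ f (ky n), v < u)) ∧
        ¬ (∀ v ∈ f (ky n), ∀ u ∈ f (kx n), u < v)} =
      Nat.card {D : Finset (Km n) // D.card = i - 1 ∧ kmid n ∈ D} *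
        (2 * n + 1).choose (i - 1) := by
    obtain ⟨s, rfl⟩ : ∃ s, i = s + 1 := ⟨i - 1, (Nat.succ_pred_eq_of_pos hi).symm⟩
    have e1 : Nat.card {f : K n → Option γ // ((SA f ∧ (psupp f).card = s + 1) ∧
          ¬ (∀ u ∈ f (kx n), ∀ v ∈ f (ky n), v < u)) ∧
          ¬ (∀ v ∈ f (ky n), ∀ u ∈ f (kx n), u < v)} =
        Nat.card {f : K n → Option γ // SA f ∧ (psupp f).card = s + 1 ∧
          ((f (kx n)).isSome ∧ (f (ky n)).isSome ∧ f (kx n) = f (ky n))} := by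
      apply card_congr_iff
      intro f
      constructor
      · rintro ⟨⟨⟨hsa, hc⟩, hnq1⟩, hnq2⟩
        push_neg at hnq1 hnq2
        obtain ⟨u, hu, v, hv, huv⟩ := hnq1
        obtain ⟨v', hv', u', hu', hvu⟩ := hnq2
        rw [Option.mem_def] at hu hv hu' hv'
        rw [hu] at hu'
        rw [hv] at hv'
        simp only [Option.some_inj] at hu' hv'
        subst hu'; subst hv'
        have : u = v := le_antisymm (not_lt.mp huv) (not_lt.mp hvu)
        subst this
        exact ⟨hsa, hc, by rw [hu]; rfl, by rw [hv]; rfl, by rw [hu, hv]⟩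
      · rintro ⟨hsa, hc, hx, hy, hxy⟩
        have hfx := (Option.some_get hx).symm
        have hfy := (Option.some_get hy).symm
        have hg : (f (kx n)).get hx = (f (ky n)).get hy :=
          Option.some_inj.mp (hfx.symm.trans (hxy.trans hfy))
        refine ⟨⟨⟨hsa, hc⟩, fun hq1 => ?_⟩, fun hq2 => ?_⟩
        · have := hq1 _ (Option.mem_def.mpr hfx) _ (Option.mem_def.mpr hfy)
          exact absurd this (by rw [hg]; exact lt_irrefl _)
        · have := hq2 _ (Option.mem_def.mpr hfy) _ (Option.mem_def.mpr hfx)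
          exact absurd this (by rw [hg]; exact lt_irrefl _)
    rw [e1, Nat.card_congr (mergeEquiv s)]
    have e2 : Nat.card {g : Km n → Option γ // SA g ∧ (psupp g).card = s ∧ kmid n ∈ psupp g} =
        Nat.card {g : Km n → Option γ // SA g ∧ (psupp g).card = s ∧
          (fun D => kmid n ∈ D) (psupp g)} := rfl
    rw [e2, card_sa (α := Km n) s (fun D => kmid n ∈ D), hcγ]
    simp only [Nat.add_sub_cancel]
  rw [card_split (fun f : K n → Option γ => SA f ∧ (psupp f).card = i)
    (fun f => ∀ u ∈ f (kx n), ∀ v ∈ f (ky n), v < u)]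
  rw [card_split (fun f : K n → Option γ => (SA f ∧ (psupp f).card = i) ∧
      ¬ (∀ u ∈ f (kx n), ∀ v ∈ f (ky n), v < u))
    (fun f => ∀ v ∈ f (ky n), ∀ u ∈ f (kx n), u < v)]
  rw [hA, hB, hC]
  ring

end Main
lemma hD2 (n s : ℕ) : Nat.card {D : Finset (Klin n) // D.card = s ∧ (kx n ∈ D ∧ ky n ∈ D)} =
    if 2 ≤ s then (2 * n).choose (s - 2) else 0 := by
  classical
  have hT : ({kx n, ky n} : Finset (Klin n)).card = 2 := by
    exact Finset.card_pair (kx_ne_ky (n := n))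
  have hiff : ∀ D : Finset (Klin n),
      (D.card = s ∧ (kx n ∈ D ∧ ky n ∈ D)) ↔ (D.card = s ∧ ({kx n, ky n} : Finset (Klin n)) ⊆ D) := by
    intro D
    exact and_congr_right' (Finset.insert_subset_iff.trans (and_congr_right' Finset.singleton_subset_iff)).symm
  rw [card_congr_iff hiff]
  by_cases h : 2 ≤ s
  · rw [if_pos h, card_subsets_containing _ s (by rw [hT]; exact h), hT, card_Klin]
    congr 1 <;> omega
  · rw [if_neg h, card_subsets_containing_zero _ s (by rw [hT]; omega)]

lemma hD3 (n s : ℕ) : Nat.card {D : Finset (Km n) // D.card = s ∧ kmid n ∈ D} =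
    if 1 ≤ s then (2 * n).choose (s - 1) else 0 := by
  classical
  have hiff : ∀ D : Finset (Km n),
      (D.card = s ∧ kmid n ∈ D) ↔ (D.card = s ∧ ({kmid n} : Finset (Km n)) ⊆ D) := by
    intro D
    rw [Finset.singleton_subset_iff]
  rw [card_congr_iff hiff]
  by_cases h : 1 ≤ s
  · rw [if_pos h, card_subsets_containing _ s (by rw [Finset.card_singleton]; exact h),
      Finset.card_singleton, card_Km]
    congr 1 <;> omega
  · rw [if_neg h, card_subsets_containing_zero _ s (by rw [Finset.card_singleton]; omega)]

lemma factored (n k : ℕ) (hk : 1 ≤ k) :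
    (2 * n + 2).choose k * (2 * n + 1).choose k
      + (if 2 ≤ k then (2 * n).choose (k - 2) else 0) * (2 * n + 1).choose k
      + (if 1 ≤ k - 1 then (2 * n).choose (k - 1 - 1) else 0) * (2 * n + 1).choose (k - 1)
    = (2 * n + 2).choose k *
        ((2 * n + 1).choose k + (if 2 ≤ k then (2 * n).choose (k - 2) else 0)) := by
  have hif : (if 1 ≤ k - 1 then (2 * n).choose (k - 1 - 1) else 0)
      = (if 2 ≤ k then (2 * n).choose (k - 2) else 0) := by
    rcases le_or_gt 2 k with h | h
    · rw [if_pos (by omega), if_pos h]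
      congr 1 <;> omega
    · rw [if_neg (by omega), if_neg (by omega)]
  rw [hif]
  have hp : (2 * n + 1).choose k + (2 * n + 1).choose (k - 1) = (2 * n + 2).choose k := by
    obtain ⟨t, rfl⟩ : ∃ t, k = t + 1 := ⟨k - 1, by omega⟩
    have h := Nat.choose_succ_succ' (2 * n + 1) t
    rw [show 2 * n + 1 + 1 = 2 * n + 2 from by omega] at h
    simp only [Nat.add_sub_cancel]
    omega
  set X := (2 * n + 2).choose k
  set B := (2 * n + 1).choose k
  set B2 := (2 * n + 1).choose (k - 1)
  set c := (if 2 ≤ k then (2 * n).choose (k - 2) else 0)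
  calc X * B + c * B + c * B2 = X * B + c * (B + B2) := by ring
    _ = X * B + c * X := by rw [hp]
    _ = X * (B + c) := by ring

lemma middle_sym (n i : ℕ) (h1 : 1 ≤ i) (h2 : i ≤ 2 * n + 1) :
    (2 * n + 1).choose i + (if 2 ≤ i then (2 * n).choose (i - 2) else 0)
    = (2 * n + 1).choose (2 * n + 2 - i)
      + (if 2 ≤ 2 * n + 2 - i then (2 * n).choose (2 * n + 2 - i - 2) else 0) := by
  rcases Nat.lt_or_ge i 2 with h | h
  · -- i = 1
    have hi : i = 1 := by omega
    subst hi
    rw [if_neg (by omega)]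
    rcases Nat.eq_zero_or_pos n with rfl | hn
    · norm_num
    · have hj : 2 * n + 2 - 1 = 2 * n + 1 := by omega
      rw [hj, if_pos (by omega), Nat.choose_self, Nat.choose_one_right]
      have hc : (2 * n).choose (2 * n + 1 - 2) = 2 * n := by
        rw [show 2 * n + 1 - 2 = 2 * n - 1 from by omega]
        have := Nat.choose_symm (n := 2 * n) (k := 1) (by omega)
        rw [this, Nat.choose_one_right]
      rw [hc]
      omega
  · rcases Nat.lt_or_ge i (2 * n + 1) with h' | h'
    · -- 2 ≤ i ≤ 2n
      obtain ⟨t, rfl⟩ : ∃ t, i = t + 2 := ⟨i - 2, by omega⟩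
      have hj : 2 * n + 2 - (t + 2) = 2 * n - t := by omega
      rw [hj, if_pos (by omega), if_pos (by omega)]
      have e1 : (2 * n + 1).choose (2 * n - t) = (2 * n + 1).choose (t + 1) := by
        rw [show 2 * n - t = (2 * n + 1) - (t + 1) from by omega]
        exact Nat.choose_symm (by omega)
      have e2 : (2 * n).choose (2 * n - t - 2) = (2 * n).choose (t + 2) := by
        rw [show 2 * n - t - 2 = 2 * n - (t + 2) from by omega]
        exact Nat.choose_symm (by omega)
      rw [e1, e2, show t + 2 - 2 = t from rfl]
      have p1 := Nat.choose_succ_succ' (2 * n) (t + 1)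
      have p2 := Nat.choose_succ_succ' (2 * n) t
      rw [show t + 1 + 1 = t + 2 from rfl] at p1
      omega
    · -- i = 2n+1
      have hi : i = 2 * n + 1 := by omega
      subst hi
      have hj : 2 * n + 2 - (2 * n + 1) = 1 := by omega
      have hc : (2 * n).choose (2 * n + 1 - 2) = 2 * n := by
        rw [show 2 * n + 1 - 2 = 2 * n - 1 from by omega]
        have := Nat.choose_symm (n := 2 * n) (k := 1) (by omega)
        rw [this, Nat.choose_one_right]
      rw [hj, if_pos (show (2:ℕ) ≤ 2 * n + 1 from by omega),
        if_neg (show ¬ ((2:ℕ) ≤ 1) from by omega), Nat.choose_self, Nat.choose_one_right, hc]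
      omega

/-- The antichain generating polynomial of `[2n+1] × K_n` is palindromic of degree
`2n+2`: the number of antichains of size `i` equals that of size `2n+2-i` for
`1 ≤ i ≤ 2n+1`. -/
theorem N_poly_chain_K_palindromic (n : ℕ) : ∀ i : ℕ, 1 ≤ i → i ≤ 2 * n + 1 →
    Nat.card {A : Finset (Fin (2 * n + 1) × K n) //
        IsAntichain (· ≤ ·) (A : Set (Fin (2 * n + 1) × K n)) ∧ A.card = i} =
      Nat.card {A : Finset (Fin (2 * n + 1) × K n) //
        IsAntichain (· ≤ ·) (A : Set (Fin (2 * n + 1) × K n)) ∧ A.card = 2 * n + 2 - i} := by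
  intro i hi1 hi2
  have hj1 : 1 ≤ 2 * n + 2 - i := by omega
  rw [count_main n i hi1, count_main n (2 * n + 2 - i) hj1]
  rw [hD2 n i, hD2 n (2 * n + 2 - i), hD3 n (i - 1), hD3 n (2 * n + 2 - i - 1)]
  rw [factored n i hi1, factored n (2 * n + 2 - i) hj1]
  rw [show (2 * n + 2).choose (2 * n + 2 - i) = (2 * n + 2).choose i from
    Nat.choose_symm (by omega)]
  rw [middle_sym n i hi1 hi2]
end

section
/- For 2 ≤ i ≤ n, the number of antichains of size i in [2n+1] × K_n equals C(2n, i-2)C(2n+1, i-1) + C(2n, i)C(2n+1, i) + 2·C(2n+1, i-1)C(2n+1, i). -/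
instance (n : ℕ) : DecidableEq (K n) :=
  inferInstanceAs (DecidableEq (Fin n ⊕ ((Fin 1 ⊕ Fin 1) ⊕ Fin n)))

namespace AC

variable {n : ℕ}

def bo (j : Fin n) : K n := toLex (Sum.inl j)
def tp (j : Fin n) : K n := toLex (Sum.inr (toLex (Sum.inr j)))
def xx : K n := toLex (Sum.inr (toLex (Sum.inl (Sum.inl 0))))
def yy : K n := toLex (Sum.inr (toLex (Sum.inl (Sum.inr 0))))

lemma kcases (u : K n) : (∃ j, u = bo j) ∨ u = xx ∨ u = yy ∨ ∃ j, u = tp j := by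
  rcases h : ofLex u with j | w
  · left; refine ⟨j, ?_⟩; show u = toLex (Sum.inl j); rw [← h, toLex_ofLex]
  · have hu : u = toLex (Sum.inr w) := by rw [← h]; rfl
    rcases h2 : ofLex w with m | j
    · have hw : w = toLex (Sum.inl m) := by rw [← h2]; rfl
      rcases m with a | a
      · right; left; rw [hu, hw, Fin.eq_zero a]; rfl
      · right; right; left; rw [hu, hw, Fin.eq_zero a]; rfl
    · right; right; right
      refine ⟨j, ?_⟩
      rw [hu, show w = toLex (Sum.inr j) from by rw [← h2, toLex_ofLex]]
      rfl

def lev (u : K n) : ℕ :=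
  Sum.elim (fun j => j.val)
    (fun w => Sum.elim (fun _ => n) (fun j : Fin n => n + 1 + j.val) (ofLex w)) (ofLex u)

@[simp] lemma lev_bo (j : Fin n) : lev (bo j) = j.val := rfl
@[simp] lemma lev_tp (j : Fin n) : lev (tp j) = n + 1 + j.val := rfl
@[simp] lemma lev_xx : lev (xx : K n) = n := rfl
@[simp] lemma lev_yy : lev (yy : K n) = n := rfl

@[simp] lemma bo_inj {j j' : Fin n} : bo j = bo j' ↔ j = j' := by
  constructor
  · intro h
    have := congrArg ofLex h
    simpa [bo] using this
  · intro h; rw [h]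

@[simp] lemma tp_inj {j j' : Fin n} : tp j = tp j' ↔ j = j' := by
  constructor
  · intro h
    have := congrArg ofLex h
    simp only [tp, ofLex_toLex, Sum.inr.injEq] at this
    have := congrArg ofLex this
    simpa using this
  · intro h; rw [h]

lemma lev_le2n (u : K n) : lev u ≤ 2 * n := by
  rcases kcases u with ⟨j, rfl⟩ | rfl | rfl | ⟨j, rfl⟩
  · have := j.isLt; simp; try omega
  · simp; omega
  · simp; omega
  · have := j.isLt; simp; try omega

@[simp] lemma bo_le_bo {j j' : Fin n} : bo j ≤ bo j' ↔ j ≤ j' := Sum.Lex.inl_le_inl_iff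
@[simp] lemma bo_le_xx {j : Fin n} : bo j ≤ xx := Sum.Lex.inl_le_inr _ _
@[simp] lemma bo_le_yy {j : Fin n} : bo j ≤ yy := Sum.Lex.inl_le_inr _ _
@[simp] lemma bo_le_tp {j j' : Fin n} : bo j ≤ tp j' := Sum.Lex.inl_le_inr _ _
@[simp] lemma not_xx_le_bo {j : Fin n} : ¬ (xx ≤ bo j) := Sum.Lex.not_inr_le_inl
@[simp] lemma not_yy_le_bo {j : Fin n} : ¬ (yy ≤ bo j) := Sum.Lex.not_inr_le_inl
@[simp] lemma not_tp_le_bo {j j' : Fin n} : ¬ (tp j ≤ bo j') := Sum.Lex.not_inr_le_inl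
@[simp] lemma not_xx_le_yy : ¬ ((xx : K n) ≤ yy) := fun h =>
  Sum.not_inl_le_inr (Sum.Lex.inl_le_inl_iff.mp (Sum.Lex.inr_le_inr_iff.mp h))
@[simp] lemma not_yy_le_xx : ¬ ((yy : K n) ≤ xx) := fun h =>
  Sum.not_inr_le_inl (Sum.Lex.inl_le_inl_iff.mp (Sum.Lex.inr_le_inr_iff.mp h))
@[simp] lemma xx_le_tp {j : Fin n} : xx ≤ tp j := Sum.Lex.inr_le_inr_iff.mpr (Sum.Lex.inl_le_inr _ _)
@[simp] lemma yy_le_tp {j : Fin n} : yy ≤ tp j := Sum.Lex.inr_le_inr_iff.mpr (Sum.Lex.inl_le_inr _ _)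
@[simp] lemma not_tp_le_xx {j : Fin n} : ¬ (tp j ≤ xx) := fun h =>
  Sum.Lex.not_inr_le_inl (Sum.Lex.inr_le_inr_iff.mp h)
@[simp] lemma not_tp_le_yy {j : Fin n} : ¬ (tp j ≤ yy) := fun h =>
  Sum.Lex.not_inr_le_inl (Sum.Lex.inr_le_inr_iff.mp h)
@[simp] lemma tp_le_tp {j j' : Fin n} : tp j ≤ tp j' ↔ j ≤ j' :=
  Sum.Lex.inr_le_inr_iff.trans Sum.Lex.inr_le_inr_iff

@[simp] lemma xx_ne_yy : (xx : K n) ≠ yy := fun h => not_xx_le_yy (le_of_eq h)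
@[simp] lemma yy_ne_xx : (yy : K n) ≠ xx := fun h => not_yy_le_xx (le_of_eq h)
@[simp] lemma xx_ne_bo {j : Fin n} : (xx : K n) ≠ bo j := fun h => not_xx_le_bo (le_of_eq h)
@[simp] lemma yy_ne_bo {j : Fin n} : (yy : K n) ≠ bo j := fun h => not_yy_le_bo (le_of_eq h)
@[simp] lemma tp_ne_bo {j j' : Fin n} : (tp j : K n) ≠ bo j' := fun h => not_tp_le_bo (le_of_eq h)
@[simp] lemma tp_ne_xx {j : Fin n} : (tp j : K n) ≠ xx := fun h => not_tp_le_xx (le_of_eq h)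
@[simp] lemma tp_ne_yy {j : Fin n} : (tp j : K n) ≠ yy := fun h => not_tp_le_yy (le_of_eq h)
@[simp] lemma bo_ne_xx {j : Fin n} : (bo j : K n) ≠ xx := fun h => not_xx_le_bo (le_of_eq h.symm)
@[simp] lemma bo_ne_yy {j : Fin n} : (bo j : K n) ≠ yy := fun h => not_yy_le_bo (le_of_eq h.symm)
@[simp] lemma bo_ne_tp {j j' : Fin n} : (bo j : K n) ≠ tp j' := fun h => not_tp_le_bo (le_of_eq h.symm)
@[simp] lemma xx_ne_tp {j : Fin n} : (xx : K n) ≠ tp j := fun h => not_tp_le_xx (le_of_eq h.symm)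
@[simp] lemma yy_ne_tp {j : Fin n} : (yy : K n) ≠ tp j := fun h => not_tp_le_yy (le_of_eq h.symm)

/-- Master lemma: the order on `K n` is captured by levels and equality. -/
lemma le_iff_lev (u v : K n) : u ≤ v ↔ lev u < lev v ∨ u = v := by
  rcases kcases u with ⟨j, rfl⟩ | rfl | rfl | ⟨j, rfl⟩ <;>
    rcases kcases v with ⟨j', rfl⟩ | rfl | rfl | ⟨j', rfl⟩
  · simp only [bo_le_bo, lev_bo, bo_inj, Fin.le_def, Fin.ext_iff]; omega
  · have := j.isLt; simp; try omega
  · have := j.isLt; simp; try omega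
  · have := j.isLt; simp; try omega
  · have := j'.isLt; simp; try omega
  · simp
  · simp
  · simp; omega
  · have := j'.isLt; simp; try omega
  · simp
  · simp
  · simp; omega
  · have := j.isLt; have := j'.isLt; simp; try omega
  · have := j.isLt; simp; try omega
  · have := j.isLt; simp; try omega
  · simp only [tp_le_tp, lev_tp, tp_inj, Fin.le_def, Fin.ext_iff]; omega

lemma lev_eq_cases {u v : K n} (h : lev u = lev v) :
    u = v ∨ (u = xx ∧ v = yy) ∨ (u = yy ∧ v = xx) := by
  rcases kcases u with ⟨j, rfl⟩ | rfl | rfl | ⟨j, rfl⟩ <;>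
    rcases kcases v with ⟨j', rfl⟩ | rfl | rfl | ⟨j', rfl⟩ <;>
    simp_all [Fin.ext_iff] <;> first | omega |
      (first | (have := j.isLt; omega) | (have := j'.isLt; omega) |
        (have := j.isLt; have := j'.isLt; omega))

lemma lev_lt_of_lt {u v : K n} (h : u < v) : lev u < lev v := by
  rcases (le_iff_lev u v).mp h.le with h' | h'
  · exact h'
  · exact absurd h' h.ne

lemma not_le_iff (u v : K n) : ¬ u ≤ v ↔ lev v ≤ lev u ∧ u ≠ v := by
  rw [le_iff_lev]; push_neg
  constructor <;> (rintro ⟨h1, h2⟩; exact ⟨by omega, h2⟩)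

/-! ### kap : embedding of `Fin 2n` as the non-middle elements -/

def kap (v : Fin (2 * n)) : K n :=
  if h : v.val < n then bo ⟨v, h⟩ else tp ⟨v - n, by have := v.isLt; omega⟩

lemma lev_kap (v : Fin (2 * n)) : lev (kap v) = if v.val < n then v.val else v.val + 1 := by
  unfold kap
  split <;> simp <;> omega

lemma lev_kap_ne (v : Fin (2 * n)) : lev (kap v) ≠ n := by
  have := v.isLt; rw [lev_kap]; split <;> omega

lemma lev_kap_lt_iff {v v' : Fin (2 * n)} : lev (kap v) < lev (kap v') ↔ v < v' := by
  rw [lev_kap, lev_kap, Fin.lt_def]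
  split <;> split <;> omega

lemma kap_ne_xx (v : Fin (2 * n)) : kap v ≠ xx := by
  unfold kap; split <;> simp
lemma kap_ne_yy (v : Fin (2 * n)) : kap v ≠ yy := by
  unfold kap; split <;> simp

lemma kap_inj {v v' : Fin (2 * n)} (h : kap v = kap v') : v = v' := by
  have h' := congrArg lev h
  rw [lev_kap, lev_kap] at h'
  have := v.isLt; have := v'.isLt
  apply Fin.ext
  split at h' <;> split at h' <;> omega

lemma exists_kap {u : K n} (h : lev u ≠ n) : ∃ v, kap v = u := by
  rcases kcases u with ⟨j, rfl⟩ | rfl | rfl | ⟨j, rfl⟩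
  · have hj := j.isLt
    refine ⟨⟨j, by omega⟩, ?_⟩
    unfold kap
    rw [dif_pos (by simpa using hj)]
  · simp at h
  · simp at h
  · have hj := j.isLt
    refine ⟨⟨n + j, by omega⟩, ?_⟩
    unfold kap
    rw [dif_neg (by simp)]
    congr 1
    apply Fin.ext
    simp

/-! ### rank functions on finsets in a linear order -/

section Rank
variable {α : Type*} [LinearOrder α]

/-- number of elements of `W` strictly below `a` -/
def rk (W : Finset α) (a : α) : ℕ := (W.filter (· < a)).card

/-- number of elements of `V` strictly above `a` -/
def crk (V : Finset α) (a : α) : ℕ := (V.filter (fun b => a < b)).card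

lemma rk_lt_card {W : Finset α} {a : α} (ha : a ∈ W) : rk W a < W.card :=
  Finset.card_lt_card ⟨Finset.filter_subset _ _, fun hs => by simpa using (Finset.mem_filter.mp (hs ha)).2⟩

lemma crk_lt_card {V : Finset α} {a : α} (ha : a ∈ V) : crk V a < V.card :=
  Finset.card_lt_card ⟨Finset.filter_subset _ _, fun hs => by simpa using (Finset.mem_filter.mp (hs ha)).2⟩

lemma rk_mono {W : Finset α} {a b : α} (h : a ≤ b) : rk W a ≤ rk W b :=
  Finset.card_le_card (fun x hx => by
    simp only [Finset.mem_filter] at *; exact ⟨hx.1, lt_of_lt_of_le hx.2 h⟩)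

lemma crk_anti {W : Finset α} {a b : α} (h : a ≤ b) : crk W b ≤ crk W a :=
  Finset.card_le_card (fun x hx => by
    simp only [Finset.mem_filter] at *; exact ⟨hx.1, lt_of_le_of_lt h hx.2⟩)

lemma rk_strict {W : Finset α} {a b : α} (ha : a ∈ W) (h : a < b) : rk W a < rk W b := by
  apply Finset.card_lt_card
  refine ⟨fun x hx => by
    simp only [Finset.mem_filter] at *; exact ⟨hx.1, lt_trans hx.2 h⟩, fun hs => ?_⟩
  have := hs (Finset.mem_filter.mpr ⟨ha, h⟩)
  simp at this

lemma crk_strict {W : Finset α} {a b : α} (hb : b ∈ W) (h : a < b) : crk W b < crk W a := by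
  apply Finset.card_lt_card
  refine ⟨fun x hx => by
    simp only [Finset.mem_filter] at *; exact ⟨hx.1, lt_trans h hx.2⟩, fun hs => ?_⟩
  have := hs (Finset.mem_filter.mpr ⟨hb, h⟩)
  simp at this

lemma rk_lt_rk_iff {W : Finset α} {a b : α} (ha : a ∈ W) (hb : b ∈ W) :
    rk W a < rk W b ↔ a < b := by
  constructor
  · intro h
    by_contra h'
    exact absurd (rk_mono (not_lt.mp h')) (not_le.mpr h)
  · exact rk_strict ha

lemma crk_lt_crk_iff {W : Finset α} {a b : α} (ha : a ∈ W) (hb : b ∈ W) :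
    crk W a < crk W b ↔ b < a := by
  constructor
  · intro h
    by_contra h'
    exact absurd (crk_anti (not_lt.mp h')) (not_le.mpr h)
  · exact crk_strict ha

lemma rk_injOn {W : Finset α} {a b : α} (ha : a ∈ W) (hb : b ∈ W) (h : rk W a = rk W b) :
    a = b := by
  rcases lt_trichotomy a b with h' | h' | h'
  · exact absurd (rk_strict ha h') (by omega)
  · exact h'
  · exact absurd (rk_strict hb h') (by omega)

lemma crk_injOn {W : Finset α} {a b : α} (ha : a ∈ W) (hb : b ∈ W) (h : crk W a = crk W b) :
    a = b := by
  rcases lt_trichotomy a b with h' | h' | h'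
  · exact absurd (crk_strict hb h') (by omega)
  · exact h'
  · exact absurd (crk_strict ha h') (by omega)

lemma rk_surj {W : Finset α} {q : ℕ} (hq : q < W.card) : ∃ a ∈ W, rk W a = q := by
  have himg : W.image (rk W) = Finset.range W.card := by
    apply Finset.eq_of_subset_of_card_le
    · intro x hx
      rcases Finset.mem_image.mp hx with ⟨a, ha, rfl⟩
      exact Finset.mem_range.mpr (rk_lt_card ha)
    · rw [Finset.card_range, Finset.card_image_of_injOn (fun a ha b hb => rk_injOn ha hb)]
  have : q ∈ W.image (rk W) := by rw [himg]; exact Finset.mem_range.mpr hq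
  rcases Finset.mem_image.mp this with ⟨a, ha, h⟩
  exact ⟨a, ha, h⟩

lemma crk_surj {W : Finset α} {q : ℕ} (hq : q < W.card) : ∃ a ∈ W, crk W a = q := by
  have himg : W.image (crk W) = Finset.range W.card := by
    apply Finset.eq_of_subset_of_card_le
    · intro x hx
      rcases Finset.mem_image.mp hx with ⟨a, ha, rfl⟩
      exact Finset.mem_range.mpr (crk_lt_card ha)
    · rw [Finset.card_range, Finset.card_image_of_injOn (fun a ha b hb => crk_injOn ha hb)]
  have : q ∈ W.image (crk W) := by rw [himg]; exact Finset.mem_range.mpr hq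
  rcases Finset.mem_image.mp this with ⟨a, ha, h⟩
  exact ⟨a, ha, h⟩

end Rank


/-! ### the decoding construction -/

variable (n) in
/-- number of "top" values in `V` -/
def pV (V : Finset (Fin (2 * n))) : ℕ := (V.filter (fun v => n ≤ v.val)).card

def wt (bl : List (Finset (K n))) : ℕ := (bl.map Finset.card).sum

def unskip (p t q : ℕ) : ℕ := if q < p then q else q + t

variable (n) in
def slot (V : Finset (Fin (2 * n))) (t : ℕ) (v : Fin (2 * n)) : ℕ :=
  unskip (pV n V) t (crk V v)

def Allowed (bl : List (Finset (K n))) : Prop :=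
  (∀ f ∈ bl, f.Nonempty ∧ f ⊆ {xx, yy}) ∧ bl.Pairwise Disjoint

lemma pV_le_card (V : Finset (Fin (2 * n))) : pV n V ≤ V.card :=
  Finset.card_le_card (Finset.filter_subset _ _)

lemma crk_lt_pV_iff {V : Finset (Fin (2 * n))} {v : Fin (2 * n)} (hv : v ∈ V) :
    crk V v < pV n V ↔ n ≤ v.val := by
  constructor
  · intro h
    by_contra h'
    have hsub : V.filter (fun v' => n ≤ v'.val) ⊆ V.filter (fun v' => v < v') := by
      intro x hx
      simp only [Finset.mem_filter] at *
      exact ⟨hx.1, by rw [Fin.lt_def]; omega⟩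
    exact absurd (Finset.card_le_card hsub) (by unfold crk pV at h; omega)
  · intro h
    have hsub : V.filter (fun v' => v < v') ⊆ (V.filter (fun v' => n ≤ v'.val)).erase v := by
      intro x hx
      simp only [Finset.mem_filter, Finset.mem_erase] at *
      have := hx.2
      rw [Fin.lt_def] at this
      exact ⟨by intro he; rw [he] at this; omega, hx.1, by omega⟩
    have h1 : v ∈ V.filter (fun v' => n ≤ v'.val) := Finset.mem_filter.mpr ⟨hv, h⟩
    have h2 := Finset.card_le_card hsub
    rw [Finset.card_erase_of_mem h1] at h2
    have h3 : 1 ≤ (V.filter (fun v' => n ≤ v'.val)).card := Finset.card_pos.mpr ⟨v, h1⟩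
    show (V.filter (fun v' => v < v')).card < (V.filter (fun v => n ≤ v.val)).card
    omega

lemma unskip_inj {p t q q' : ℕ} (h : unskip p t q = unskip p t q') : q = q' := by
  unfold unskip at h; split at h <;> split at h <;> omega

lemma slot_injOn {V : Finset (Fin (2 * n))} {t : ℕ} {v v' : Fin (2 * n)}
    (hv : v ∈ V) (hv' : v' ∈ V) (h : slot n V t v = slot n V t v') : v = v' :=
  crk_injOn hv hv' (unskip_inj h)

lemma slot_top {V : Finset (Fin (2 * n))} {t : ℕ} {v : Fin (2 * n)} (hv : v ∈ V)
    (h : n ≤ v.val) : slot n V t v = crk V v ∧ crk V v < pV n V := by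
  have := (crk_lt_pV_iff hv).mpr h
  exact ⟨by unfold slot unskip; simp [this], this⟩

lemma slot_bot {V : Finset (Fin (2 * n))} {t : ℕ} {v : Fin (2 * n)} (hv : v ∈ V)
    (h : v.val < n) : slot n V t v = crk V v + t ∧ pV n V ≤ crk V v := by
  have h2 : ¬ (crk V v < pV n V) := by rw [crk_lt_pV_iff hv]; omega
  exact ⟨by unfold slot unskip; simp [h2], by omega⟩

lemma slot_lt {V : Finset (Fin (2 * n))} {t : ℕ} {v : Fin (2 * n)} (hv : v ∈ V) :
    slot n V t v < V.card + t := by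
  have := crk_lt_card hv
  unfold slot unskip
  split <;> omega

lemma slot_not_mid {V : Finset (Fin (2 * n))} {t : ℕ} {v : Fin (2 * n)} (hv : v ∈ V) :
    slot n V t v < pV n V ∨ pV n V + t ≤ slot n V t v := by
  rcases le_or_gt n v.val with h | h
  · left; have := slot_top (t := t) hv h; omega
  · right; have := (slot_bot (t := t) hv h); omega

lemma slot_surj {V : Finset (Fin (2 * n))} {t q : ℕ} (hq : q < V.card + t)
    (h : q < pV n V ∨ pV n V + t ≤ q) : ∃ v ∈ V, slot n V t v = q := by
  rcases h with h | h
  · rcases crk_surj (W := V) (q := q) (by have := pV_le_card V; omega) with ⟨v, hv, hcrk⟩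
    exact ⟨v, hv, by unfold slot unskip; simp [hcrk, h]⟩
  · rcases crk_surj (W := V) (q := q - t) (by omega) with ⟨v, hv, hcrk⟩
    refine ⟨v, hv, ?_⟩
    unfold slot unskip
    rw [hcrk, if_neg (by omega)]
    omega

variable (n) in
def fib (V : Finset (Fin (2 * n))) (bl : List (Finset (K n))) (q : ℕ) : Finset (K n) :=
  (V.filter (fun v => slot n V bl.length v = q)).image kap ∪
    (if pV n V ≤ q then bl.getD (q - pV n V) ∅ else ∅)

variable (n) in
def dec (V : Finset (Fin (2 * n))) (W : Finset (Fin (2 * n + 1)))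
    (bl : List (Finset (K n))) : Finset (Fin (2 * n + 1) × K n) :=
  (W ×ˢ Finset.univ).filter (fun z => z.2 ∈ fib n V bl (rk W z.1))

lemma mem_fib {V : Finset (Fin (2 * n))} {bl : List (Finset (K n))} {q : ℕ} {u : K n} :
    u ∈ fib n V bl q ↔
      (∃ v ∈ V, slot n V bl.length v = q ∧ kap v = u) ∨
        (pV n V ≤ q ∧ q - pV n V < bl.length ∧ u ∈ bl.getD (q - pV n V) ∅) := by
  unfold fib
  rw [Finset.mem_union, Finset.mem_image]
  constructor
  · rintro (h | h)
    · rcases h with ⟨v, hv, rfl⟩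
      rw [Finset.mem_filter] at hv
      exact Or.inl ⟨v, hv.1, hv.2, rfl⟩
    · split at h
      · refine Or.inr ⟨by assumption, ?_, h⟩
        by_contra h'
        rw [List.getD_eq_default _ _ (by omega)] at h
        simp at h
      · simp at h
  · rintro (⟨v, hv, hs, rfl⟩ | ⟨h1, h2, h3⟩)
    · exact Or.inl ⟨v, Finset.mem_filter.mpr ⟨hv, hs⟩, rfl⟩
    · right; rw [if_pos h1]; exact h3

lemma mem_dec {V : Finset (Fin (2 * n))} {W : Finset (Fin (2 * n + 1))}
    {bl : List (Finset (K n))} {z : Fin (2 * n + 1) × K n} :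
    z ∈ dec n V W bl ↔ z.1 ∈ W ∧ z.2 ∈ fib n V bl (rk W z.1) := by
  unfold dec
  rw [Finset.mem_filter, Finset.mem_product]
  simp


/-! ### dec is an antichain of the right size -/

lemma blk_lev {bl : List (Finset (K n))} (hA : Allowed bl) {r : ℕ} {u : K n}
    (hr : r < bl.length) (hu : u ∈ bl.getD r ∅) : u = xx ∨ u = yy := by
  rw [List.getD_eq_getElem _ _ hr] at hu
  have := (hA.1 _ (List.getElem_mem hr)).2 hu
  simpa using this

lemma blk_disj {bl : List (Finset (K n))} (hA : Allowed bl) {r r' : ℕ} {u : K n}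
    (hrr : r < r') (hr' : r' < bl.length) (hu : u ∈ bl.getD r ∅) (hu' : u ∈ bl.getD r' ∅) :
    False := by
  have hr : r < bl.length := lt_trans hrr hr'
  rw [List.getD_eq_getElem _ _ hr] at hu
  rw [List.getD_eq_getElem _ _ hr'] at hu'
  have := List.pairwise_iff_getElem.mp hA.2 r r' hr hr' hrr
  exact (Finset.disjoint_left.mp this) hu hu'

lemma lev_mem_xy {u : K n} (h : u = xx ∨ u = yy) : lev u = n := by
  rcases h with rfl | rfl <;> simp

lemma fib_lev {V : Finset (Fin (2 * n))} {bl : List (Finset (K n))} (hA : Allowed bl)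
    {q q' : ℕ} {u u' : K n} (h : q < q')
    (hu : u ∈ fib n V bl q) (hu' : u' ∈ fib n V bl q') :
    lev u' < lev u ∨ (u ≠ u' ∧ lev u = n ∧ lev u' = n) := by
  rcases mem_fib.mp hu with ⟨v, hv, hs, rfl⟩ | ⟨h1, h2, h3⟩ <;>
    rcases mem_fib.mp hu' with ⟨v', hv', hs', rfl⟩ | ⟨h1', h2', h3'⟩
  · -- V-V
    left
    rw [lev_kap_lt_iff]
    rw [← hs, ← hs'] at h
    have hcrk : crk V v < crk V v' := by
      unfold slot unskip at h; split at h <;> split at h <;> omega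
    exact (crk_lt_crk_iff hv hv').mp hcrk
  · -- V-block
    left
    have hq : q < pV n V := by
      rcases slot_not_mid (t := bl.length) hv with h' | h' <;> omega
    have hcrk : crk V v < pV n V := by
      rw [← hs] at hq; unfold slot unskip at hq; split at hq <;> omega
    have htop : n ≤ v.val := (crk_lt_pV_iff hv).mp hcrk
    rw [lev_mem_xy (blk_lev hA h2' h3'), lev_kap]
    split <;> omega
  · -- block-V
    left
    have hq' : pV n V + bl.length ≤ q' := by
      rcases slot_not_mid (t := bl.length) hv' with h' | h' <;> omega
    have hcrk : pV n V ≤ crk V v' := by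
      rw [← hs'] at hq'; unfold slot unskip at hq' <;> split at hq' <;> omega
    have hbot : v'.val < n := by
      by_contra h'
      have := (crk_lt_pV_iff hv').mpr (by omega)
      omega
    rw [lev_mem_xy (blk_lev hA h2 h3), lev_kap]
    split <;> omega
  · -- block-block
    right
    refine ⟨?_, lev_mem_xy (blk_lev hA h2 h3), lev_mem_xy (blk_lev hA h2' h3')⟩
    intro he
    rw [he] at h3
    exact blk_disj hA (by omega) h2' h3 h3'

lemma fib_intern {V : Finset (Fin (2 * n))} {bl : List (Finset (K n))} (hA : Allowed bl)
    {q : ℕ} {u u' : K n} (hu : u ∈ fib n V bl q) (hu' : u' ∈ fib n V bl q) (hne : u ≠ u') :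
    ¬ u ≤ u' := by
  rcases mem_fib.mp hu with ⟨v, hv, hs, rfl⟩ | ⟨h1, h2, h3⟩ <;>
    rcases mem_fib.mp hu' with ⟨v', hv', hs', rfl⟩ | ⟨h1', h2', h3'⟩
  · exact absurd (congrArg kap (slot_injOn hv hv' (hs.trans hs'.symm))) hne
  · exfalso
    rcases slot_not_mid (t := bl.length) hv with h' | h' <;> omega
  · exfalso
    rcases slot_not_mid (t := bl.length) hv' with h' | h' <;> omega
  · rcases blk_lev hA h2 h3 with rfl | rfl <;> rcases blk_lev hA h2' h3' with rfl | rfl <;>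
      simp_all

lemma dec_antichain {V : Finset (Fin (2 * n))} {W : Finset (Fin (2 * n + 1))}
    {bl : List (Finset (K n))} (hA : Allowed bl) :
    IsAntichain (· ≤ ·) (dec n V W bl : Set (Fin (2 * n + 1) × K n)) := by
  intro z hz z' hz' hne hle
  simp only [Finset.coe_filter, Set.mem_setOf_eq, Finset.mem_coe] at hz hz'
  have hz := mem_dec.mp hz
  have hz' := mem_dec.mp hz'
  rcases hle with ⟨hle1, hle2⟩
  rcases lt_trichotomy z.1 z'.1 with h | h | h
  · have hrk : rk W z.1 < rk W z'.1 := rk_strict hz.1 h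
    rcases fib_lev hA hrk hz.2 hz'.2 with h' | ⟨hne2, hl1, hl2⟩
    · rcases (le_iff_lev _ _).mp hle2 with h'' | h'' <;> [omega; exact absurd (h'' ▸ h') (by omega)]
    · rcases (le_iff_lev _ _).mp hle2 with h'' | h'' <;> [omega; exact hne2 h'']
  · have hq : rk W z.1 = rk W z'.1 := by rw [h]
    have hne2 : z.2 ≠ z'.2 := by
      intro h2
      exact hne (Prod.ext h h2)
    exact fib_intern hA hz.2 (hq ▸ hz'.2) hne2 hle2
  · exact absurd hle1 (not_le.mpr h)

/-! ### cardinality of dec -/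

lemma sum_range_getD {β γ : Type*} [AddCommMonoid γ] (l : List β) (d : β) (f : β → γ) :
    ∑ r ∈ Finset.range l.length, f (l.getD r d) = (l.map f).sum := by
  induction l with
  | nil => simp
  | cons x xs ih =>
    rw [List.length_cons, Finset.sum_range_succ']
    simp only [List.getD_cons_succ, List.getD_cons_zero, List.map_cons, List.sum_cons]
    rw [ih]
    exact add_comm _ _

lemma dec_eq_biUnion {V : Finset (Fin (2 * n))} {W : Finset (Fin (2 * n + 1))}
    {bl : List (Finset (K n))} :
    dec n V W bl = W.biUnion (fun a => (fib n V bl (rk W a)).image (Prod.mk a)) := by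
  ext z
  rw [mem_dec, Finset.mem_biUnion]
  constructor
  · rintro ⟨h1, h2⟩
    exact ⟨z.1, h1, Finset.mem_image.mpr ⟨z.2, h2, rfl⟩⟩
  · rintro ⟨a, ha, hz⟩
    rcases Finset.mem_image.mp hz with ⟨u, hu, rfl⟩
    exact ⟨ha, hu⟩

lemma card_fib {V : Finset (Fin (2 * n))} {bl : List (Finset (K n))} (hA : Allowed bl) (q : ℕ) :
    (fib n V bl q).card =
      (V.filter (fun v => slot n V bl.length v = q)).card +
        (if pV n V ≤ q then bl.getD (q - pV n V) ∅ else ∅).card := by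
  unfold fib
  rw [Finset.card_union_of_disjoint, Finset.card_image_of_injOn (fun a _ b _ h => kap_inj h)]
  rw [Finset.disjoint_left]
  intro u hu hu'
  rcases Finset.mem_image.mp hu with ⟨v, _, rfl⟩
  split at hu'
  · rcases Nat.lt_or_ge (q - pV n V) bl.length with h' | h'
    · exact lev_kap_ne v (lev_mem_xy (blk_lev hA h' hu'))
    · rw [List.getD_eq_default _ _ h'] at hu'; simp at hu'
  · simp at hu'

lemma card_dec {V : Finset (Fin (2 * n))} {W : Finset (Fin (2 * n + 1))}
    {bl : List (Finset (K n))} (hA : Allowed bl) (hW : W.card = V.card + bl.length) :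
    (dec n V W bl).card = V.card + wt bl := by
  rw [dec_eq_biUnion, Finset.card_biUnion]
  swap
  · intro a ha b hb hab
    rw [Function.onFun_apply, Finset.disjoint_left]
    intro z hz hz'
    rcases Finset.mem_image.mp hz with ⟨u, _, rfl⟩
    rcases Finset.mem_image.mp hz' with ⟨u', _, h⟩
    exact hab (congrArg Prod.fst h).symm
  have h1 : ∀ a ∈ W, ((fib n V bl (rk W a)).image (Prod.mk a)).card =
      (fib n V bl (rk W a)).card := by
    intro a _
    exact Finset.card_image_of_injOn (fun u _ u' _ h => (Prod.mk.injEq _ _ _ _).mp h |>.2)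
  rw [Finset.sum_congr rfl h1]
  have h2 : ∑ a ∈ W, (fib n V bl (rk W a)).card =
      ∑ q ∈ Finset.range W.card, (fib n V bl q).card := by
    refine Finset.sum_bij (fun a _ => rk W a) (fun a ha => Finset.mem_range.mpr (rk_lt_card ha))
      (fun a ha b hb h => rk_injOn ha hb h) (fun q hq => ?_) (fun a _ => rfl)
    rcases rk_surj (Finset.mem_range.mp hq) with ⟨a, ha, h⟩
    exact ⟨a, ha, h⟩
  rw [h2, hW]
  have h3 : ∀ q ∈ Finset.range (V.card + bl.length), (fib n V bl q).card =
      (V.filter (fun v => slot n V bl.length v = q)).card +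
        (if pV n V ≤ q then bl.getD (q - pV n V) ∅ else ∅).card :=
    fun q _ => card_fib hA q
  rw [Finset.sum_congr rfl h3, Finset.sum_add_distrib]
  congr 1
  · rw [← Finset.card_eq_sum_card_fiberwise (f := fun v => slot n V bl.length v)
      (t := Finset.range (V.card + bl.length))]
    intro v hv
    exact Finset.mem_range.mpr (slot_lt hv)
  · unfold wt
    rw [← sum_range_getD bl ∅ Finset.card]
    have hsub : Finset.Ico (pV n V) (pV n V + bl.length) ⊆
        Finset.range (V.card + bl.length) := by
      intro q hq
      rw [Finset.mem_Ico] at hq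
      rw [Finset.mem_range]
      have := pV_le_card V
      omega
    have hvan : ∀ q ∈ Finset.range (V.card + bl.length),
        q ∉ Finset.Ico (pV n V) (pV n V + bl.length) →
        (if pV n V ≤ q then bl.getD (q - pV n V) ∅ else ∅).card = 0 := by
      intro q hq hq'
      rw [Finset.mem_Ico] at hq'
      push_neg at hq'
      split
      · rw [List.getD_eq_default _ _ (by have := hq' (by assumption); omega)]; simp
      · simp
    rw [← Finset.sum_subset hsub hvan, Finset.sum_Ico_eq_sum_range]
    simp


/-! ### recovery of the parameters from dec -/

variable (n) in
def Vof (A : Finset (Fin (2 * n + 1) × K n)) : Finset (Fin (2 * n)) :=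
  Finset.univ.filter (fun v => kap v ∈ A.image Prod.snd)

def Wof (A : Finset (Fin (2 * n + 1) × K n)) : Finset (Fin (2 * n + 1)) :=
  A.image Prod.fst

def tOf (A : Finset (Fin (2 * n + 1) × K n)) : ℕ :=
  ((A.filter (fun z => z.2 = xx ∨ z.2 = yy)).image Prod.fst).card

variable (n) in
def blOf (A : Finset (Fin (2 * n + 1) × K n)) : List (Finset (K n)) :=
  (List.range (tOf A)).map (fun r =>
    (A.filter (fun z => rk (Wof A) z.1 = pV n (Vof n A) + r)).image Prod.snd)

@[simp] lemma blOf_length (A : Finset (Fin (2 * n + 1) × K n)) :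
    (blOf n A).length = tOf A := by simp [blOf]

lemma blOf_getD {A : Finset (Fin (2 * n + 1) × K n)} {r : ℕ} (hr : r < tOf A) :
    (blOf n A).getD r ∅ =
      (A.filter (fun z => rk (Wof A) z.1 = pV n (Vof n A) + r)).image Prod.snd := by
  rw [List.getD_eq_getElem _ _ (by simpa using hr)]
  simp [blOf]

section DecRecovery

variable {V : Finset (Fin (2 * n))} {W : Finset (Fin (2 * n + 1))} {bl : List (Finset (K n))}

lemma fib_nonempty (hA : Allowed bl) {q : ℕ} (hq : q < V.card + bl.length) :
    (fib n V bl q).Nonempty := by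
  rcases Nat.lt_or_ge q (pV n V) with h | h
  · rcases slot_surj hq (Or.inl h) with ⟨v, hv, hs⟩
    exact ⟨kap v, mem_fib.mpr (Or.inl ⟨v, hv, hs, rfl⟩)⟩
  · rcases Nat.lt_or_ge q (pV n V + bl.length) with h' | h'
    · have hr : q - pV n V < bl.length := by omega
      rcases (hA.1 _ (List.getElem_mem hr)).1 with ⟨u, hu⟩
      refine ⟨u, mem_fib.mpr (Or.inr ⟨h, hr, ?_⟩)⟩
      rw [List.getD_eq_getElem _ _ hr]
      exact hu
    · rcases slot_surj hq (Or.inr h') with ⟨v, hv, hs⟩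
      exact ⟨kap v, mem_fib.mpr (Or.inl ⟨v, hv, hs, rfl⟩)⟩

lemma Wof_dec (hA : Allowed bl) (hW : W.card = V.card + bl.length) :
    Wof (dec n V W bl) = W := by
  ext a
  unfold Wof
  rw [Finset.mem_image]
  constructor
  · rintro ⟨z, hz, rfl⟩
    exact (mem_dec.mp hz).1
  · intro ha
    rcases fib_nonempty hA (hW ▸ rk_lt_card ha) with ⟨u, hu⟩
    exact ⟨(a, u), mem_dec.mpr ⟨ha, hu⟩, rfl⟩

lemma Vof_dec (hA : Allowed bl) (hW : W.card = V.card + bl.length) :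
    Vof n (dec n V W bl) = V := by
  ext v
  unfold Vof
  rw [Finset.mem_filter]
  simp only [Finset.mem_univ, true_and, Finset.mem_image]
  constructor
  · rintro ⟨z, hz, hsnd⟩
    rcases mem_fib.mp ((mem_dec.mp hz).2) with ⟨v', hv', _, hkap⟩ | ⟨_, h2, h3⟩
    · rw [hsnd] at hkap
      rw [← kap_inj hkap]
      exact hv'
    · exfalso
      rcases blk_lev hA h2 (hsnd ▸ h3) with h | h
      · exact kap_ne_xx v h
      · exact kap_ne_yy v h
  · intro hv
    have hs := slot_lt (t := bl.length) hv
    rcases rk_surj (W := W) (q := slot n V bl.length v) (by omega) with ⟨a, ha, hrk⟩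
    exact ⟨(a, kap v), mem_dec.mpr ⟨ha, mem_fib.mpr (Or.inl ⟨v, hv, by rw [hrk], rfl⟩)⟩, rfl⟩

lemma mem_dec_xy (hA : Allowed bl) {z : Fin (2 * n + 1) × K n} (hz : z ∈ dec n V W bl) :
    (z.2 = xx ∨ z.2 = yy) ↔
      (pV n V ≤ rk W z.1 ∧ rk W z.1 < pV n V + bl.length) := by
  rcases mem_fib.mp ((mem_dec.mp hz).2) with ⟨v, hv, hs, hkap⟩ | ⟨h1, h2, h3⟩
  · constructor
    · rintro (h | h) <;> rw [← hkap] at h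
      · exact absurd h (kap_ne_xx v)
      · exact absurd h (kap_ne_yy v)
    · intro h
      rcases slot_not_mid (t := bl.length) hv with h' | h' <;> omega
  · constructor
    · intro _; exact ⟨h1, by omega⟩
    · intro _; exact blk_lev hA h2 h3

lemma dec_fiber_mid (hA : Allowed bl) (hW : W.card = V.card + bl.length) {r : ℕ}
    (hr : r < bl.length) :
    ((dec n V W bl).filter (fun z => rk W z.1 = pV n V + r)).image Prod.snd =
      bl.getD r ∅ := by
  ext u
  rw [Finset.mem_image]
  constructor
  · rintro ⟨z, hz, rfl⟩
    rw [Finset.mem_filter] at hz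
    rcases mem_fib.mp ((mem_dec.mp hz.1).2) with ⟨v, hv, hs, hkap⟩ | ⟨h1, h2, h3⟩
    · exfalso
      rw [hz.2] at hs
      rcases slot_not_mid (t := bl.length) hv with h' | h' <;> omega
    · rw [hz.2] at h3
      simpa using h3
  · intro hu
    have hq : pV n V + r < W.card := by
      have := pV_le_card V
      omega
    rcases rk_surj hq with ⟨a, ha, hrk⟩
    refine ⟨(a, u), Finset.mem_filter.mpr ⟨mem_dec.mpr ⟨ha, ?_⟩, hrk⟩, rfl⟩
    rw [hrk]
    exact mem_fib.mpr (Or.inr ⟨by omega, by simpa using hr, by simpa using hu⟩)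

lemma tOf_dec (hA : Allowed bl) (hW : W.card = V.card + bl.length) :
    tOf (dec n V W bl) = bl.length := by
  unfold tOf
  have himg : ((dec n V W bl).filter (fun z => z.2 = xx ∨ z.2 = yy)).image Prod.fst =
      W.filter (fun a => pV n V ≤ rk W a ∧ rk W a < pV n V + bl.length) := by
    ext a
    rw [Finset.mem_image, Finset.mem_filter]
    constructor
    · rintro ⟨z, hz, rfl⟩
      rw [Finset.mem_filter] at hz
      exact ⟨(mem_dec.mp hz.1).1, (mem_dec_xy hA hz.1).mp hz.2⟩
    · rintro ⟨ha, hmid⟩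
      have hfib : (fib n V bl (rk W a)).Nonempty := fib_nonempty hA (hW ▸ rk_lt_card ha)
      rcases hfib with ⟨u, hu⟩
      have hz : (a, u) ∈ dec n V W bl := mem_dec.mpr ⟨ha, hu⟩
      refine ⟨(a, u), Finset.mem_filter.mpr ⟨hz, ?_⟩, rfl⟩
      exact (mem_dec_xy hA hz).mpr hmid
  rw [himg]
  have hinj : ∀ a ∈ W.filter (fun a => pV n V ≤ rk W a ∧ rk W a < pV n V + bl.length),
      ∀ b ∈ W.filter (fun a => pV n V ≤ rk W a ∧ rk W a < pV n V + bl.length),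
      rk W a = rk W b → a = b := by
    intro a ha b hb h
    exact rk_injOn (Finset.mem_filter.mp ha).1 (Finset.mem_filter.mp hb).1 h
  have : (W.filter (fun a => pV n V ≤ rk W a ∧ rk W a < pV n V + bl.length)).image (rk W) =
      Finset.Ico (pV n V) (pV n V + bl.length) := by
    apply Finset.eq_of_subset_of_card_le
    · intro q hq
      rcases Finset.mem_image.mp hq with ⟨a, ha, rfl⟩
      rw [Finset.mem_filter] at ha
      exact Finset.mem_Ico.mpr ha.2
    · rw [Nat.card_Ico]
      have : ∀ q ∈ Finset.Ico (pV n V) (pV n V + bl.length),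
          q ∈ (W.filter (fun a => pV n V ≤ rk W a ∧ rk W a < pV n V + bl.length)).image (rk W) := by
        intro q hq
        rw [Finset.mem_Ico] at hq
        have hqW : q < W.card := by
          have := pV_le_card V
          omega
        rcases rk_surj hqW with ⟨a, ha, hrk⟩
        exact Finset.mem_image.mpr ⟨a, Finset.mem_filter.mpr ⟨ha, by omega⟩, hrk⟩
      have hsub := Finset.card_le_card (fun q hq => this q hq)
      rw [Nat.card_Ico] at hsub
      omega
  rw [← Finset.card_image_of_injOn hinj, this, Nat.card_Ico]
  omega

lemma blOf_dec (hA : Allowed bl) (hW : W.card = V.card + bl.length) :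
    blOf n (dec n V W bl) = bl := by
  apply List.ext_getElem
  · simp [blOf, tOf_dec hA hW]
  · intro r h1 h2
    have hr : r < tOf (dec n V W bl) := by simpa using h1
    have hrb : r < bl.length := h2
    have := blOf_getD (n := n) hr
    rw [List.getD_eq_getElem _ _ h1] at this
    rw [this, Wof_dec hA hW, Vof_dec hA hW, dec_fiber_mid hA hW hrb,
      List.getD_eq_getElem _ _ hrb]

end DecRecovery


/-! ### encoding: every antichain arises from dec -/

lemma lev_eq_n_cases {u : K n} (h : lev u = n) : u = xx ∨ u = yy := by
  have h' : lev u = lev (xx : K n) := by simp [h]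
  rcases lev_eq_cases h' with h'' | ⟨h1, _⟩ | ⟨h1, _⟩
  · exact Or.inl h''
  · exact Or.inl h1
  · exact Or.inr h1

lemma xy_lev {u : K n} (h : u = xx ∨ u = yy) : lev u = n := lev_mem_xy h

section Encode

variable {A : Finset (Fin (2 * n + 1) × K n)}
  (hac : IsAntichain (· ≤ ·) (A : Set (Fin (2 * n + 1) × K n)))

def XYW (A : Finset (Fin (2 * n + 1) × K n)) : Finset (Fin (2 * n + 1)) :=
  (A.filter (fun z => z.2 = xx ∨ z.2 = yy)).image Prod.fst

lemma tOf_eq_card_XYW : tOf A = (XYW A).card := rfl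

include hac in
lemma snd_injOn {z z' : Fin (2 * n + 1) × K n} (hz : z ∈ A) (hz' : z' ∈ A)
    (h : z.2 = z'.2) : z = z' := by
  by_contra hne
  rcases le_total z.1 z'.1 with h1 | h1
  · exact hac hz hz' hne (Prod.le_def.mpr ⟨h1, le_of_eq h⟩)
  · exact hac hz' hz (Ne.symm hne) (Prod.le_def.mpr ⟨h1, le_of_eq h.symm⟩)

include hac in
lemma cross {z z' : Fin (2 * n + 1) × K n} (hz : z ∈ A) (hz' : z' ∈ A)
    (h : z.1 < z'.1) : lev z'.2 ≤ lev z.2 ∧ z.2 ≠ z'.2 := by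
  have hne : z ≠ z' := fun he => absurd (congrArg Prod.fst he) (ne_of_lt h)
  have hle : ¬ z ≤ z' := hac hz hz' hne
  rw [Prod.le_def, not_and_or] at hle
  rcases hle with h' | h'
  · exact absurd (le_of_lt h) h'
  · exact (not_le_iff _ _).mp h'

include hac in
lemma same_coord {z z' : Fin (2 * n + 1) × K n} (hz : z ∈ A) (hz' : z' ∈ A)
    (h : z.1 = z'.1) (hne : z ≠ z') :
    (z.2 = xx ∨ z.2 = yy) ∧ (z'.2 = xx ∨ z'.2 = yy) := by
  have hne2 : z.2 ≠ z'.2 := fun he => hne (Prod.ext h he)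
  have h1 : ¬ z ≤ z' := hac hz hz' hne
  have h2 : ¬ z' ≤ z := hac hz' hz (Ne.symm hne)
  rw [Prod.le_def, not_and_or] at h1 h2
  have hl1 : ¬ z.2 ≤ z'.2 := by
    rcases h1 with h' | h'
    · exact absurd (le_of_eq h) h'
    · exact h'
  have hl2 : ¬ z'.2 ≤ z.2 := by
    rcases h2 with h' | h'
    · exact absurd (le_of_eq h.symm) h'
    · exact h'
  rw [not_le_iff] at hl1 hl2
  have hlev : lev z.2 = lev z'.2 := le_antisymm hl2.1 hl1.1
  rcases lev_eq_cases hlev with h' | ⟨ha, hb⟩ | ⟨ha, hb⟩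
  · exact absurd h' hne2
  · exact ⟨Or.inl ha, Or.inr hb⟩
  · exact ⟨Or.inr ha, Or.inl hb⟩

include hac in
lemma fst_injOn_nonxy {z z' : Fin (2 * n + 1) × K n} (hz : z ∈ A) (hz' : z' ∈ A)
    (hnxy : ¬ (z.2 = xx ∨ z.2 = yy)) (h : z.1 = z'.1) : z = z' := by
  by_contra hne
  exact hnxy (same_coord hac hz hz' h hne).1

include hac in
lemma count_nonxy (P : ℕ → Prop) [DecidablePred P] :
    ((A.filter (fun z => ¬(z.2 = xx ∨ z.2 = yy) ∧ P (lev z.2))).image Prod.fst).card =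
      ((Vof n A).filter (fun v => P (lev (kap v)))).card := by
  rw [Finset.card_image_of_injOn]
  swap
  · intro z hz z' hz' h
    rw [Finset.coe_filter, Set.mem_setOf_eq] at hz hz'
    exact fst_injOn_nonxy hac hz.1 hz'.1 hz.2.1 h
  rw [← Finset.card_image_of_injOn (f := Prod.snd)
    (fun z hz z' hz' h => by
      rw [Finset.coe_filter, Set.mem_setOf_eq] at hz hz'
      exact snd_injOn hac hz.1 hz'.1 h)]
  rw [← Finset.card_image_of_injOn (f := kap)
    (fun v _ v' _ h => kap_inj h)]
  congr 1
  ext u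
  rw [Finset.mem_image, Finset.mem_image]
  constructor
  · rintro ⟨z, hz, rfl⟩
    rw [Finset.mem_filter] at hz
    have hne : lev z.2 ≠ n := fun he => hz.2.1 (lev_eq_n_cases he)
    rcases exists_kap hne with ⟨v, hv⟩
    refine ⟨v, Finset.mem_filter.mpr ⟨?_, by rw [hv]; exact hz.2.2⟩, hv⟩
    unfold Vof
    rw [Finset.mem_filter]
    exact ⟨Finset.mem_univ v, by rw [hv]; exact Finset.mem_image.mpr ⟨z, hz.1, rfl⟩⟩
  · rintro ⟨v, hv, rfl⟩
    rw [Finset.mem_filter] at hv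
    have hmem : kap v ∈ A.image Prod.snd := by
      have := hv.1
      unfold Vof at this
      rw [Finset.mem_filter] at this
      exact this.2
    rcases Finset.mem_image.mp hmem with ⟨z, hz, hsnd⟩
    refine ⟨z, Finset.mem_filter.mpr ⟨hz, ?_, by rw [hsnd]; exact hv.2⟩, hsnd⟩
    rw [hsnd]
    intro h
    rcases h with h | h
    · exact kap_ne_xx v h
    · exact kap_ne_yy v h

include hac in
lemma rk_eq_nonxy {z : Fin (2 * n + 1) × K n} (hz : z ∈ A) {v : Fin (2 * n)}
    (hv : kap v = z.2) :
    v ∈ Vof n A ∧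
      rk (Wof A) z.1 = unskip (pV n (Vof n A)) (tOf A) (crk (Vof n A) v) := by
  have hlevne : lev z.2 ≠ n := by rw [← hv]; exact lev_kap_ne v
  have hnxy : ¬ (z.2 = xx ∨ z.2 = yy) := fun h => hlevne (xy_lev h)
  have hvV : v ∈ Vof n A := by
    unfold Vof
    rw [Finset.mem_filter]
    exact ⟨Finset.mem_univ v, by rw [hv]; exact Finset.mem_image.mpr ⟨z, hz, rfl⟩⟩
  refine ⟨hvV, ?_⟩
  -- Step 1: coordinates below z.1 are exactly coordinates of higher-level elements
  have step1 : (Wof A).filter (· < z.1) =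
      (A.filter (fun z' => lev z.2 < lev z'.2)).image Prod.fst := by
    ext a'
    rw [Finset.mem_filter, Finset.mem_image]
    constructor
    · rintro ⟨ha', hlt⟩
      rcases Finset.mem_image.mp ha' with ⟨z', hz', rfl⟩
      have hc := cross hac hz' hz hlt
      refine ⟨z', Finset.mem_filter.mpr ⟨hz', ?_⟩, rfl⟩
      rcases lt_or_eq_of_le hc.1 with h' | h'
      · exact h'
      · exfalso
        rcases lev_eq_cases h' with h'' | ⟨h1, _⟩ | ⟨h1, _⟩
        · exact hc.2 h''.symm
        · exact hlevne (xy_lev (Or.inl h1))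
        · exact hlevne (xy_lev (Or.inr h1))
    · rintro ⟨z', hz', rfl⟩
      rw [Finset.mem_filter] at hz'
      refine ⟨Finset.mem_image.mpr ⟨z', hz'.1, rfl⟩, ?_⟩
      rcases lt_trichotomy z'.1 z.1 with h' | h' | h'
      · exact h'
      · exfalso
        have hne : z' ≠ z := fun he => by
          rw [he] at hz'
          omega
        have := (same_coord hac hz'.1 hz h' hne).2
        exact hlevne (xy_lev this)
      · exact absurd (cross hac hz hz'.1 h').1 (by omega)
  have step2 : A.filter (fun z' => lev z.2 < lev z'.2) =
      A.filter (fun z' => ¬(z'.2 = xx ∨ z'.2 = yy) ∧ lev z.2 < lev z'.2) ∪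
        A.filter (fun z' => (z'.2 = xx ∨ z'.2 = yy) ∧ lev z.2 < lev z'.2) := by
    ext z'
    simp only [Finset.mem_filter, Finset.mem_union]
    tauto
  have hdisj : Disjoint
      ((A.filter (fun z' => ¬(z'.2 = xx ∨ z'.2 = yy) ∧ lev z.2 < lev z'.2)).image Prod.fst)
      ((A.filter (fun z' => (z'.2 = xx ∨ z'.2 = yy) ∧ lev z.2 < lev z'.2)).image Prod.fst) := by
    rw [Finset.disjoint_left]
    intro a' h1 h2
    rcases Finset.mem_image.mp h1 with ⟨z1, hz1, hfst1⟩
    rcases Finset.mem_image.mp h2 with ⟨z2, hz2, hfst2⟩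
    rw [Finset.mem_filter] at hz1 hz2
    have := fst_injOn_nonxy hac hz1.1 hz2.1 hz1.2.1 (hfst1.trans hfst2.symm)
    rw [this] at hz1
    exact hz1.2.1 hz2.2.1
  show (rk (Wof A) z.1 : ℕ) = _
  unfold rk
  rw [step1, step2, Finset.image_union, Finset.card_union_of_disjoint hdisj]
  have step3 : ((A.filter (fun z' => ¬(z'.2 = xx ∨ z'.2 = yy) ∧
      lev z.2 < lev z'.2)).image Prod.fst).card = crk (Vof n A) v := by
    rw [count_nonxy hac (fun l => lev z.2 < l)]
    unfold crk
    congr 1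
    apply Finset.filter_congr
    intro v' _
    rw [← hv, lev_kap_lt_iff]
  rw [step3]
  rcases Nat.lt_or_ge (lev (kap v)) n with hbot | htop
  · -- bottom value
    have hxyfull : A.filter (fun z' => (z'.2 = xx ∨ z'.2 = yy) ∧ lev z.2 < lev z'.2) =
        A.filter (fun z' => z'.2 = xx ∨ z'.2 = yy) := by
      apply Finset.filter_congr
      intro z' _
      simp only [and_iff_left_iff_imp]
      intro h
      rw [xy_lev h, ← hv]
      exact hbot
    rw [hxyfull]
    have hcrk : ¬ (crk (Vof n A) v < pV n (Vof n A)) := by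
      rw [crk_lt_pV_iff hvV]
      rw [lev_kap] at hbot
      split at hbot <;> omega
    unfold unskip
    rw [if_neg hcrk]
    rw [tOf_eq_card_XYW]
    unfold XYW
    omega
  · -- top value
    have hxyempty : A.filter (fun z' => (z'.2 = xx ∨ z'.2 = yy) ∧ lev z.2 < lev z'.2) = ∅ := by
      rw [Finset.filter_eq_empty_iff]
      intro z' _
      rintro ⟨hxy', hlt'⟩
      rw [xy_lev hxy', ← hv] at hlt'
      omega
    rw [hxyempty]
    have hcrk : crk (Vof n A) v < pV n (Vof n A) := by
      rw [crk_lt_pV_iff hvV]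
      rw [lev_kap] at htop
      split at htop <;> omega
    unfold unskip
    rw [if_pos hcrk]
    simp

include hac in
lemma rk_eq_xy {z : Fin (2 * n + 1) × K n} (hz : z ∈ A) (hxy : z.2 = xx ∨ z.2 = yy) :
    z.1 ∈ XYW A ∧
      rk (Wof A) z.1 = pV n (Vof n A) + rk (XYW A) z.1 ∧ rk (XYW A) z.1 < tOf A := by
  have hmemXY : z.1 ∈ XYW A :=
    Finset.mem_image.mpr ⟨z, Finset.mem_filter.mpr ⟨hz, hxy⟩, rfl⟩
  refine ⟨hmemXY, ?_, tOf_eq_card_XYW ▸ rk_lt_card hmemXY⟩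
  have step1 : (Wof A).filter (· < z.1) =
      (A.filter (fun z' => ¬(z'.2 = xx ∨ z'.2 = yy) ∧ n < lev z'.2)).image Prod.fst ∪
        (XYW A).filter (· < z.1) := by
    ext a'
    rw [Finset.mem_filter, Finset.mem_union, Finset.mem_image, Finset.mem_filter]
    constructor
    · rintro ⟨ha', hlt⟩
      rcases Finset.mem_image.mp ha' with ⟨z', hz', rfl⟩
      have hc := cross hac hz' hz hlt
      rw [xy_lev hxy] at hc
      rcases Nat.lt_or_ge n (lev z'.2) with h' | h'
      · left
        refine ⟨z', Finset.mem_filter.mpr ⟨hz', ?_, h'⟩, rfl⟩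
        intro hxy'
        rw [xy_lev hxy'] at h'
        omega
      · right
        have hlev' : lev z'.2 = n := by omega
        exact ⟨Finset.mem_image.mpr
          ⟨z', Finset.mem_filter.mpr ⟨hz', lev_eq_n_cases hlev'⟩, rfl⟩, hlt⟩
    · rintro (⟨z', hz', rfl⟩ | ⟨ha', hlt⟩)
      · rw [Finset.mem_filter] at hz'
        refine ⟨Finset.mem_image.mpr ⟨z', hz'.1, rfl⟩, ?_⟩
        rcases lt_trichotomy z'.1 z.1 with h' | h' | h'
        · exact h'
        · exfalso
          have hne : z' ≠ z := by
            intro he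
            rw [he] at hz'
            exact hz'.2.1 hxy
          exact hz'.2.1 (same_coord hac hz'.1 hz h' hne).1
        · have := (cross hac hz hz'.1 h').1
          rw [xy_lev hxy] at this
          omega
      · rcases Finset.mem_image.mp ha' with ⟨z', hz', rfl⟩
        rw [Finset.mem_filter] at hz'
        exact ⟨Finset.mem_image.mpr ⟨z', hz'.1, rfl⟩, hlt⟩
  have hdisj : Disjoint
      ((A.filter (fun z' => ¬(z'.2 = xx ∨ z'.2 = yy) ∧ n < lev z'.2)).image Prod.fst)
      ((XYW A).filter (· < z.1)) := by
    rw [Finset.disjoint_left]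
    intro a' h1 h2
    rcases Finset.mem_image.mp h1 with ⟨z1, hz1, hfst1⟩
    rcases Finset.mem_image.mp (Finset.mem_of_mem_filter a' h2) with ⟨z2, hz2, hfst2⟩
    rw [Finset.mem_filter] at hz1 hz2
    have := fst_injOn_nonxy hac hz1.1 hz2.1 hz1.2.1 (hfst1.trans hfst2.symm)
    rw [this] at hz1
    exact hz1.2.1 hz2.2
  show (rk (Wof A) z.1 : ℕ) = _
  unfold rk
  rw [step1, Finset.card_union_of_disjoint hdisj]
  congr 1
  rw [count_nonxy hac (fun l => n < l)]
  unfold pV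
  congr 1
  apply Finset.filter_congr
  intro v' _
  rw [lev_kap]
  split <;> omega


include hac in
lemma encode_mem_fib {z : Fin (2 * n + 1) × K n} (hz : z ∈ A) :
    z.2 ∈ fib n (Vof n A) (blOf n A) (rk (Wof A) z.1) := by
  by_cases hxy : z.2 = xx ∨ z.2 = yy
  · rcases rk_eq_xy hac hz hxy with ⟨hmemXY, hrk, hlt⟩
    apply mem_fib.mpr
    right
    refine ⟨by omega, by simp; omega, ?_⟩
    rw [blOf_getD (by omega : rk (Wof A) z.1 - pV n (Vof n A) < tOf A)]
    apply Finset.mem_image.mpr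
    exact ⟨z, Finset.mem_filter.mpr ⟨hz, by omega⟩, rfl⟩
  · have hlev : lev z.2 ≠ n := fun h => hxy (lev_eq_n_cases h)
    rcases exists_kap hlev with ⟨v, hv⟩
    rcases rk_eq_nonxy hac hz hv with ⟨hvV, hrk⟩
    apply mem_fib.mpr
    left
    refine ⟨v, hvV, ?_, hv⟩
    unfold slot
    rw [blOf_length, hrk]

include hac in
theorem encode_eq : A = dec n (Vof n A) (Wof A) (blOf n A) := by
  ext z
  constructor
  · intro hz
    exact mem_dec.mpr ⟨Finset.mem_image.mpr ⟨z, hz, rfl⟩, encode_mem_fib hac hz⟩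
  · intro hz
    obtain ⟨haW, hfib⟩ := mem_dec.mp hz
    rcases mem_fib.mp hfib with ⟨v, hvV, hslot, hkap⟩ | ⟨h1, h2, h3⟩
    · have hmem : kap v ∈ A.image Prod.snd := by
        have := hvV
        unfold Vof at this
        rw [Finset.mem_filter] at this
        exact this.2
      rcases Finset.mem_image.mp hmem with ⟨z', hz', hsnd⟩
      rcases rk_eq_nonxy hac hz' hsnd.symm with ⟨_, hrk⟩
      have hfst : z'.1 = z.1 := by
        refine rk_injOn (W := Wof A) (Finset.mem_image.mpr ⟨z', hz', rfl⟩) haW ?_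
        rw [hrk, ← hslot]
        unfold slot
        rw [blOf_length]
      have : z = z' := Prod.ext hfst.symm (by rw [← hkap, hsnd])
      rw [this]
      exact hz'
    · rw [blOf_length] at h2
      rw [blOf_getD h2] at h3
      rcases Finset.mem_image.mp h3 with ⟨z', hz', hsnd⟩
      rw [Finset.mem_filter] at hz'
      have hfst : z'.1 = z.1 := by
        refine rk_injOn (W := Wof A) (Finset.mem_image.mpr ⟨z', hz'.1, rfl⟩) haW ?_
        rw [hz'.2]
        omega
      have : z = z' := Prod.ext hfst.symm hsnd.symm
      rw [this]
      exact hz'.1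

include hac in
lemma mid_rank_xy {z : Fin (2 * n + 1) × K n} (hz : z ∈ A) {r : ℕ} (hr : r < tOf A)
    (hrk : rk (Wof A) z.1 = pV n (Vof n A) + r) : z.2 = xx ∨ z.2 = yy := by
  by_contra hnxy
  have hlev : lev z.2 ≠ n := fun h => hnxy (lev_eq_n_cases h)
  rcases exists_kap hlev with ⟨v, hv⟩
  rcases rk_eq_nonxy hac hz hv with ⟨hvV, heq⟩
  unfold unskip at heq
  split at heq
  · omega
  · have := (crk_lt_pV_iff hvV)
    omega

include hac in
lemma encode_entry {r : ℕ} (hr : r < tOf A) :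
    ((blOf n A).getD r ∅).Nonempty ∧ (blOf n A).getD r ∅ ⊆ {xx, yy} := by
  rw [blOf_getD hr]
  constructor
  · rcases rk_surj (W := XYW A) (q := r) (by rw [← tOf_eq_card_XYW]; exact hr) with ⟨a, haXY, hrk⟩
    rcases Finset.mem_image.mp haXY with ⟨z', hz', hfst⟩
    rw [Finset.mem_filter] at hz'
    rcases rk_eq_xy hac hz'.1 hz'.2 with ⟨_, hrkW, _⟩
    refine ⟨z'.2, Finset.mem_image.mpr ⟨z', Finset.mem_filter.mpr ⟨hz'.1, ?_⟩, rfl⟩⟩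
    rw [hrkW, hfst, hrk]
  · intro u hu
    rcases Finset.mem_image.mp hu with ⟨z', hz', hsnd⟩
    rw [Finset.mem_filter] at hz'
    have := mid_rank_xy hac hz'.1 hr hz'.2
    rw [hsnd] at this
    rcases this with h | h <;> simp [h]

include hac in
lemma encode_allowed : Allowed (blOf n A) := by
  constructor
  · intro f hf
    rcases List.mem_iff_getElem.mp hf with ⟨r, hr, rfl⟩
    have hr' : r < tOf A := by simpa using hr
    have := encode_entry hac hr'
    rw [List.getD_eq_getElem _ _ hr] at this
    exact this
  · apply List.pairwise_iff_getElem.mpr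
    intro r r' hr hr' hrr
    have hr2 : r < tOf A := by simpa using hr
    have hr2' : r' < tOf A := by simpa using hr'
    rw [← List.getD_eq_getElem _ ∅ hr, ← List.getD_eq_getElem _ ∅ hr']
    rw [blOf_getD hr2, blOf_getD hr2']
    rw [Finset.disjoint_left]
    intro u h1 h2
    rcases Finset.mem_image.mp h1 with ⟨z1, hz1, hsnd1⟩
    rcases Finset.mem_image.mp h2 with ⟨z2, hz2, hsnd2⟩
    rw [Finset.mem_filter] at hz1 hz2
    have := snd_injOn hac hz1.1 hz2.1 (hsnd1.trans hsnd2.symm)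
    rw [this] at hz1
    omega

include hac in
lemma encode_cardW : (Wof A).card = (Vof n A).card + tOf A := by
  have hsplit : Wof A =
      (A.filter (fun z => ¬(z.2 = xx ∨ z.2 = yy) ∧ True)).image Prod.fst ∪ XYW A := by
    ext a
    unfold Wof XYW
    rw [Finset.mem_union, Finset.mem_image, Finset.mem_image, Finset.mem_image]
    constructor
    · rintro ⟨z, hz, rfl⟩
      by_cases hxy : z.2 = xx ∨ z.2 = yy
      · exact Or.inr ⟨z, Finset.mem_filter.mpr ⟨hz, hxy⟩, rfl⟩
      · exact Or.inl ⟨z, Finset.mem_filter.mpr ⟨hz, hxy, trivial⟩, rfl⟩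
    · rintro (⟨z, hz, rfl⟩ | ⟨z, hz, rfl⟩) <;>
        exact ⟨z, Finset.mem_of_mem_filter z hz, rfl⟩
  have hdisj : Disjoint
      ((A.filter (fun z => ¬(z.2 = xx ∨ z.2 = yy) ∧ True)).image Prod.fst) (XYW A) := by
    rw [Finset.disjoint_left]
    intro a h1 h2
    rcases Finset.mem_image.mp h1 with ⟨z1, hz1, hfst1⟩
    rcases Finset.mem_image.mp h2 with ⟨z2, hz2, hfst2⟩
    rw [Finset.mem_filter] at hz1 hz2
    have := fst_injOn_nonxy hac hz1.1 hz2.1 hz1.2.1 (hfst1.trans hfst2.symm)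
    rw [this] at hz1
    exact hz1.2.1 hz2.2
  rw [hsplit, Finset.card_union_of_disjoint hdisj, count_nonxy hac (fun _ => True),
    tOf_eq_card_XYW]
  simp

include hac in
lemma encode_card : A.card = (Vof n A).card + wt (blOf n A) := by
  have hsplit := Finset.card_filter_add_card_filter_not
    (s := A) (p := fun z => z.2 = xx ∨ z.2 = yy)
  have h1 : (A.filter (fun z => ¬(z.2 = xx ∨ z.2 = yy))).card = (Vof n A).card := by
    have hinj : Set.InjOn Prod.fst
        ((A.filter (fun z => ¬(z.2 = xx ∨ z.2 = yy) ∧ True)) : Set (Fin (2 * n + 1) × K n)) := by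
      intro z hz z' hz' h
      rw [Finset.coe_filter, Set.mem_setOf_eq] at hz hz'
      exact fst_injOn_nonxy hac hz.1 hz'.1 hz.2.1 h
    have := count_nonxy hac (fun _ => True)
    rw [Finset.card_image_of_injOn hinj] at this
    simpa using this
  have h2 : (A.filter (fun z => z.2 = xx ∨ z.2 = yy)).card = wt (blOf n A) := by
    rw [Finset.card_eq_sum_card_fiberwise
      (f := fun z => rk (XYW A) z.1) (t := Finset.range (tOf A))
      (fun z hz => by
        rw [Finset.mem_coe, Finset.mem_filter] at hz
        rw [Finset.mem_coe, Finset.mem_range, tOf_eq_card_XYW]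
        exact rk_lt_card (Finset.mem_image.mpr ⟨z, Finset.mem_filter.mpr hz, rfl⟩))]
    unfold wt
    rw [← sum_range_getD (blOf n A) ∅ Finset.card, blOf_length]
    apply Finset.sum_congr rfl
    intro r hr
    rw [Finset.mem_range] at hr
    rw [blOf_getD hr]
    have hfe : (A.filter (fun z => z.2 = xx ∨ z.2 = yy)).filter
        (fun z => rk (XYW A) z.1 = r) =
        A.filter (fun z => rk (Wof A) z.1 = pV n (Vof n A) + r) := by
      ext z
      simp only [Finset.mem_filter, and_assoc]
      constructor
      · rintro ⟨hz, hxy, hrk⟩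
        rcases rk_eq_xy hac hz hxy with ⟨_, hrkW, _⟩
        exact ⟨hz, by omega⟩
      · rintro ⟨hz, hrk⟩
        have hxy := mid_rank_xy hac hz hr hrk
        rcases rk_eq_xy hac hz hxy with ⟨_, hrkW, _⟩
        exact ⟨hz, hxy, by omega⟩
    rw [hfe]
    rw [Finset.card_image_of_injOn (fun z hz z' hz' h => by
      rw [Finset.coe_filter, Set.mem_setOf_eq] at hz hz'
      exact snd_injOn hac hz.1 hz'.1 h)]
  omega

end Encode


/-! ### counting each class -/

open Classical in
lemma class_card (i : ℕ) (bl₀ : List (Finset (K n))) (hA : Allowed bl₀) (hwt : wt bl₀ ≤ i) :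
    (Finset.univ.filter (fun A : Finset (Fin (2 * n + 1) × K n) =>
      (IsAntichain (· ≤ ·) (A : Set (Fin (2 * n + 1) × K n)) ∧ A.card = i) ∧
        blOf n A = bl₀)).card =
      (2 * n).choose (i - wt bl₀) * (2 * n + 1).choose (i - wt bl₀ + bl₀.length) := by
  have hcard : ((Finset.powersetCard (i - wt bl₀) (Finset.univ : Finset (Fin (2 * n)))) ×ˢ
      (Finset.powersetCard (i - wt bl₀ + bl₀.length)
        (Finset.univ : Finset (Fin (2 * n + 1))))).card =
      (2 * n).choose (i - wt bl₀) * (2 * n + 1).choose (i - wt bl₀ + bl₀.length) := by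
    rw [Finset.card_product, Finset.card_powersetCard, Finset.card_powersetCard]
    simp
  rw [← hcard]
  apply Finset.card_bij' (i := fun A _ => (Vof n A, Wof A))
    (j := fun d _ => dec n d.1 d.2 bl₀)
  · intro A hA'
    rw [Finset.mem_filter] at hA'
    obtain ⟨_, ⟨hac, hcardA⟩, hbl⟩ := hA'
    have h1 := encode_card hac
    have h2 := encode_cardW hac
    have h3 : tOf A = bl₀.length := by rw [← blOf_length (n := n), hbl]
    rw [hbl] at h1
    rw [Finset.mem_product, Finset.mem_powersetCard_univ, Finset.mem_powersetCard_univ]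
    dsimp only
    constructor
    · omega
    · omega
  · intro d hd
    rw [Finset.mem_product, Finset.mem_powersetCard_univ, Finset.mem_powersetCard_univ] at hd
    have hW : d.2.card = d.1.card + bl₀.length := by omega
    rw [Finset.mem_filter]
    refine ⟨Finset.mem_univ _, ⟨dec_antichain hA, ?_⟩, blOf_dec hA hW⟩
    rw [card_dec hA hW]
    omega
  · intro A hA'
    rw [Finset.mem_filter] at hA'
    obtain ⟨_, ⟨hac, _⟩, hbl⟩ := hA'
    rw [← hbl]
    exact (encode_eq hac).symm
  · intro d hd
    rw [Finset.mem_product, Finset.mem_powersetCard_univ, Finset.mem_powersetCard_univ] at hd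
    have hW : d.2.card = d.1.card + bl₀.length := by omega
    rw [Vof_dec hA hW, Wof_dec hA hW]

/-! ### classification of allowed block lists -/

lemma card_pair_xy : ({xx, yy} : Finset (K n)).card = 2 := Finset.card_pair xx_ne_yy

lemma entry_cases {f : Finset (K n)} (hne : f.Nonempty) (hsub : f ⊆ {xx, yy}) :
    f = {xx} ∨ f = {yy} ∨ f = {xx, yy} := by
  by_cases hx : xx ∈ f <;> by_cases hy : yy ∈ f
  · right; right
    apply Finset.Subset.antisymm hsub
    intro u hu
    rcases Finset.mem_insert.mp hu with rfl | hu'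
    · exact hx
    · rw [Finset.mem_singleton.mp hu']; exact hy
  · left
    apply Finset.Subset.antisymm
    · intro u hu
      rcases Finset.mem_insert.mp (hsub hu) with rfl | hu'
      · exact Finset.mem_singleton_self _
      · rw [Finset.mem_singleton.mp hu'] at hu
        exact absurd hu hy
    · intro u hu
      rw [Finset.mem_singleton.mp hu]
      exact hx
  · right; left
    apply Finset.Subset.antisymm
    · intro u hu
      rcases Finset.mem_insert.mp (hsub hu) with rfl | hu'
      · exact absurd hu hx
      · exact hu'
    · intro u hu
      rw [Finset.mem_singleton.mp hu]
      exact hy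
  · exfalso
    rcases hne with ⟨u, hu⟩
    rcases Finset.mem_insert.mp (hsub hu) with rfl | hu'
    · exact hx hu
    · rw [Finset.mem_singleton.mp hu'] at hu
      exact hy hu

lemma allowed_cases {bl : List (Finset (K n))} (h : Allowed bl) :
    bl = [] ∨ bl = [{xx}] ∨ bl = [{yy}] ∨ bl = [{xx, yy}] ∨
      bl = [{xx}, {yy}] ∨ bl = [{yy}, {xx}] := by
  obtain ⟨hent, hpw⟩ := h
  match bl with
  | [] => exact Or.inl rfl
  | [f] =>
    rcases entry_cases (hent f (by simp)).1 (hent f (by simp)).2 with rfl | rfl | rfl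
    · exact Or.inr (Or.inl rfl)
    · exact Or.inr (Or.inr (Or.inl rfl))
    · exact Or.inr (Or.inr (Or.inr (Or.inl rfl)))
  | [f, g] =>
    have hdisj : Disjoint f g := (List.pairwise_cons.mp hpw).1 g (by simp)
    rcases entry_cases (hent f (by simp)).1 (hent f (by simp)).2 with rfl | rfl | rfl <;>
      rcases entry_cases (hent g (by simp)).1 (hent g (by simp)).2 with rfl | rfl | rfl
    · exact absurd rfl (Finset.disjoint_singleton.mp hdisj)
    · exact Or.inr (Or.inr (Or.inr (Or.inr (Or.inl rfl))))
    · exact absurd hdisj (by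
        rw [Finset.disjoint_left]
        push_neg
        exact ⟨xx, by simp, by simp⟩)
    · exact Or.inr (Or.inr (Or.inr (Or.inr (Or.inr rfl))))
    · exact absurd rfl (Finset.disjoint_singleton.mp hdisj)
    · exact absurd hdisj (by
        rw [Finset.disjoint_left]
        push_neg
        exact ⟨yy, by simp, by simp⟩)
    · exact absurd hdisj (by
        rw [Finset.disjoint_left]
        push_neg
        exact ⟨xx, by simp, by simp⟩)
    · exact absurd hdisj (by
        rw [Finset.disjoint_left]
        push_neg
        exact ⟨yy, by simp, by simp⟩)
    · exact absurd hdisj (by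
        rw [Finset.disjoint_left]
        push_neg
        exact ⟨xx, by simp, by simp⟩)
  | f :: g :: h' :: t =>
    exfalso
    have h1 : Disjoint f g := (List.pairwise_cons.mp hpw).1 g (by simp)
    have h2 : Disjoint f h' := (List.pairwise_cons.mp hpw).1 h' (by simp)
    have h3 : Disjoint g h' :=
      (List.pairwise_cons.mp (List.pairwise_cons.mp hpw).2).1 h' (by simp)
    have hf := entry_cases (hent f (by simp)).1 (hent f (by simp)).2
    have hg := entry_cases (hent g (by simp)).1 (hent g (by simp)).2
    have hh := entry_cases (hent h' (by simp)).1 (hent h' (by simp)).2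
    have key : ∀ s₁ s₂ : Finset (K n),
        s₁ = {xx} ∨ s₁ = {yy} ∨ s₁ = {xx, yy} →
        s₂ = {xx} ∨ s₂ = {yy} ∨ s₂ = {xx, yy} →
        Disjoint s₁ s₂ → (xx ∈ s₁ → False) ∨ (xx ∈ s₂ → False) := by
      intro s₁ s₂ h₁ h₂ hd
      by_cases hx1 : xx ∈ s₁
      · right
        intro hx2
        exact Finset.disjoint_left.mp hd hx1 hx2
      · left; exact fun h => hx1 h
    -- each of f, g, h' contains xx or yy; three pairwise disjoint nonempty subsets of a pair
    have hmem : ∀ s : Finset (K n), s = {xx} ∨ s = {yy} ∨ s = {xx, yy} →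
        xx ∈ s ∨ yy ∈ s := by
      rintro s (rfl | rfl | rfl) <;> simp
    rcases hmem f hf with hfx | hfy <;> rcases hmem g hg with hgx | hgy <;>
      rcases hmem h' hh with hhx | hhy
    · exact Finset.disjoint_left.mp h1 hfx hgx
    · exact Finset.disjoint_left.mp h1 hfx hgx
    · exact Finset.disjoint_left.mp h2 hfx hhx
    · exact Finset.disjoint_left.mp h3 hgy hhy
    · exact Finset.disjoint_left.mp h3 hgx hhx
    · exact Finset.disjoint_left.mp h2 hfy hhy
    · exact Finset.disjoint_left.mp h1 hfy hgy
    · exact Finset.disjoint_left.mp h1 hfy hgy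


/-! ### the six allowed block lists -/

lemma allowed_nil : Allowed ([] : List (Finset (K n))) := ⟨by simp, by simp⟩

lemma allowed_sx : Allowed [({xx} : Finset (K n))] := by
  refine ⟨?_, by simp⟩
  intro f hf
  rw [List.mem_singleton] at hf
  subst hf
  exact ⟨⟨xx, by simp⟩, by intro u hu; rw [Finset.mem_singleton] at hu; simp [hu]⟩

lemma allowed_sy : Allowed [({yy} : Finset (K n))] := by
  refine ⟨?_, by simp⟩
  intro f hf
  rw [List.mem_singleton] at hf
  subst hf
  exact ⟨⟨yy, by simp⟩, by intro u hu; rw [Finset.mem_singleton] at hu; simp [hu]⟩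

lemma allowed_pair : Allowed [({xx, yy} : Finset (K n))] := by
  refine ⟨?_, by simp⟩
  intro f hf
  rw [List.mem_singleton] at hf
  subst hf
  exact ⟨⟨xx, by simp⟩, le_refl _⟩

lemma allowed_xy2 : Allowed [({xx} : Finset (K n)), {yy}] := by
  constructor
  · intro f hf
    rcases List.mem_cons.mp hf with rfl | hf'
    · exact ⟨⟨xx, by simp⟩, by intro u hu; rw [Finset.mem_singleton] at hu; simp [hu]⟩
    · rw [List.mem_singleton] at hf'
      subst hf'
      exact ⟨⟨yy, by simp⟩, by intro u hu; rw [Finset.mem_singleton] at hu; simp [hu]⟩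
  · refine List.pairwise_cons.mpr ⟨?_, by simp⟩
    intro g hg
    rw [List.mem_singleton] at hg
    subst hg
    exact Finset.disjoint_singleton.mpr xx_ne_yy

lemma allowed_yx2 : Allowed [({yy} : Finset (K n)), {xx}] := by
  constructor
  · intro f hf
    rcases List.mem_cons.mp hf with rfl | hf'
    · exact ⟨⟨yy, by simp⟩, by intro u hu; rw [Finset.mem_singleton] at hu; simp [hu]⟩
    · rw [List.mem_singleton] at hf'
      subst hf'
      exact ⟨⟨xx, by simp⟩, by intro u hu; rw [Finset.mem_singleton] at hu; simp [hu]⟩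
  · refine List.pairwise_cons.mpr ⟨?_, by simp⟩
    intro g hg
    rw [List.mem_singleton] at hg
    subst hg
    exact Finset.disjoint_singleton.mpr yy_ne_xx

@[simp] lemma wt_nil : wt ([] : List (Finset (K n))) = 0 := rfl
lemma wt_sx : wt [({xx} : Finset (K n))] = 1 := by simp [wt]
lemma wt_sy : wt [({yy} : Finset (K n))] = 1 := by simp [wt]
lemma wt_pair : wt [({xx, yy} : Finset (K n))] = 2 := by simp [wt, card_pair_xy]
lemma wt_xy2 : wt [({xx} : Finset (K n)), {yy}] = 2 := by simp [wt]
lemma wt_yx2 : wt [({yy} : Finset (K n)), {xx}] = 2 := by simp [wt]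

lemma sx_ne_pair : ({xx} : Finset (K n)) ≠ {xx, yy} := fun h => by
  have := congrArg Finset.card h
  rw [card_pair_xy] at this
  simp at this

lemma sy_ne_pair : ({yy} : Finset (K n)) ≠ {xx, yy} := fun h => by
  have := congrArg Finset.card h
  rw [card_pair_xy] at this
  simp at this

lemma sx_ne_sy : ({xx} : Finset (K n)) ≠ {yy} := by
  rw [Ne, Finset.singleton_inj]
  exact xx_ne_yy

end AC

open AC in
theorem antichain_count_chain_K' (n i : ℕ) (h2 : 2 ≤ i) :
    Nat.card {A : Finset (Fin (2 * n + 1) × K n) //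
        IsAntichain (· ≤ ·) (A : Set (Fin (2 * n + 1) × K n)) ∧ A.card = i} =
      (2 * n).choose (i - 2) * (2 * n + 1).choose (i - 1) +
        (2 * n).choose i * (2 * n + 1).choose i +
        2 * ((2 * n + 1).choose (i - 1) * (2 * n + 1).choose i) := by
  classical
  rw [Nat.card_eq_fintype_card, Fintype.card_subtype]
  have hmem : ∀ A ∈ (Finset.univ.filter (fun A : Finset (Fin (2 * n + 1) × K n) =>
      IsAntichain (· ≤ ·) (A : Set (Fin (2 * n + 1) × K n)) ∧ A.card = i)),
      blOf n A ∈ ({[], [{xx}], [{yy}], [{xx, yy}], [{xx}, {yy}], [{yy}, {xx}]} :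
        Finset (List (Finset (K n)))) := by
    intro A hA
    rw [Finset.mem_filter] at hA
    rcases allowed_cases (encode_allowed hA.2.1) with h | h | h | h | h | h <;> simp [h]
  rw [Finset.card_eq_sum_card_fiberwise hmem]
  have hterm : ∀ bl₀ : List (Finset (K n)), Allowed bl₀ → wt bl₀ ≤ i →
      ((Finset.univ.filter (fun A : Finset (Fin (2 * n + 1) × K n) =>
        IsAntichain (· ≤ ·) (A : Set (Fin (2 * n + 1) × K n)) ∧ A.card = i)).filter
          (fun A => blOf n A = bl₀)).card =
      (2 * n).choose (i - wt bl₀) * (2 * n + 1).choose (i - wt bl₀ + bl₀.length) := by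
    intro bl₀ hA hw
    rw [Finset.filter_filter]
    exact class_card i bl₀ hA hw
  rw [show ({[], [{xx}], [{yy}], [{xx, yy}], [{xx}, {yy}], [{yy}, {xx}]} :
      Finset (List (Finset (K n)))) =
      insert [] (insert [{xx}] (insert [{yy}] (insert [{xx, yy}]
        (insert [{xx}, {yy}] {[{yy}, {xx}]})))) from rfl]
  rw [Finset.sum_insert (by simp), Finset.sum_insert (by
      simp [sx_ne_sy, sx_ne_pair]),
    Finset.sum_insert (by simp [sx_ne_sy.symm, sy_ne_pair]),
    Finset.sum_insert (by simp [sx_ne_pair.symm, sy_ne_pair.symm]),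
    Finset.sum_insert (by simp [sx_ne_sy]), Finset.sum_singleton]
  rw [hterm [] allowed_nil (by simp),
    hterm [{xx}] allowed_sx (by rw [wt_sx]; omega),
    hterm [{yy}] allowed_sy (by rw [wt_sy]; omega),
    hterm [{xx, yy}] allowed_pair (by rw [wt_pair]; omega),
    hterm [{xx}, {yy}] allowed_xy2 (by rw [wt_xy2]; omega),
    hterm [{yy}, {xx}] allowed_yx2 (by rw [wt_yx2]; omega)]
  simp only [wt_nil, wt_sx, wt_sy, wt_pair, wt_xy2, wt_yx2, List.length_nil,
    List.length_cons, List.length_singleton, Nat.sub_zero, Nat.add_zero]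
  obtain ⟨j, rfl⟩ := Nat.exists_eq_add_of_le h2
  have e1 : 2 + j - 1 = j + 1 := by omega
  have e2 : 2 + j - 2 = j := by omega
  have e3 : j + 1 + 1 = j + 2 := by omega
  have e5 : j + 2 = 2 + j := by omega
  rw [e1, e2, e3]
  have hp : (2 * n + 1).choose (j + 1) = (2 * n).choose j + (2 * n).choose (j + 1) :=
    Nat.choose_succ_succ (2 * n) j
  rw [hp, e5]
  ring

/-- For `2 ≤ i ≤ n`, the number of antichains of size `i` in `[2n+1] × K_n` equals
`C(2n,i-2) C(2n+1,i-1) + C(2n,i) C(2n+1,i) + 2 C(2n+1,i-1) C(2n+1,i)`. -/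
theorem antichain_count_chain_K (n i : ℕ) (h2 : 2 ≤ i) (hn : i ≤ n) :
    Nat.card {A : Finset (Fin (2 * n + 1) × K n) //
        IsAntichain (· ≤ ·) (A : Set (Fin (2 * n + 1) × K n)) ∧ A.card = i} =
      (2 * n).choose (i - 2) * (2 * n + 1).choose (i - 1) +
        (2 * n).choose i * (2 * n + 1).choose i +
        2 * ((2 * n + 1).choose (i - 1) * (2 * n + 1).choose i) :=
  antichain_count_chain_K' n i h2
end

section
/- The antichain polynomial 𝒩_{[m]×K_n}(t) is monic (has leading coefficient 1 in its top degree m+1) if and only if m = 1 or m = 2n+1. -/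
namespace KAux

variable {n : ℕ}

instance : DecidableEq (K n) :=
  inferInstanceAs (DecidableEq (Fin n ⊕ ((Fin 1 ⊕ Fin 1) ⊕ Fin n)))

def ka (n : ℕ) (i : Fin n) : K n := toLex (Sum.inl i)
def kx (n : ℕ) : K n := toLex (Sum.inr (toLex (Sum.inl (Sum.inl 0))))
def ky (n : ℕ) : K n := toLex (Sum.inr (toLex (Sum.inl (Sum.inr 0))))
def kb (n : ℕ) (j : Fin n) : K n := toLex (Sum.inr (toLex (Sum.inr j)))

def rank (k : K n) : ℕ :=
  match k with
  | Sum.inl i => (i : ℕ)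
  | Sum.inr (Sum.inl _) => n
  | Sum.inr (Sum.inr j) => n + 1 + (j : ℕ)

@[simp] lemma rank_ka (i : Fin n) : rank (ka n i) = (i : ℕ) := rfl
@[simp] lemma rank_kx : rank (kx n) = n := rfl
@[simp] lemma rank_ky : rank (ky n) = n := rfl
@[simp] lemma rank_kb (j : Fin n) : rank (kb n j) = n + 1 + (j : ℕ) := rfl

lemma cases_K (k : K n) : (∃ i, k = ka n i) ∨ k = kx n ∨ k = ky n ∨ ∃ j, k = kb n j := by
  rcases k with i | m
  · exact Or.inl ⟨i, rfl⟩
  · rcases m with (z | z) | j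
    · exact Or.inr (Or.inl (by simp [kx, Subsingleton.elim z 0]; rfl))
    · exact Or.inr (Or.inr (Or.inl (by simp [ky, Subsingleton.elim z 0]; rfl)))
    · exact Or.inr (Or.inr (Or.inr ⟨j, rfl⟩))

lemma rank_le (k : K n) : rank k ≤ 2 * n := by
  rcases cases_K k with ⟨i, rfl⟩ | rfl | rfl | ⟨j, rfl⟩ <;> first
    | (have := i.isLt; simp; omega)
    | (have := j.isLt; simp; omega)
    | (simp; omega)

@[simp] lemma ka_inj {i i' : Fin n} : ka n i = ka n i' ↔ i = i' := by
  unfold ka; rw [toLex_inj, Sum.inl.injEq]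
@[simp] lemma kb_inj {j j' : Fin n} : kb n j = kb n j' ↔ j = j' := by
  unfold kb; rw [toLex_inj, Sum.inr.injEq, toLex_inj, Sum.inr.injEq]
@[simp] lemma kx_ne_ky : kx n ≠ ky n := by
  unfold kx ky; rw [Ne, toLex_inj, Sum.inr.injEq, toLex_inj]; simp
@[simp] lemma ka_ne_kx {i : Fin n} : ka n i ≠ kx n := by
  unfold ka kx; rw [Ne, toLex_inj]; simp
@[simp] lemma ka_ne_ky {i : Fin n} : ka n i ≠ ky n := by
  unfold ka ky; rw [Ne, toLex_inj]; simp
@[simp] lemma ka_ne_kb {i j : Fin n} : ka n i ≠ kb n j := by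
  unfold ka kb; rw [Ne, toLex_inj]; simp
@[simp] lemma kx_ne_kb {j : Fin n} : kx n ≠ kb n j := by
  unfold kx kb; rw [Ne, toLex_inj, Sum.inr.injEq, toLex_inj]; simp
@[simp] lemma ky_ne_kb {j : Fin n} : ky n ≠ kb n j := by
  unfold ky kb; rw [Ne, toLex_inj, Sum.inr.injEq, toLex_inj]; simp


@[simp] lemma kx_ne_ka {i : Fin n} : kx n ≠ ka n i := fun h => ka_ne_kx h.symm
@[simp] lemma ky_ne_ka {i : Fin n} : ky n ≠ ka n i := fun h => ka_ne_ky h.symm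
@[simp] lemma kb_ne_ka {i j : Fin n} : kb n j ≠ ka n i := fun h => ka_ne_kb h.symm
@[simp] lemma kb_ne_kx {j : Fin n} : kb n j ≠ kx n := fun h => kx_ne_kb h.symm
@[simp] lemma kb_ne_ky {j : Fin n} : kb n j ≠ ky n := fun h => ky_ne_kb h.symm
@[simp] lemma ky_ne_kx : ky n ≠ kx n := fun h => kx_ne_ky h.symm

@[simp] lemma ka_le_ka {i i' : Fin n} : ka n i ≤ ka n i' ↔ i ≤ i' := Sum.Lex.inl_le_inl_iff
@[simp] lemma ka_le_kx {i : Fin n} : ka n i ≤ kx n := Sum.Lex.inl_le_inr _ _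
@[simp] lemma ka_le_ky {i : Fin n} : ka n i ≤ ky n := Sum.Lex.inl_le_inr _ _
@[simp] lemma ka_le_kb {i j : Fin n} : ka n i ≤ kb n j := Sum.Lex.inl_le_inr _ _
@[simp] lemma not_kx_le_ka {i : Fin n} : ¬ kx n ≤ ka n i := Sum.Lex.not_inr_le_inl
@[simp] lemma not_ky_le_ka {i : Fin n} : ¬ ky n ≤ ka n i := Sum.Lex.not_inr_le_inl
@[simp] lemma not_kb_le_ka {i j : Fin n} : ¬ kb n j ≤ ka n i := Sum.Lex.not_inr_le_inl
@[simp] lemma kx_le_kx : kx n ≤ kx n := le_refl _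
@[simp] lemma ky_le_ky : ky n ≤ ky n := le_refl _
@[simp] lemma not_kx_le_ky : ¬ kx n ≤ ky n := by
  unfold kx ky
  rw [Sum.Lex.inr_le_inr_iff, Sum.Lex.inl_le_inl_iff]
  exact Sum.not_inl_le_inr
@[simp] lemma not_ky_le_kx : ¬ ky n ≤ kx n := by
  unfold kx ky
  rw [Sum.Lex.inr_le_inr_iff, Sum.Lex.inl_le_inl_iff]
  exact Sum.not_inr_le_inl
@[simp] lemma kx_le_kb {j : Fin n} : kx n ≤ kb n j := by
  unfold kx kb; rw [Sum.Lex.inr_le_inr_iff]; exact Sum.Lex.inl_le_inr _ _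
@[simp] lemma ky_le_kb {j : Fin n} : ky n ≤ kb n j := by
  unfold ky kb; rw [Sum.Lex.inr_le_inr_iff]; exact Sum.Lex.inl_le_inr _ _
@[simp] lemma not_kb_le_kx {j : Fin n} : ¬ kb n j ≤ kx n := by
  unfold kx kb; rw [Sum.Lex.inr_le_inr_iff]; exact Sum.Lex.not_inr_le_inl
@[simp] lemma not_kb_le_ky {j : Fin n} : ¬ kb n j ≤ ky n := by
  unfold ky kb; rw [Sum.Lex.inr_le_inr_iff]; exact Sum.Lex.not_inr_le_inl
@[simp] lemma kb_le_kb {j j' : Fin n} : kb n j ≤ kb n j' ↔ j ≤ j' := by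
  unfold kb; rw [Sum.Lex.inr_le_inr_iff, Sum.Lex.inr_le_inr_iff]

lemma le_iff_K (k k' : K n) : k ≤ k' ↔ rank k < rank k' ∨ k = k' := by
  rcases cases_K k with ⟨i, rfl⟩ | rfl | rfl | ⟨j, rfl⟩ <;>
    rcases cases_K k' with ⟨i', rfl⟩ | rfl | rfl | ⟨j', rfl⟩ <;>
      first
        | (have := i.isLt; simp; omega)
        | (have := j.isLt; simp; omega)
        | (have := i'.isLt; simp; omega)
        | (have := j'.isLt; simp; omega)
        | (simp; omega)
        | simp

lemma eq_or_xy {k k' : K n} (h : rank k = rank k') :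
    k = k' ∨ (k = kx n ∧ k' = ky n) ∨ (k = ky n ∧ k' = kx n) := by
  rcases cases_K k with ⟨i, rfl⟩ | rfl | rfl | ⟨j, rfl⟩ <;>
    rcases cases_K k' with ⟨i', rfl⟩ | rfl | rfl | ⟨j', rfl⟩ <;>
      first
        | (left; simp at h ⊢; omega)
        | (have := i.isLt; simp at h; omega)
        | (have := j.isLt; simp at h; omega)
        | (have := i'.isLt; simp at h; omega)
        | (have := j'.isLt; simp at h; omega)
        | simp


def unrank (n : ℕ) (j : Fin (2 * n + 1)) : K n :=
  if h : (j : ℕ) < n then ka n ⟨j, h⟩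
  else if h' : (j : ℕ) = n then kx n
  else kb n ⟨(j : ℕ) - (n + 1), by have := j.isLt; omega⟩

@[simp] lemma rank_unrank (j : Fin (2 * n + 1)) : rank (unrank n j) = (j : ℕ) := by
  unfold unrank
  split_ifs with h h'
  · simp
  · simp [h']
  · have := j.isLt; simp; omega

@[simp] lemma unrank_ne_ky (j : Fin (2 * n + 1)) : unrank n j ≠ ky n := by
  unfold unrank; split_ifs <;> simp

lemma unrank_rank {k : K n} (hk : k ≠ ky n) (h : rank k < 2 * n + 1) :
    unrank n ⟨rank k, h⟩ = k := by
  have h1 : rank (unrank n ⟨rank k, h⟩) = rank k := by simp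
  rcases eq_or_xy h1 with h2 | ⟨h2, h3⟩ | ⟨h2, _⟩
  · exact h2
  · exact absurd h3 hk
  · exact absurd h2 (unrank_ne_ky _)

variable {m : ℕ}

open Finset in
def phi (n : ℕ) (r : Fin m → Fin (2 * n + 1)) : Finset (Fin m × K n) :=
  (univ.image fun v => (v, unrank n (r v))) ∪
    ((univ.filter fun v => (r v : ℕ) = n).image fun v => (v, ky n))

lemma mem_phi {r : Fin m → Fin (2 * n + 1)} {p : Fin m × K n} :
    p ∈ phi n r ↔ (∃ v, p = (v, unrank n (r v))) ∨ (∃ v, (r v : ℕ) = n ∧ p = (v, ky n)) := by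
  simp [phi, eq_comm (a := p)]

lemma phi_antichain (r : Fin m → Fin (2 * n + 1)) (hr : StrictAnti r) :
    IsAntichain (· ≤ ·) (phi n r : Set (Fin m × K n)) := by
  intro p hp q hq hne hle
  rw [Finset.mem_coe, mem_phi] at hp hq
  obtain ⟨hle1, hle2⟩ := Prod.le_def.mp hle
  rcases hp with ⟨v, rfl⟩ | ⟨v, hv, rfl⟩ <;> rcases hq with ⟨w, rfl⟩ | ⟨w, hw, rfl⟩
  · simp only at hle1 hle2
    rcases lt_or_eq_of_le hle1 with h | h
    · have h2 := hr h
      rcases (le_iff_K _ _).mp hle2 with h3 | h3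
      · simp only [rank_unrank] at h3
        exact absurd h3 (by have := Fin.lt_def.mp h2; omega)
      · have : rank (unrank n (r v)) = rank (unrank n (r w)) := by rw [h3]
        simp only [rank_unrank] at this
        exact absurd (Fin.lt_def.mp h2) (by omega)
    · exact hne (by rw [h])
  · rcases (le_iff_K _ _).mp hle2 with h3 | h3
    · simp only [rank_unrank, rank_ky] at h3
      have h4 : r w ≤ r v := hr.antitone hle1
      have := Fin.le_def.mp h4
      omega
    · exact absurd h3 (unrank_ne_ky _)
  · rcases (le_iff_K _ _).mp hle2 with h3 | h3
    · simp only [rank_unrank, rank_ky] at h3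
      have h4 : r w ≤ r v := hr.antitone hle1
      have := Fin.le_def.mp h4
      omega
    · exact absurd h3.symm (unrank_ne_ky _)
  · have : r v = r w := Fin.ext (by omega)
    exact hne (by rw [hr.injective this])

open Finset in
lemma phi_card (r : Fin m → Fin (2 * n + 1)) (hr : StrictAnti r)
    (hv : ∃ v, (r v : ℕ) = n) : (phi n r).card = m + 1 := by
  obtain ⟨v₀, hv₀⟩ := hv
  have hdis : Disjoint (univ.image fun v : Fin m => (v, unrank n (r v)))
      ((univ.filter fun v => (r v : ℕ) = n).image fun v => (v, ky n)) := by
    rw [Finset.disjoint_left]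
    rintro p hp hq
    simp only [mem_image, mem_univ, true_and, mem_filter] at hp hq
    obtain ⟨v, rfl⟩ := hp
    obtain ⟨w, _, hw⟩ := hq
    have := congrArg Prod.snd hw
    exact unrank_ne_ky (r v) this.symm
  have hfil : (univ.filter fun v : Fin m => (r v : ℕ) = n) = {v₀} := by
    ext w
    simp only [mem_filter, mem_univ, true_and, mem_singleton]
    constructor
    · intro hw
      exact hr.injective (Fin.ext (by omega))
    · rintro rfl; exact hv₀
  rw [phi, card_union_of_disjoint hdis, hfil]
  rw [card_image_of_injective _ (fun v w h => (Prod.mk.injEq _ _ _ _).mp h |>.1)]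
  simp


open Finset

def wfun (R : Finset (Fin (2 * n + 1))) (h : R.card = m) : Fin m → Fin (2 * n + 1) :=
  fun v => R.orderEmbOfFin h v.rev

lemma wfun_strictAnti (R : Finset (Fin (2 * n + 1))) (h : R.card = m) :
    StrictAnti (wfun R h) := fun _ _ hvw =>
  (R.orderEmbOfFin h).strictMono (Fin.rev_lt_rev.mpr hvw)

lemma image_wfun (R : Finset (Fin (2 * n + 1))) (h : R.card = m) :
    univ.image (wfun R h) = R := by
  ext j
  simp only [mem_image, mem_univ, true_and]
  constructor
  · rintro ⟨v, rfl⟩; exact Finset.orderEmbOfFin_mem R h _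
  · intro hj
    have : j ∈ Set.range (R.orderEmbOfFin h) := by
      rw [Finset.range_orderEmbOfFin]; exact hj
    obtain ⟨i, hi⟩ := this
    exact ⟨i.rev, by rw [wfun, Fin.rev_rev, hi]⟩

def nmid (n : ℕ) : Fin (2 * n + 1) := ⟨n, by omega⟩

lemma exists_wfun_eq {R : Finset (Fin (2 * n + 1))} {h : R.card = m}
    (hn : nmid n ∈ R) : ∃ v, (wfun R h v : ℕ) = n := by
  have : nmid n ∈ Set.range (R.orderEmbOfFin h) := by
    rw [Finset.range_orderEmbOfFin]; exact hn
  obtain ⟨i, hi⟩ := this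
  exact ⟨i.rev, by rw [wfun, Fin.rev_rev, hi]; rfl⟩

lemma phi_fun_inj {r r' : Fin m → Fin (2 * n + 1)} (h : phi n r = phi n r') : r = r' := by
  funext v
  have h1 : (v, unrank n (r v)) ∈ phi n r' := by
    rw [← h]; exact mem_phi.mpr (Or.inl ⟨v, rfl⟩)
  rcases mem_phi.mp h1 with ⟨w, hw⟩ | ⟨w, _, hw⟩
  · obtain ⟨h2, h3⟩ := Prod.mk.injEq .. ▸ hw
    subst h2
    have h4 := congrArg rank h3
    simp only [rank_unrank] at h4
    exact Fin.ext h4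
  · exact absurd (congrArg Prod.snd hw) (unrank_ne_ky (r v))

lemma cardX_eq (m n : ℕ) :
    Nat.card {A : Finset (Fin m × K n) //
        IsAntichain (· ≤ ·) (A : Set (Fin m × K n)) ∧ A.card = m + 1} =
    Nat.card {R : Finset (Fin (2 * n + 1)) // R.card = m ∧ nmid n ∈ R} := by
  classical
  refine (Nat.card_eq_of_bijective
    (fun R => ⟨phi n (wfun R.1 R.2.1), phi_antichain _ (wfun_strictAnti _ _),
      phi_card _ (wfun_strictAnti _ _) (exists_wfun_eq R.2.2)⟩) ⟨?_, ?_⟩).symm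
  · rintro ⟨R, hc, hn'⟩ ⟨R', hc', hn''⟩ hRR
    have h1 : phi n (wfun R hc) = phi n (wfun R' hc') := congrArg Subtype.val hRR
    have h2 := phi_fun_inj h1
    apply Subtype.ext
    calc R = univ.image (wfun R hc) := (image_wfun R hc).symm
    _ = univ.image (wfun R' hc') := by rw [h2]
    _ = R' := image_wfun R' hc'
  · rintro ⟨A, hA, hcard⟩
    -- split A into the ky part and the rest
    have hCle : (A.filter (fun p => p.2 = ky n)).card ≤ 1 := by
      rw [Finset.card_le_one]
      intro p hp q hq
      rw [Finset.mem_filter] at hp hq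
      rcases le_total p.1 q.1 with h | h
      · exact hA.eq hp.1 hq.1 (Prod.le_def.mpr ⟨h, by rw [hp.2, hq.2]⟩)
      · exact (hA.eq hq.1 hp.1 (Prod.le_def.mpr ⟨h, by rw [hp.2, hq.2]⟩)).symm
    have hBinj : Set.InjOn Prod.fst ((A.filter (fun p => p.2 ≠ ky n)) : Set (Fin m × K n)) := by
      intro p hp q hq hpq
      rw [Finset.mem_coe, Finset.mem_filter] at hp hq
      rcases lt_trichotomy (rank p.2) (rank q.2) with h | h | h
      · exact hA.eq hp.1 hq.1 (Prod.le_def.mpr ⟨hpq.le, (le_iff_K _ _).mpr (Or.inl h)⟩)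
      · rcases eq_or_xy h with h1 | ⟨_, h2⟩ | ⟨h2, _⟩
        · exact Prod.ext hpq h1
        · exact absurd h2 hq.2
        · exact absurd h2 hp.2
      · exact (hA.eq hq.1 hp.1 (Prod.le_def.mpr ⟨hpq.ge, (le_iff_K _ _).mpr (Or.inl h)⟩)).symm
    have hBle : (A.filter (fun p => p.2 ≠ ky n)).card ≤ m := by
      rw [← Finset.card_image_of_injOn hBinj]
      calc ((A.filter (fun p => p.2 ≠ ky n)).image Prod.fst).card
          ≤ (univ : Finset (Fin m)).card := Finset.card_le_card (Finset.subset_univ _)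
        _ = m := by simp
    have hsum : (A.filter (fun p => p.2 = ky n)).card
        + (A.filter (fun p => p.2 ≠ ky n)).card = m + 1 := by
      rw [Finset.card_filter_add_card_filter_not, hcard]
    have hBcard : (A.filter (fun p => p.2 ≠ ky n)).card = m := by omega
    have hCcard : (A.filter (fun p => p.2 = ky n)).card = 1 := by omega
    have hBu : (A.filter (fun p => p.2 ≠ ky n)).image Prod.fst = univ := by
      apply Finset.eq_of_subset_of_card_le (Finset.subset_univ _)
      rw [Finset.card_image_of_injOn hBinj, hBcard]
      simp
    have hex : ∀ v : Fin m, ∃ k, (v, k) ∈ A ∧ k ≠ ky n := by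
      intro v
      have : v ∈ (A.filter (fun p => p.2 ≠ ky n)).image Prod.fst := by
        rw [hBu]; exact mem_univ v
      obtain ⟨p, hpB, rfl⟩ := Finset.mem_image.mp this
      rw [Finset.mem_filter] at hpB
      exact ⟨p.2, by simpa using hpB.1, hpB.2⟩
    choose g hgA hgy using hex
    obtain ⟨p₀, hp₀⟩ := Finset.card_eq_one.mp hCcard
    have hp₀mem : p₀ ∈ A.filter (fun p => p.2 = ky n) := hp₀ ▸ Finset.mem_singleton_self p₀
    rw [Finset.mem_filter] at hp₀mem
    have hyA : (p₀.1, ky n) ∈ A := by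
      have := hp₀mem.1; rwa [← hp₀mem.2, Prod.mk.eta]
    set v₀ := p₀.1 with hv₀def
    set r : Fin m → Fin (2 * n + 1) :=
      fun v => ⟨rank (g v), by have := rank_le (g v); omega⟩ with hrdef
    have hrA : StrictAnti r := by
      intro v w hvw
      rw [Fin.lt_def]
      show rank (g w) < rank (g v)
      have hne : (v, g v) ≠ (w, g w) := fun h => absurd (congrArg Prod.fst h) hvw.ne
      have hnle : ¬ (v, g v) ≤ (w, g w) := hA (hgA v) (hgA w) hne
      have h1 : ¬ g v ≤ g w := fun h => hnle (Prod.le_def.mpr ⟨hvw.le, h⟩)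
      rw [le_iff_K] at h1
      push_neg at h1
      rcases Nat.lt_or_ge (rank (g w)) (rank (g v)) with h | h
      · exact h
      · have heq : rank (g v) = rank (g w) := by omega
        rcases eq_or_xy heq with e | ⟨_, e2⟩ | ⟨e1, _⟩
        · exact absurd e h1.2
        · exact absurd e2 (hgy w)
        · exact absurd e1 (hgy v)
    have hr0 : (r v₀ : ℕ) = n := by
      show rank (g v₀) = n
      have hne1 : (v₀, g v₀) ≠ (v₀, ky n) := fun h => hgy v₀ (congrArg Prod.snd h)
      have h1 : ¬ g v₀ ≤ ky n := fun h =>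
        hA (hgA v₀) hyA hne1 (Prod.le_def.mpr ⟨le_refl _, h⟩)
      have h2 : ¬ ky n ≤ g v₀ := fun h =>
        hA hyA (hgA v₀) (Ne.symm hne1) (Prod.le_def.mpr ⟨le_refl _, h⟩)
      rw [le_iff_K] at h1 h2
      push_neg at h1 h2
      have := h1.1
      have := h2.1
      simp only [rank_ky] at *
      omega
    have hRcard : (univ.image r).card = m := by
      rw [Finset.card_image_of_injective _ hrA.injective, card_univ, Fintype.card_fin]
    have hRn : nmid n ∈ univ.image r :=
      Finset.mem_image.mpr ⟨v₀, mem_univ _, Fin.ext hr0⟩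
    refine ⟨⟨univ.image r, hRcard, hRn⟩, ?_⟩
    apply Subtype.ext
    show phi n (wfun (univ.image r) hRcard) = A
    have hwr : wfun (univ.image r) hRcard = r := by
      have hsm : StrictMono (fun i : Fin m => r i.rev) :=
        fun i j hij => hrA (Fin.rev_lt_rev.mpr hij)
      have h1 : (fun i : Fin m => r i.rev) = (univ.image r).orderEmbOfFin hRcard :=
        Finset.orderEmbOfFin_unique hRcard
          (fun i => Finset.mem_image.mpr ⟨i.rev, mem_univ _, rfl⟩) hsm
      funext v
      rw [wfun, ← h1]
      simp [Fin.rev_rev]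
    rw [hwr]
    apply Finset.eq_of_subset_of_card_le
    · intro p hp
      rcases mem_phi.mp hp with ⟨v, rfl⟩ | ⟨v, hv, rfl⟩
      · have : unrank n (r v) = g v := unrank_rank (hgy v) _
        rw [this]; exact hgA v
      · have : v = v₀ := hrA.injective (Fin.ext (by rw [hr0]; exact hv))
        rw [this]; exact hyA
    · rw [hcard, phi_card r hrA ⟨v₀, hr0⟩]


def emb (n : ℕ) (i : Fin (2 * n)) : Fin (2 * n + 1) :=
  if h : (i : ℕ) < n then ⟨i, by omega⟩ else ⟨(i : ℕ) + 1, by have := i.isLt; omega⟩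

def unemb (n : ℕ) (hn : 0 < n) (j : Fin (2 * n + 1)) : Fin (2 * n) :=
  if h : (j : ℕ) < n then ⟨j, by omega⟩
  else ⟨(j : ℕ) - 1, by have := j.isLt; omega⟩

lemma emb_val (i : Fin (2 * n)) :
    (emb n i : ℕ) = if (i : ℕ) < n then (i : ℕ) else (i : ℕ) + 1 := by
  unfold emb; split_ifs <;> rfl

lemma unemb_val (hn : 0 < n) (j : Fin (2 * n + 1)) :
    (unemb n hn j : ℕ) = if (j : ℕ) < n then (j : ℕ) else (j : ℕ) - 1 := by
  unfold unemb; split_ifs <;> rfl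

lemma emb_inj : Function.Injective (emb n) := by
  intro i j h
  have h1 := congrArg (fun x : Fin (2 * n + 1) => (x : ℕ)) h
  simp only [emb_val] at h1
  have := i.isLt
  have := j.isLt
  apply Fin.ext
  split_ifs at h1 <;> omega

lemma emb_ne (i : Fin (2 * n)) : (emb n i : ℕ) ≠ n := by
  rw [emb_val]
  have := i.isLt
  split_ifs <;> omega

lemma unemb_emb (hn : 0 < n) (i : Fin (2 * n)) : unemb n hn (emb n i) = i := by
  apply Fin.ext
  rw [unemb_val, emb_val]
  have := i.isLt
  split_ifs <;> omega

lemma emb_unemb (hn : 0 < n) {j : Fin (2 * n + 1)} (hj : (j : ℕ) ≠ n) :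
    emb n (unemb n hn j) = j := by
  apply Fin.ext
  rw [emb_val, unemb_val]
  have := j.isLt
  split_ifs <;> omega

lemma cardW_eq (hm : 1 ≤ m) (hn : 0 < n) :
    Nat.card {R : Finset (Fin (2 * n + 1)) // R.card = m ∧ nmid n ∈ R} =
      (2 * n).choose (m - 1) := by
  classical
  have e : {R : Finset (Fin (2 * n + 1)) // R.card = m ∧ nmid n ∈ R} ≃
      {S : Finset (Fin (2 * n)) // S.card = m - 1} := by
    refine ⟨fun R => ⟨(R.1.erase (nmid n)).image (unemb n hn), ?_⟩,
      fun S => ⟨insert (nmid n) (S.1.image (emb n)), ?_, Finset.mem_insert_self _ _⟩, ?_, ?_⟩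
    · have hinj : Set.InjOn (unemb n hn) ((R.1.erase (nmid n)) : Set (Fin (2 * n + 1))) := by
        intro j hj j' hj' hjj
        rw [Finset.mem_coe, Finset.mem_erase] at hj hj'
        have hne : (j : ℕ) ≠ n := fun h => hj.1 (Fin.ext h)
        have hne' : (j' : ℕ) ≠ n := fun h => hj'.1 (Fin.ext h)
        rw [← emb_unemb hn hne, ← emb_unemb hn hne', hjj]
      rw [Finset.card_image_of_injOn hinj, Finset.card_erase_of_mem R.2.2, R.2.1]
    · have hnm : nmid n ∉ S.1.image (emb n) := by
        intro h
        obtain ⟨i, _, hi⟩ := Finset.mem_image.mp h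
        exact emb_ne i (by rw [hi]; rfl)
      rw [Finset.card_insert_of_notMem hnm, Finset.card_image_of_injective _ emb_inj, S.2]
      omega
    · rintro ⟨R, hc, hmem⟩
      apply Subtype.ext
      show insert (nmid n) (((R.erase (nmid n)).image (unemb n hn)).image (emb n)) = R
      rw [Finset.image_image]
      have : (R.erase (nmid n)).image (emb n ∘ unemb n hn) = R.erase (nmid n) := by
        rw [Finset.image_congr (g := id), Finset.image_id]
        intro j hj
        rw [Finset.mem_coe, Finset.mem_erase] at hj
        exact emb_unemb hn (fun h => hj.1 (Fin.ext h))
      rw [this, Finset.insert_erase hmem]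
    · rintro ⟨S, hc⟩
      apply Subtype.ext
      show ((insert (nmid n) (S.image (emb n))).erase (nmid n)).image (unemb n hn) = S
      have hnm : nmid n ∉ S.image (emb n) := by
        intro h
        obtain ⟨i, _, hi⟩ := Finset.mem_image.mp h
        exact emb_ne i (by rw [hi]; rfl)
      rw [Finset.erase_insert hnm, Finset.image_image]
      rw [Finset.image_congr (g := id), Finset.image_id]
      intro i _
      exact unemb_emb hn i
  rw [Nat.card_congr e, Nat.card_eq_fintype_card]
  rw [Fintype.card_finset_len, Fintype.card_fin]

lemma choose_one_iff (m n : ℕ) (hm : 1 ≤ m) (hn : 1 ≤ n) :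
    (2 * n).choose (m - 1) = 1 ↔ m = 1 ∨ m = 2 * n + 1 := by
  constructor
  · intro h
    by_contra hc
    push_neg at hc
    rcases Nat.lt_or_ge (2 * n) (m - 1) with h1 | h1
    · rw [Nat.choose_eq_zero_of_lt h1] at h
      omega
    · have h2 : 1 ≤ m - 1 := by omega
      have h3 : m - 1 < 2 * n := by omega
      obtain ⟨n', hn'⟩ : ∃ n', 2 * n = n' + 1 := ⟨2 * n - 1, by omega⟩
      obtain ⟨k', hk'⟩ : ∃ k', m - 1 = k' + 1 := ⟨m - 2, by omega⟩
      rw [hn', hk', Nat.choose_succ_succ] at h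
      have h4 : 0 < n'.choose k' := Nat.choose_pos (by omega)
      have h5 : 0 < n'.choose (k' + 1) := Nat.choose_pos (by omega)
      have : n'.choose k'.succ = n'.choose (k' + 1) := rfl
      omega
  · rintro (rfl | rfl)
    · simp
    · simp [Nat.choose_self]

end KAux

/-- The antichain polynomial `𝒩_{[m]×K_n}` is monic in its top degree `m+1` (i.e. there is
exactly one antichain of the maximal size `m+1`) iff `m = 1` or `m = 2n+1`. -/
theorem N_poly_chain_K_monic_iff (m n : ℕ) (hm : 1 ≤ m) (hn : 1 ≤ n) :
    Nat.card {A : Finset (Fin m × K n) //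
        IsAntichain (· ≤ ·) (A : Set (Fin m × K n)) ∧ A.card = m + 1} = 1 ↔
      m = 1 ∨ m = 2 * n + 1 := by
  rw [KAux.cardX_eq, KAux.cardW_eq hm hn, KAux.choose_one_iff m n hm hn]
end

section
/- Every orbit of the Panyushev complement 𝔛 on the lower ideals of [2] × [2n-3] has size exactly 2n-1, there are exactly n-1 orbits, and each orbit contains exactly one lower ideal of cardinality 2n-3. -/
open Classical in
/-- The Panyushev complement `𝔛`: the lower ideal generated by the minimal elements of the
complement of `I`. -/
noncomputable def pan {P : Type*} [PartialOrder P] [Fintype P] (I : Finset P) : Finset P :=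
  Finset.univ.filter
    (fun y => ∃ x, x ∉ I ∧ (∀ z, z ∉ I → z ≤ x → z = x) ∧ y ≤ x)

lemma mem_pan {P : Type*} [PartialOrder P] [Fintype P] (I : Finset P) (y : P) :
    y ∈ pan I ↔ ∃ x, x ∉ I ∧ (∀ z, z ∉ I → z ≤ x → z = x) ∧ y ≤ x := by
  simp [pan]

def idl (m a b : ℕ) : Finset (Fin 2 × Fin m) :=
  Finset.univ.filter
    (fun p => ((p.1 : ℕ) = 0 ∧ (p.2 : ℕ) < a) ∨ ((p.1 : ℕ) = 1 ∧ (p.2 : ℕ) < b))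

lemma mem_idl {m a b : ℕ} (p : Fin 2 × Fin m) :
    p ∈ idl m a b ↔ ((p.1 : ℕ) = 0 ∧ (p.2 : ℕ) < a) ∨ ((p.1 : ℕ) = 1 ∧ (p.2 : ℕ) < b) := by
  simp [idl]

lemma le_iff {m : ℕ} (p q : Fin 2 × Fin m) :
    p ≤ q ↔ (p.1 : ℕ) ≤ (q.1 : ℕ) ∧ (p.2 : ℕ) ≤ (q.2 : ℕ) := by
  rw [Prod.le_def, Fin.le_def, Fin.le_def]

lemma eq_iff {m : ℕ} (p q : Fin 2 × Fin m) :
    p = q ↔ (p.1 : ℕ) = (q.1 : ℕ) ∧ (p.2 : ℕ) = (q.2 : ℕ) := by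
  rw [Prod.ext_iff, Fin.ext_iff, Fin.ext_iff]

lemma fin2_val {m : ℕ} (p : Fin 2 × Fin m) : (p.1 : ℕ) = 0 ∨ (p.1 : ℕ) = 1 := by
  have := p.1.isLt; omega

lemma idl_lower {m a b : ℕ} (hba : b ≤ a) : IsLowerSet ((idl m a b : Finset (Fin 2 × Fin m)) : Set (Fin 2 × Fin m)) := by
  intro p q hle hp
  simp only [Finset.mem_coe, mem_idl] at *
  rw [le_iff] at hle
  rcases fin2_val p with h | h <;> rcases fin2_val q with h' | h' <;> omega

lemma idl_inj {m a b a' b' : ℕ} (ha : a ≤ m) (ha' : a' ≤ m) (hb : b ≤ m) (hb' : b' ≤ m)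
    (h : idl m a b = idl m a' b') : a = a' ∧ b = b' := by
  have h0 : ∀ j : ℕ, j < m → ((j < a) ↔ (j < a')) := by
    intro j hj
    have := Finset.ext_iff.mp h ((0 : Fin 2), ⟨j, hj⟩)
    simpa [mem_idl] using this
  have h1 : ∀ j : ℕ, j < m → ((j < b) ↔ (j < b')) := by
    intro j hj
    have := Finset.ext_iff.mp h ((1 : Fin 2), ⟨j, hj⟩)
    simpa [mem_idl] using this
  constructor
  · by_contra hne
    rcases Nat.lt_or_ge a a' with hlt | hge
    · have := h0 a (lt_of_lt_of_le hlt ha'); omega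
    · have hlt : a' < a := by omega
      have := h0 a' (lt_of_lt_of_le hlt ha); omega
  · by_contra hne
    rcases Nat.lt_or_ge b b' with hlt | hge
    · have := h1 b (lt_of_lt_of_le hlt hb'); omega
    · have hlt : b' < b := by omega
      have := h1 b' (lt_of_lt_of_le hlt hb); omega

lemma row_card (m a : ℕ) (h : a ≤ m) :
    (Finset.univ.filter (fun j : Fin m => (j : ℕ) < a)).card = a := by
  have : (Finset.univ.filter (fun j : Fin m => (j : ℕ) < a))
      = (Finset.range a).attachFin (fun i hi => lt_of_lt_of_le (Finset.mem_range.mp hi) h) := by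
    ext j; simp [Finset.mem_attachFin]
  rw [this, Finset.card_attachFin, Finset.card_range]

lemma idl_card {m a b : ℕ} (ha : a ≤ m) (hb : b ≤ m) : (idl m a b).card = a + b := by
  rw [idl, Finset.card_filter, Fintype.sum_prod_type, Fin.sum_univ_two]
  simp only [Fin.val_zero, Fin.val_one]
  norm_num
  rw [row_card m a ha, row_card m b hb]

lemma row_classify {m : ℕ} (T : Finset (Fin m))
    (hT : ∀ j ∈ T, ∀ i : Fin m, i ≤ j → i ∈ T) (j : Fin m) :
    j ∈ T ↔ (j : ℕ) < T.card := by
  constructor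
  · intro hj
    have hsub : Finset.Iic j ⊆ T := fun i hi => hT j hj i (Finset.mem_Iic.mp hi)
    have := Finset.card_le_card hsub
    rw [Fin.card_Iic] at this; omega
  · intro hj
    by_contra hjT
    have hsub : T ⊆ Finset.Iio j := by
      intro t ht
      rw [Finset.mem_Iio]
      rcases le_or_gt j t with h | h
      · exact absurd (hT t ht j h) hjT
      · exact h
    have := Finset.card_le_card hsub
    rw [Fin.card_Iio] at this; omega

lemma lower_classify {m : ℕ} (I : Finset (Fin 2 × Fin m))
    (hI : IsLowerSet (I : Set (Fin 2 × Fin m))) :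
    ∃ a b : ℕ, b ≤ a ∧ a ≤ m ∧ I = idl m a b := by
  classical
  set T0 := Finset.univ.filter (fun j : Fin m => ((0 : Fin 2), j) ∈ I) with hT0
  set T1 := Finset.univ.filter (fun j : Fin m => ((1 : Fin 2), j) ∈ I) with hT1
  have memT0 : ∀ j : Fin m, j ∈ T0 ↔ ((0 : Fin 2), j) ∈ I := by
    intro j; simp [hT0]
  have memT1 : ∀ j : Fin m, j ∈ T1 ↔ ((1 : Fin 2), j) ∈ I := by
    intro j; simp [hT1]
  have dc0 : ∀ j ∈ T0, ∀ i : Fin m, i ≤ j → i ∈ T0 := by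
    intro j hj i hij
    rw [memT0] at *
    exact hI (show ((0:Fin 2), i) ≤ ((0:Fin 2), j) from ⟨le_refl _, hij⟩) hj
  have dc1 : ∀ j ∈ T1, ∀ i : Fin m, i ≤ j → i ∈ T1 := by
    intro j hj i hij
    rw [memT1] at *
    exact hI (show ((1:Fin 2), i) ≤ ((1:Fin 2), j) from ⟨le_refl _, hij⟩) hj
  refine ⟨T0.card, T1.card, ?_, ?_, ?_⟩
  · apply Finset.card_le_card
    intro j hj
    rw [memT0]
    rw [memT1] at hj
    exact hI (show ((0:Fin 2), j) ≤ ((1:Fin 2), j) from ⟨by simp [Fin.le_def], le_refl _⟩) hj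
  · calc T0.card ≤ (Finset.univ : Finset (Fin m)).card := Finset.card_le_card (Finset.subset_univ _)
    _ = m := by simp
  · ext p
    rw [mem_idl]
    rcases fin2_val p with h | h
    · have hp1 : p.1 = 0 := Fin.ext h
      rw [← row_classify T0 dc0 p.2, memT0]
      constructor
      · intro hp; left; refine ⟨h, ?_⟩
        have : p = ((0:Fin 2), p.2) := by rw [← hp1]
        rwa [← this]
      · rintro (⟨_, hp⟩ | ⟨h1, _⟩)
        · have : p = ((0:Fin 2), p.2) := by rw [← hp1]
          rwa [this]
        · omega
    · have hp1 : p.1 = 1 := Fin.ext h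
      rw [← row_classify T1 dc1 p.2, memT1]
      constructor
      · intro hp; right; refine ⟨h, ?_⟩
        have : p = ((1:Fin 2), p.2) := by rw [← hp1]
        rwa [← this]
      · rintro (⟨h0, _⟩ | ⟨_, hp⟩)
        · omega
        · have : p = ((1:Fin 2), p.2) := by rw [← hp1]
          rwa [this]

lemma min_char {m a b : ℕ} (hba : b ≤ a) (ham : a ≤ m) (x : Fin 2 × Fin m) :
    (x ∉ idl m a b ∧ ∀ z, z ∉ idl m a b → z ≤ x → z = x) ↔
      ((x.1 : ℕ) = 0 ∧ (x.2 : ℕ) = a) ∨ ((x.1 : ℕ) = 1 ∧ (x.2 : ℕ) = b ∧ b < a) := by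
  constructor
  · rintro ⟨hx, hmin⟩
    rw [mem_idl] at hx
    push_neg at hx
    rcases fin2_val x with h1 | h1
    · left
      refine ⟨h1, ?_⟩
      have hax : a ≤ (x.2 : ℕ) := by omega
      have ham' : a < m := lt_of_le_of_lt hax x.2.isLt
      have hz := hmin ((0 : Fin 2), ⟨a, ham'⟩) ?_ ?_
      · rw [eq_iff] at hz
        simp at hz
        omega
      · rw [mem_idl]; simp
      · rw [le_iff]; simp [h1, hax]
    · right
      refine ⟨h1, ?_, ?_⟩
      · have hbx : b ≤ (x.2 : ℕ) := by omega
        have hbm : b < m := lt_of_le_of_lt hbx x.2.isLt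
        have hz := hmin ((1 : Fin 2), ⟨b, hbm⟩) ?_ ?_
        · rw [eq_iff] at hz
          simp at hz
          omega
        · rw [mem_idl]; simp
        · rw [le_iff]; simp [h1, hbx]
      · by_contra hab
        have hab' : a = b := by omega
        have hax : a ≤ (x.2 : ℕ) := by omega
        have hz := hmin ((0 : Fin 2), x.2) ?_ ?_
        · rw [eq_iff] at hz
          simp at hz
          omega
        · rw [mem_idl]; simp; omega
        · rw [le_iff]; simp
  · rintro (⟨h1, h2⟩ | ⟨h1, h2, h3⟩)
    · constructor
      · rw [mem_idl]; omega
      · intro z hz hle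
        rw [mem_idl] at hz
        push_neg at hz
        rw [le_iff] at hle
        rw [eq_iff]
        rcases fin2_val z with hz1 | hz1 <;> omega
    · constructor
      · rw [mem_idl]; omega
      · intro z hz hle
        rw [mem_idl] at hz
        push_neg at hz
        rw [le_iff] at hle
        rw [eq_iff]
        rcases fin2_val z with hz1 | hz1 <;> omega

lemma mem_pan_idl {m a b : ℕ} (hba : b ≤ a) (ham : a ≤ m) (y : Fin 2 × Fin m) :
    y ∈ pan (idl m a b) ↔
      ((a < m ∧ (y.1 : ℕ) = 0 ∧ (y.2 : ℕ) ≤ a) ∨ (b < a ∧ (y.2 : ℕ) ≤ b)) := by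
  rw [mem_pan]
  constructor
  · rintro ⟨x, hx1, hx2, hx3⟩
    have hc := (min_char hba ham x).mp ⟨hx1, hx2⟩
    rw [le_iff] at hx3
    rcases hc with ⟨h1, h2⟩ | ⟨h1, h2, h3⟩
    · left
      have : (x.2 : ℕ) < m := x.2.isLt
      rcases fin2_val y with hy | hy <;> omega
    · right; omega
  · rintro (⟨h1, h2, h3⟩ | ⟨h1, h2⟩)
    · have hc := (min_char hba ham ((0 : Fin 2), ⟨a, h1⟩)).mpr (by left; simp)
      refine ⟨((0 : Fin 2), ⟨a, h1⟩), hc.1, hc.2, ?_⟩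
      rw [le_iff]; simp [h2, h3]
    · have hbm : b < m := lt_of_lt_of_le h1 ham
      have hc := (min_char hba ham ((1 : Fin 2), ⟨b, hbm⟩)).mpr (by right; simp [h1])
      refine ⟨((1 : Fin 2), ⟨b, hbm⟩), hc.1, hc.2, ?_⟩
      rw [le_iff]
      rcases fin2_val y with hy | hy <;> simp [hy, h2]

def step (m a b : ℕ) : ℕ × ℕ :=
  if a = m then (if b = m then (0, 0) else (b + 1, b + 1))
  else if b = a then (a + 1, 0) else (a + 1, b + 1)

def cyc (m d k : ℕ) : ℕ × ℕ :=
  if k ≤ m - d then (d + k, k)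
  else if k = m - d + 1 then (m - d + 1, m - d + 1)
  else if k ≤ m then (k, k - (m - d + 2))
  else (d - 1, d - 1)

lemma pan_idl {m a b : ℕ} (hba : b ≤ a) (ham : a ≤ m) :
    pan (idl m a b) = idl m (step m a b).1 (step m a b).2 := by
  ext y
  rw [mem_pan_idl hba ham, mem_idl]
  have h2 := y.2.isLt
  rcases fin2_val y with hy | hy <;>
    (simp only [step]; split_ifs <;> simp only [] <;> omega)

lemma cyc_mem {m d k : ℕ} (hd1 : 1 ≤ d) (hdm : d ≤ m) (hk : k ≤ m + 1) :
    (cyc m d k).2 ≤ (cyc m d k).1 ∧ (cyc m d k).1 ≤ m := by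
  simp only [cyc]; split_ifs <;> simp only [] <;> omega

lemma step_cyc {m d k : ℕ} (hd1 : 1 ≤ d) (hdm : d ≤ m) (hk : k ≤ m + 1) :
    step m (cyc m d k).1 (cyc m d k).2 = cyc m d ((k + 1) % (m + 2)) := by
  rcases Nat.lt_or_ge k (m + 1) with hlt | hge
  · have hmod : (k + 1) % (m + 2) = k + 1 := Nat.mod_eq_of_lt (by omega)
    rw [hmod]
    simp only [step, cyc]
    split_ifs <;> (try dsimp only at *) <;> (try simp only [Prod.mk.injEq, and_true, true_and, not_true_eq_false, not_false_eq_true] at *) <;> omega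
  · have hk1 : k = m + 1 := by omega
    subst hk1
    have hmod : (m + 1 + 1) % (m + 2) = 0 := by
      have : m + 1 + 1 = m + 2 := by omega
      rw [this, Nat.mod_self]
    rw [hmod]
    simp only [step, cyc]
    split_ifs <;> (try dsimp only at *) <;> (try simp only [Prod.mk.injEq, and_true, true_and, not_true_eq_false, not_false_eq_true] at *) <;> omega

lemma cyc_inj {m d k k' : ℕ} (hm2 : m % 2 = 1) (hd1 : 1 ≤ d) (hdm : d ≤ m)
    (hk : k ≤ m + 1) (hk' : k' ≤ m + 1) (h : cyc m d k = cyc m d k') : k = k' := by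
  simp only [cyc] at h
  split_ifs at h <;> (try dsimp only at *) <;> (try simp only [Prod.mk.injEq, and_true, true_and, not_true_eq_false, not_false_eq_true] at *) <;> omega

lemma cyc_sum {m d k : ℕ} (hm2 : m % 2 = 1) (hd1 : 1 ≤ d) (hdm : d ≤ m) (hk : k ≤ m + 1) :
    ((cyc m d k).1 + (cyc m d k).2 = m) ↔
      k = (if d % 2 = 1 then (m - d) / 2 else m + 1 - d / 2) := by
  simp only [cyc]; split_ifs <;> simp only [] <;> omega

lemma cyc_cover {m a b : ℕ} (hm : 1 ≤ m) (hba : b ≤ a) (ham : a ≤ m) :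
    ∃ d k : ℕ, 1 ≤ d ∧ d ≤ m ∧ k ≤ m + 1 ∧ cyc m d k = (a, b) := by
  rcases Nat.lt_or_ge b a with hlt | hge
  · refine ⟨a - b, b, by omega, by omega, by omega, ?_⟩
    simp only [cyc]
    split_ifs <;> (try dsimp only at *) <;> (try simp only [Prod.mk.injEq, and_true, true_and, not_true_eq_false, not_false_eq_true] at *) <;> omega
  · have hab : a = b := by omega
    subst hab
    rcases Nat.eq_zero_or_pos a with h0 | h1
    · subst h0
      refine ⟨1, m + 1, by omega, by omega, by omega, ?_⟩
      simp only [cyc]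
      split_ifs <;> (try dsimp only at *) <;> (try simp only [Prod.mk.injEq, and_true, true_and, not_true_eq_false, not_false_eq_true] at *) <;> omega
    · refine ⟨m + 1 - a, a, by omega, by omega, by omega, ?_⟩
      simp only [cyc]
      split_ifs <;> (try dsimp only at *) <;> (try simp only [Prod.mk.injEq, and_true, true_and, not_true_eq_false, not_false_eq_true] at *) <;> omega

lemma cyc_zero {m d : ℕ} (hd1 : 1 ≤ d) (hdm : d ≤ m) : cyc m d 0 = (d, 0) := by
  simp only [cyc]
  split_ifs <;> (try dsimp only at *) <;> (try simp only [Prod.mk.injEq, and_true, true_and, not_true_eq_false, not_false_eq_true] at *) <;> omega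

lemma cyc_pair {m d : ℕ} (hd2 : 2 ≤ d) (hdm : d ≤ m) :
    cyc m d (m + 2 - d) = (m + 2 - d, 0) := by
  simp only [cyc]
  split_ifs <;> (try dsimp only at *) <;> (try simp only [Prod.mk.injEq, and_true, true_and, not_true_eq_false, not_false_eq_true] at *) <;> omega

lemma cyc_odd_rep {m d d' k : ℕ} (hm2 : m % 2 = 1) (hd1 : 1 ≤ d) (hdm : d ≤ m)
    (hdo : d % 2 = 1) (hk : k ≤ m + 1) (hd'o : d' % 2 = 1)
    (h : cyc m d k = (d', 0)) : d' = d := by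
  simp only [cyc] at h
  split_ifs at h <;> (try dsimp only at *) <;> (try simp only [Prod.mk.injEq, and_true, true_and, not_true_eq_false, not_false_eq_true] at *) <;> omega

lemma pan_iter {m d : ℕ} (hd1 : 1 ≤ d) (hdm : d ≤ m) :
    ∀ (t k : ℕ), k ≤ m + 1 →
      pan^[t] (idl m (cyc m d k).1 (cyc m d k).2)
        = idl m (cyc m d ((k + t) % (m + 2))).1 (cyc m d ((k + t) % (m + 2))).2 := by
  intro t
  induction t with
  | zero =>
    intro k hk
    rw [Function.iterate_zero_apply, Nat.add_zero, Nat.mod_eq_of_lt (by omega)]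
  | succ t ih =>
    intro k hk
    rw [Function.iterate_succ_apply]
    have hb := cyc_mem hd1 hdm hk
    rw [pan_idl hb.1 hb.2, step_cyc hd1 hdm hk]
    have hk' : (k + 1) % (m + 2) ≤ m + 1 := by
      have := Nat.mod_lt (k + 1) (show 0 < m + 2 by omega); omega
    rw [ih _ hk']
    have : ((k + 1) % (m + 2) + t) % (m + 2) = (k + (t + 1)) % (m + 2) := by
      rw [Nat.mod_add_mod]; congr 1; omega
    rw [this]

lemma orbit_eq {m d : ℕ} (hd1 : 1 ≤ d) (hdm : d ≤ m) (k : ℕ) (hk : k ≤ m + 1) :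
    {J : Finset (Fin 2 × Fin m) | ∃ t : ℕ, pan^[t] (idl m (cyc m d k).1 (cyc m d k).2) = J}
      = ↑((Finset.range (m + 2)).image (fun j => idl m (cyc m d j).1 (cyc m d j).2)) := by
  ext J
  simp only [Set.mem_setOf_eq, Finset.coe_image, Set.mem_image, Finset.mem_coe,
    Finset.mem_range]
  constructor
  · rintro ⟨t, rfl⟩
    exact ⟨(k + t) % (m + 2), Nat.mod_lt _ (by omega), (pan_iter hd1 hdm t k hk).symm⟩
  · rintro ⟨j, hj, rfl⟩
    refine ⟨(m + 2) - k + j, ?_⟩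
    rw [pan_iter hd1 hdm _ k hk]
    have : k + ((m + 2) - k + j) = (m + 2) + j := by omega
    rw [this, Nat.add_mod_left, Nat.mod_eq_of_lt hj]

lemma orbit_card {m d : ℕ} (hm2 : m % 2 = 1) (hd1 : 1 ≤ d) (hdm : d ≤ m) :
    ((Finset.range (m + 2)).image (fun j => idl m (cyc m d j).1 (cyc m d j).2)).card
      = m + 2 := by
  rw [Finset.card_image_of_injOn, Finset.card_range]
  intro j hj j' hj' h
  simp only [Finset.coe_range, Set.mem_Iio] at hj hj'
  have hj1 : j ≤ m + 1 := by omega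
  have hj2 : j' ≤ m + 1 := by omega
  have b1 := cyc_mem hd1 hdm hj1
  have b2 := cyc_mem hd1 hdm hj2
  have heq := idl_inj b1.2 b2.2 (le_trans b1.1 b1.2) (le_trans b2.1 b2.2) h
  exact cyc_inj hm2 hd1 hdm hj1 hj2 (Prod.ext_iff.mpr heq)

lemma odd_filter_card (m : ℕ) :
    ((Finset.range (m + 1)).filter (fun d => d % 2 = 1)).card = (m + 1) / 2 := by
  rw [show (m + 1) / 2 = (Finset.range ((m + 1) / 2)).card from (Finset.card_range _).symm]
  apply Finset.card_bij' (fun d _ => d / 2) (fun i _ => 2 * i + 1)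
  all_goals intro a ha
  all_goals try simp only [Finset.mem_filter, Finset.mem_range] at *
  all_goals omega

/-- For `n ≥ 2`, every `𝔛`-orbit on lower ideals of `[2] × [2n-3]` has size `2n-1` and
contains a unique lower ideal of cardinality `2n-3`; and there are exactly `n-1` orbits.
(This is the extra-special `Δ(1)` of type `Bₙ`.) -/
theorem panyushev_orbits_B (n : ℕ) (hn : 2 ≤ n) :
    (∀ I : Finset (Fin 2 × Fin (2 * n - 3)),
      IsLowerSet (I : Set (Fin 2 × Fin (2 * n - 3))) →
        Nat.card {J : Finset (Fin 2 × Fin (2 * n - 3)) // ∃ k : ℕ, pan^[k] I = J} =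
            2 * n - 1 ∧
          ∃! J : Finset (Fin 2 × Fin (2 * n - 3)),
            (∃ k : ℕ, pan^[k] I = J) ∧ J.card = 2 * n - 3) ∧
      Nat.card {S : Set (Finset (Fin 2 × Fin (2 * n - 3))) //
          ∃ I : Finset (Fin 2 × Fin (2 * n - 3)),
            IsLowerSet (I : Set (Fin 2 × Fin (2 * n - 3))) ∧
              S = {J | ∃ k : ℕ, pan^[k] I = J}} = n - 1 := by
  classical
  set m := 2 * n - 3 with hmdef
  have hm1 : 1 ≤ m := by omega
  have hm2 : m % 2 = 1 := by omega
  constructor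
  · intro I hI
    obtain ⟨a, b, hba, ham, rfl⟩ := lower_classify I hI
    obtain ⟨d, k, hd1, hdm, hk, hcyc⟩ := cyc_cover hm1 hba ham
    have hIeq : idl m a b = idl m (cyc m d k).1 (cyc m d k).2 := by rw [hcyc]
    constructor
    · -- orbit size
      have e1 : {J : Finset (Fin 2 × Fin m) | ∃ t : ℕ, pan^[t] (idl m a b) = J}
          = ↑((Finset.range (m + 2)).image
              (fun j => idl m (cyc m d j).1 (cyc m d j).2)) := by
        rw [hIeq]; exact orbit_eq hd1 hdm k hk
      have e2 : Nat.card {J : Finset (Fin 2 × Fin m) // ∃ t : ℕ, pan^[t] (idl m a b) = J}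
          = Set.ncard {J : Finset (Fin 2 × Fin m) | ∃ t : ℕ, pan^[t] (idl m a b) = J} :=
        Nat.card_coe_set_eq _
      rw [e2, e1, Set.ncard_coe_finset, orbit_card hm2 hd1 hdm]
      omega
    · -- unique ideal of cardinality m in the orbit
      set k0 := (if d % 2 = 1 then (m - d) / 2 else m + 1 - d / 2) with hk0def
      have hk0 : k0 ≤ m + 1 := by rw [hk0def]; split_ifs <;> omega
      have hb0 := cyc_mem hd1 hdm hk0
      refine ⟨idl m (cyc m d k0).1 (cyc m d k0).2, ⟨⟨(m + 2) - k + k0, ?_⟩, ?_⟩, ?_⟩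
      · rw [hIeq, pan_iter hd1 hdm _ k hk]
        have : k + ((m + 2) - k + k0) = (m + 2) + k0 := by omega
        rw [this, Nat.add_mod_left, Nat.mod_eq_of_lt (by omega)]
      · rw [idl_card hb0.2 (le_trans hb0.1 hb0.2)]
        have := (cyc_sum hm2 hd1 hdm hk0).mpr rfl
        omega
      · rintro J ⟨⟨t, rfl⟩, hcard⟩
        rw [hIeq, pan_iter hd1 hdm t k hk] at hcard ⊢
        set j := (k + t) % (m + 2) with hjdef
        have hj : j ≤ m + 1 := by
          have := Nat.mod_lt (k + t) (show 0 < m + 2 by omega); omega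
        have hbj := cyc_mem hd1 hdm hj
        rw [idl_card hbj.2 (le_trans hbj.1 hbj.2)] at hcard
        have hsum : (cyc m d j).1 + (cyc m d j).2 = m := by omega
        have := (cyc_sum hm2 hd1 hdm hj).mp hsum
        rw [this]
  · -- number of orbits
    set G := ((Finset.range (m + 1)).filter (fun d => d % 2 = 1)).image
        (fun d => ({J : Finset (Fin 2 × Fin m) | ∃ t : ℕ, pan^[t] (idl m d 0) = J}
          : Set (Finset (Fin 2 × Fin m)))) with hGdef
    have key : ∀ d, 1 ≤ d → d ≤ m →
        {J : Finset (Fin 2 × Fin m) | ∃ t : ℕ, pan^[t] (idl m d 0) = J}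
          = ↑((Finset.range (m + 2)).image
              (fun j => idl m (cyc m d j).1 (cyc m d j).2)) := by
      intro d hd1 hdm
      have : idl m d 0 = idl m (cyc m d 0).1 (cyc m d 0).2 := by
        rw [cyc_zero hd1 hdm]
      rw [this]
      exact orbit_eq hd1 hdm 0 (by omega)
    have hset : {S : Set (Finset (Fin 2 × Fin m)) |
        ∃ I : Finset (Fin 2 × Fin m), IsLowerSet (I : Set (Fin 2 × Fin m)) ∧
          S = {J | ∃ t : ℕ, pan^[t] I = J}} = ↑G := by
      ext S
      simp only [Set.mem_setOf_eq, hGdef, Finset.coe_image, Set.mem_image,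
        Finset.mem_coe, Finset.mem_filter, Finset.mem_range]
      constructor
      · rintro ⟨I, hI, rfl⟩
        obtain ⟨a, b, hba, ham, rfl⟩ := lower_classify I hI
        obtain ⟨d, k, hd1, hdm, hk, hcyc⟩ := cyc_cover hm1 hba ham
        have hIeq : idl m a b = idl m (cyc m d k).1 (cyc m d k).2 := by rw [hcyc]
        have horb : {J : Finset (Fin 2 × Fin m) | ∃ t : ℕ, pan^[t] (idl m a b) = J}
            = ↑((Finset.range (m + 2)).image
                (fun j => idl m (cyc m d j).1 (cyc m d j).2)) := by
          rw [hIeq]; exact orbit_eq hd1 hdm k hk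
        rcases Nat.even_or_odd d with hde | hdo
        · -- d even: use m + 2 - d
          have hd2 : 2 ≤ d := by rcases hde with ⟨c, hc⟩; omega
          refine ⟨m + 2 - d, ⟨by omega, by rcases hde with ⟨c, hc⟩; omega⟩, ?_⟩
          have hp : idl m (m + 2 - d) 0
              = idl m (cyc m d (m + 2 - d)).1 (cyc m d (m + 2 - d)).2 := by
            rw [cyc_pair hd2 hdm]
          rw [hp]
          rw [orbit_eq hd1 hdm (m + 2 - d) (by omega)]
          exact horb.symm
        · refine ⟨d, ⟨by omega, by rcases hdo with ⟨c, hc⟩; omega⟩, ?_⟩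
          rw [key d hd1 hdm]
          exact horb.symm
      · rintro ⟨d, ⟨hdr, hdo⟩, rfl⟩
        exact ⟨idl m d 0, idl_lower (Nat.zero_le d), rfl⟩
    have e2 : Nat.card {S : Set (Finset (Fin 2 × Fin m)) //
        ∃ I : Finset (Fin 2 × Fin m), IsLowerSet (I : Set (Fin 2 × Fin m)) ∧
          S = {J | ∃ t : ℕ, pan^[t] I = J}}
        = Set.ncard {S : Set (Finset (Fin 2 × Fin m)) |
        ∃ I : Finset (Fin 2 × Fin m), IsLowerSet (I : Set (Fin 2 × Fin m)) ∧
          S = {J | ∃ t : ℕ, pan^[t] I = J}} := Nat.card_coe_set_eq _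
    rw [e2, hset, Set.ncard_coe_finset, hGdef]
    rw [Finset.card_image_of_injOn, odd_filter_card m]
    · omega
    · -- injectivity
      intro d hd d' hd' h
      simp only [Finset.coe_filter, Finset.mem_range, Set.mem_setOf_eq] at hd hd'
      have hd1 : 1 ≤ d := by omega
      have hdm : d ≤ m := by omega
      have hd1' : 1 ≤ d' := by omega
      have hdm' : d' ≤ m := by omega
      have hmem : idl m d' 0 ∈ {J : Finset (Fin 2 × Fin m) | ∃ t : ℕ, pan^[t] (idl m d 0) = J} := by
        have hm' : idl m d' 0 ∈ {J : Finset (Fin 2 × Fin m) | ∃ t : ℕ, pan^[t] (idl m d' 0) = J} :=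
          ⟨0, by rw [Function.iterate_zero_apply]⟩
        have he : ({J : Finset (Fin 2 × Fin m) | ∃ t : ℕ, pan^[t] (idl m d' 0) = J})
            = {J : Finset (Fin 2 × Fin m) | ∃ t : ℕ, pan^[t] (idl m d 0) = J} := h.symm
        rwa [he] at hm'
      rw [key d hd1 hdm] at hmem
      simp only [Finset.coe_image, Set.mem_image, Finset.mem_coe, Finset.mem_range] at hmem
      obtain ⟨j, hj, hje⟩ := hmem
      have hj1 : j ≤ m + 1 := by omega
      have hbj := cyc_mem hd1 hdm hj1
      have heq := idl_inj hbj.2 hdm' (le_trans hbj.1 hbj.2) (Nat.zero_le m) hje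
      have : cyc m d j = (d', 0) := by
        rw [Prod.ext_iff]; exact ⟨heq.1, heq.2⟩
      exact (cyc_odd_rep hm2 hd1 hdm hd.2 hj1 hd'.2 this).symm
end
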